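/- arXiv:1310.4953 — 13 statements merged into one kernel-verified Lean document; each statement's English description precedes it below -/
import Mathlib

section
/- Let f^(σ), σ ∈ A, be a finite family of order-preserving sup-norm contractions with factor λ < 1 on ℝⁿ, with f the pointwise minimum attained by some policy at every point. If v^k is the unique fixed point of f^(σ_k) and σ_{k+1} is chosen so that f(v^k) = f^(σ_{k+1})(v^k), then v ≤ v^{k+1} ≤ f(v^k) ≤ v^k, where v is the unique fixed point of f and v^{k+1} is the unique fixed point of f^(σ_{k+1}). -/
/-- If `g` is a monotone `lam`-contraction with fixed point `p`, and `g x ≤ x`,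
then `p ≤ x`. -/
lemma fixedPoint_le_of_map_le {n : ℕ} (lam : ℝ) (hlam0 : 0 ≤ lam) (hlam1 : lam < 1)
    (g : (Fin n → ℝ) → (Fin n → ℝ)) (hg : Monotone g)
    (hc : ∀ v w, ‖g v - g w‖ ≤ lam * ‖v - w‖)
    (p x : Fin n → ℝ) (hp : g p = p) (hx : g x ≤ x) : p ≤ x := by
  have hle : ∀ m : ℕ, g^[m] x ≤ x := by
    intro m
    induction m with
    | zero => simp
    | succ m ih =>
      calc g^[m+1] x = g^[m] (g x) := by rw [Function.iterate_succ_apply]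
        _ ≤ g^[m] x := by
            clear ih
            induction m with
            | zero => simpa using hx
            | succ m ih =>
              rw [Function.iterate_succ_apply', Function.iterate_succ_apply']
              exact hg ih
        _ ≤ x := ih
  have hbound : ∀ m : ℕ, ‖g^[m] x - p‖ ≤ lam ^ m * ‖x - p‖ := by
    intro m
    induction m with
    | zero => simp
    | succ m ih =>
      rw [Function.iterate_succ_apply']
      calc ‖g (g^[m] x) - p‖ = ‖g (g^[m] x) - g p‖ := by rw [hp]
        _ ≤ lam * ‖g^[m] x - p‖ := hc _ _
        _ ≤ lam * (lam ^ m * ‖x - p‖) := mul_le_mul_of_nonneg_left ih hlam0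
        _ = lam ^ (m + 1) * ‖x - p‖ := by ring
  have htend0 : Filter.Tendsto (fun m : ℕ => ‖g^[m] x - p‖) Filter.atTop (nhds 0) := by
    have h := (tendsto_pow_atTop_nhds_zero_of_lt_one hlam0 hlam1).mul_const ‖x - p‖
    rw [zero_mul] at h
    exact squeeze_zero (fun m => norm_nonneg _) hbound h
  have htend : Filter.Tendsto (fun m : ℕ => g^[m] x) Filter.atTop (nhds p) := by
    rw [tendsto_iff_norm_sub_tendsto_zero]
    exact htend0
  intro i
  have h1 : Filter.Tendsto (fun m : ℕ => g^[m] x i) Filter.atTop (nhds (p i)) :=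
    ((continuous_apply i).tendsto p).comp htend
  exact le_of_tendsto h1 (Filter.Eventually.of_forall fun m => hle m i)

/-- One step of policy iteration: if `vk` is the fixed point of
`F σk`, `σk1` is an improved policy at `vk`, `vk1` the fixed point of `F σk1`,
and `v` the fixed point of `f = min_σ F σ`, then `v ≤ vk1 ≤ f vk ≤ vk`. -/
theorem policy_iteration_monotone_step {n : ℕ} {A : Type*} [Fintype A] [Nonempty A]
    (lam : ℝ) (hlam0 : 0 ≤ lam) (hlam1 : lam < 1)
    (F : A → (Fin n → ℝ) → (Fin n → ℝ))
    (hmono : ∀ σ, Monotone (F σ))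
    (hcontr : ∀ σ v w, ‖F σ v - F σ w‖ ≤ lam * ‖v - w‖)
    (f : (Fin n → ℝ) → (Fin n → ℝ))
    (hle : ∀ v σ, f v ≤ F σ v)
    (hatt : ∀ v, ∃ σ, f v = F σ v)
    (σk σk1 : A) (vk vk1 v : Fin n → ℝ)
    (hvk : F σk vk = vk)
    (hσk1 : f vk = F σk1 vk)
    (hvk1 : F σk1 vk1 = vk1)
    (hv : f v = v) :
    v ≤ vk1 ∧ vk1 ≤ f vk ∧ f vk ≤ vk := by
  -- f vk ≤ vk
  have h3 : f vk ≤ vk := le_of_le_of_eq (hle vk σk) hvk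
  -- vk1 ≤ f vk
  have h2 : vk1 ≤ f vk := by
    apply fixedPoint_le_of_map_le lam hlam0 hlam1 (F σk1) (hmono σk1) (hcontr σk1) vk1 (f vk)
      hvk1
    calc F σk1 (f vk) ≤ F σk1 vk := hmono σk1 h3
      _ = f vk := hσk1.symm
  -- f is monotone
  have hfmono : Monotone f := by
    intro a b hab
    obtain ⟨σ, hσ⟩ := hatt b
    calc f a ≤ F σ a := hle a σ
      _ ≤ F σ b := hmono σ hab
      _ = f b := hσ.symm
  -- f is a lam-contraction
  have hfcontr : ∀ a b, ‖f a - f b‖ ≤ lam * ‖a - b‖ := by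
    intro a b
    have key : ∀ a b : Fin n → ℝ, ∀ i, f a i - f b i ≤ lam * ‖a - b‖ := by
      intro a b i
      obtain ⟨σ, hσ⟩ := hatt b
      have h1 : f a i ≤ F σ a i := hle a σ i
      have h2 : F σ a i - F σ b i ≤ |F σ a i - F σ b i| := le_abs_self _
      have h3 : |F σ a i - F σ b i| ≤ ‖F σ a - F σ b‖ := by
        have := norm_le_pi_norm (F σ a - F σ b) i
        simpa [Real.norm_eq_abs] using this
      have h4 : ‖F σ a - F σ b‖ ≤ lam * ‖a - b‖ := hcontr σ a b
      have : f b i = F σ b i := congrFun hσ i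
      linarith
    rw [pi_norm_le_iff_of_nonneg (by positivity)]
    intro i
    rw [Real.norm_eq_abs, abs_le]
    constructor
    · have := key b a i
      have hnorm : ‖b - a‖ = ‖a - b‖ := norm_sub_rev b a
      simp only [Pi.sub_apply] at this ⊢
      rw [hnorm] at this
      linarith
    · have := key a b i
      simpa using this
  -- v ≤ vk1
  have h1 : v ≤ vk1 := by
    apply fixedPoint_le_of_map_le lam hlam0 hlam1 f hfmono hfcontr v vk1 hv
    calc f vk1 ≤ F σk1 vk1 := hle vk1 σk1
      _ = vk1 := hvk1
  exact ⟨h1, h2, h3⟩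
end

section
/- Under the assumptions of the policy iteration step (v^k fixed point of f^(σ_k), σ_{k+1} optimal at v^k, v^{k+1} fixed point of f^(σ_{k+1}), v fixed point of f), the sup-norm contraction property ‖v^{k+1} − v‖∞ ≤ λ ‖v^k − v‖∞ holds. -/
/-- A monotone sup-norm `lam`-contraction's fixed point lies below any `u` with `T u ≤ u`. -/
lemma fixed_le_of_map_le {n : ℕ} (lam : ℝ) (h0 : 0 ≤ lam) (h1 : lam < 1)
    (T : (Fin n → ℝ) → (Fin n → ℝ)) (hm : Monotone T)
    (hc : ∀ v w, ‖T v - T w‖ ≤ lam * ‖v - w‖)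
    (p u : Fin n → ℝ) (hp : T p = p) (hu : T u ≤ u) : p ≤ u := by
  set c : ℝ := ‖(fun i => max (p i - u i) 0 : Fin n → ℝ)‖ with hcdef
  have hc0 : 0 ≤ c := norm_nonneg _
  have hpu : p ≤ u + (fun _ => c) := by
    intro i
    have h1' := norm_le_pi_norm (fun i => max (p i - u i) 0 : Fin n → ℝ) i
    rw [Real.norm_eq_abs] at h1'
    have h2 : max (p i - u i) 0 ≤ c := (le_abs_self _).trans h1'
    have h3 := le_max_left (p i - u i) 0
    simp only [Pi.add_apply]
    linarith
  have hconst : ‖(fun _ => c : Fin n → ℝ)‖ ≤ c := by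
    refine (pi_norm_le_iff_of_nonneg hc0).2 fun i => ?_
    rw [Real.norm_eq_abs, abs_of_nonneg hc0]
  have hTb : T (u + (fun _ => c)) ≤ T u + (fun _ => lam * c) := by
    have hn : ‖T (u + (fun _ => c)) - T u‖ ≤ lam * c := by
      calc ‖T (u + (fun _ => c)) - T u‖ ≤ lam * ‖u + (fun _ => c) - u‖ := hc _ _
        _ ≤ lam * c := by
            have : (u + (fun _ => c) - u) = (fun _ => c : Fin n → ℝ) := by
              funext i; simp
            rw [this]
            exact mul_le_mul_of_nonneg_left hconst h0
    intro i
    have h1' := norm_le_pi_norm (T (u + fun _ => c) - T u) i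
    rw [Real.norm_eq_abs] at h1'
    have h2 : T (u + fun _ => c) i - T u i ≤ lam * c := by
      have := (le_abs_self (T (u + fun _ => c) i - T u i)).trans h1'
      simpa [Pi.sub_apply] using this.trans hn
    simp only [Pi.add_apply]
    linarith
  have hstep : p ≤ u + (fun _ => lam * c) := by
    calc p = T p := hp.symm
      _ ≤ T (u + fun _ => c) := hm hpu
      _ ≤ T u + (fun _ => lam * c) := hTb
      _ ≤ u + (fun _ => lam * c) := add_le_add hu le_rfl
  have hcle : c ≤ lam * c := by
    rw [hcdef]
    refine (pi_norm_le_iff_of_nonneg (by positivity)).2 fun i => ?_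
    have hs := hstep i
    simp only [Pi.add_apply] at hs
    rw [Real.norm_eq_abs, abs_of_nonneg (le_max_right _ _)]
    exact max_le (by linarith) (by positivity)
  have hceq : c = 0 := le_antisymm (by nlinarith) hc0
  intro i
  have h1' := norm_le_pi_norm (fun i => max (p i - u i) 0 : Fin n → ℝ) i
  rw [← hcdef, hceq, Real.norm_eq_abs] at h1'
  have : max (p i - u i) 0 ≤ 0 := (le_abs_self _).trans h1'
  have := (le_max_left (p i - u i) 0).trans this
  linarith

/-- Dual: any `u` with `u ≤ T u` lies below the fixed point. -/
lemma le_fixed_of_le_map {n : ℕ} (lam : ℝ) (h0 : 0 ≤ lam) (h1 : lam < 1)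
    (T : (Fin n → ℝ) → (Fin n → ℝ)) (hm : Monotone T)
    (hc : ∀ v w, ‖T v - T w‖ ≤ lam * ‖v - w‖)
    (p u : Fin n → ℝ) (hp : T p = p) (hu : u ≤ T u) : u ≤ p := by
  have key := fixed_le_of_map_le lam h0 h1 (fun x => -T (-x))
    (fun a b hab => neg_le_neg (hm (neg_le_neg hab)))
    (fun v w => by
      have := hc (-w) (-v)
      calc ‖-T (-v) - -T (-w)‖ = ‖T (-w) - T (-v)‖ := by
            rw [show -T (-v) - -T (-w) = T (-w) - T (-v) by abel]
        _ ≤ lam * ‖-w - -v‖ := this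
        _ = lam * ‖v - w‖ := by rw [show -w - -v = v - w by abel])
    (-p) (-u) (by simp [hp]) (by simpa using neg_le_neg hu)
  intro i
  have := key i
  simp only [Pi.neg_apply, neg_le_neg_iff] at this
  exact this

/-- The values produced by policy iteration contract towards the
fixed point of `f` in the sup-norm: `‖vk1 - v‖ ≤ λ ‖vk - v‖`. -/
theorem policy_iteration_contraction {n : ℕ} {A : Type*} [Fintype A] [Nonempty A]
    (lam : ℝ) (hlam0 : 0 ≤ lam) (hlam1 : lam < 1)
    (F : A → (Fin n → ℝ) → (Fin n → ℝ))
    (hmono : ∀ σ, Monotone (F σ))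
    (hcontr : ∀ σ v w, ‖F σ v - F σ w‖ ≤ lam * ‖v - w‖)
    (f : (Fin n → ℝ) → (Fin n → ℝ))
    (hle : ∀ v σ, f v ≤ F σ v)
    (hatt : ∀ v, ∃ σ, f v = F σ v)
    (σk σk1 : A) (vk vk1 v : Fin n → ℝ)
    (hvk : F σk vk = vk)
    (hσk1 : f vk = F σk1 vk)
    (hvk1 : F σk1 vk1 = vk1)
    (hv : f v = v) :
    ‖vk1 - v‖ ≤ lam * ‖vk - v‖ := by
  -- vk1 ≤ vk
  have hA : vk1 ≤ vk := by
    refine fixed_le_of_map_le lam hlam0 hlam1 (F σk1) (hmono σk1) (hcontr σk1) vk1 vk hvk1 ?_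
    calc F σk1 vk = f vk := hσk1.symm
      _ ≤ F σk vk := hle vk σk
      _ = vk := hvk
  -- v ≤ vk1
  have hB : v ≤ vk1 := by
    refine le_fixed_of_le_map lam hlam0 hlam1 (F σk1) (hmono σk1) (hcontr σk1) vk1 v hvk1 ?_
    calc v = f v := hv.symm
      _ ≤ F σk1 v := hle v σk1
  obtain ⟨σv, hσv⟩ := hatt v
  have key : ∀ i, vk1 i - v i ≤ lam * ‖vk - v‖ := by
    intro i
    have h1 : vk1 i ≤ F σk1 vk i := by
      calc vk1 i = F σk1 vk1 i := by rw [hvk1]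
        _ ≤ F σk1 vk i := hmono σk1 hA i
    have h2 : F σk1 vk i = f vk i := by rw [hσk1]
    have h3 : f vk i ≤ F σv vk i := hle vk σv i
    have h4 : F σv vk i - F σv v i ≤ lam * ‖vk - v‖ := by
      have hb := norm_le_pi_norm (F σv vk - F σv v) i
      rw [Real.norm_eq_abs] at hb
      have := (le_abs_self (F σv vk i - F σv v i)).trans (by simpa using hb)
      exact this.trans (hcontr σv vk v)
    have h5 : F σv v i = v i := by
      rw [← hσv, hv]
    linarith
  refine (pi_norm_le_iff_of_nonneg (by positivity)).2 fun i => ?_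
  rw [Pi.sub_apply, Real.norm_eq_abs, abs_of_nonneg (by linarith [hB i])]
  exact key i
end

section
/- In the policy iteration algorithm, if σ_{k'} = σ_k for some k' > k (and the stopping condition was not triggered before), then v^k = f(v^k), i.e. v^k is the fixed point of f; consequently the sequence of policies never visits the same policy twice before termination, and the algorithm terminates after at most |A| iterations. -/
/-- In the policy iteration algorithm, a repeated policy means the
current value is already the fixed point of `f`; consequently (with the
conservative improvement rule) the algorithm triggers its stopping condition
within at most `|A|` iterations. -/
theorem policy_iteration_no_repeat_and_termination {n : ℕ} {A : Type*}
    [Fintype A] [Nonempty A]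
    (lam : ℝ) (hlam0 : 0 ≤ lam) (hlam1 : lam < 1)
    (F : A → (Fin n → ℝ) → (Fin n → ℝ))
    (hmono : ∀ σ, Monotone (F σ))
    (hcontr : ∀ σ v w, ‖F σ v - F σ w‖ ≤ lam * ‖v - w‖)
    (f : (Fin n → ℝ) → (Fin n → ℝ))
    (hle : ∀ v σ, f v ≤ F σ v)
    (hatt : ∀ v, ∃ σ, f v = F σ v)
    (σ : ℕ → A) (V : ℕ → Fin n → ℝ)
    (hfix : ∀ k, F (σ k) (V k) = V k)
    (himp : ∀ k, f (V k) = F (σ (k+1)) (V k))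
    (hcons : ∀ k, f (V k) = F (σ k) (V k) → σ (k+1) = σ k) :
    (∀ k k', k < k' → σ k' = σ k → f (V k) = V k) ∧
    ∃ k < Fintype.card A, σ (k+1) = σ k := by
  -- uniqueness of fixed points of each F τ
  have huniq : ∀ (τ : A) (v w : Fin n → ℝ), F τ v = v → F τ w = w → v = w := by
    intro τ v w hv hw
    have h := hcontr τ v w
    rw [hv, hw] at h
    by_contra hne
    have hpos : 0 < ‖v - w‖ := by
      rw [norm_pos_iff]
      exact sub_ne_zero.mpr hne
    nlinarith
  -- key comparison: if F τ x ≤ x then the fixed point w satisfies w ≤ x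
  have key : ∀ (τ : A) (x w : Fin n → ℝ), F τ w = w → F τ x ≤ x → w ≤ x := by
    intro τ x w hw hx
    have hstep : ∀ m, (F τ)^[m+1] x ≤ (F τ)^[m] x := by
      intro m
      induction m with
      | zero => simpa using hx
      | succ m ih =>
        rw [Function.iterate_succ_apply']
        calc F τ ((F τ)^[m+1] x) ≤ F τ ((F τ)^[m] x) := hmono τ ih
          _ = (F τ)^[m+1] x := (Function.iterate_succ_apply' _ _ _).symm
    have hiter_le : ∀ m, (F τ)^[m] x ≤ x := by
      intro m
      induction m with
      | zero => simp
      | succ m ih => exact le_trans (hstep m) ih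
    have hnorm : ∀ m, ‖(F τ)^[m] x - w‖ ≤ lam ^ m * ‖x - w‖ := by
      intro m
      induction m with
      | zero => simp
      | succ m ih =>
        rw [Function.iterate_succ_apply']
        calc ‖F τ ((F τ)^[m] x) - w‖ = ‖F τ ((F τ)^[m] x) - F τ w‖ := by rw [hw]
          _ ≤ lam * ‖(F τ)^[m] x - w‖ := hcontr τ _ _
          _ ≤ lam * (lam ^ m * ‖x - w‖) := mul_le_mul_of_nonneg_left ih hlam0
          _ = lam ^ (m+1) * ‖x - w‖ := by ring
    have htend : Filter.Tendsto (fun m => (F τ)^[m] x) Filter.atTop (nhds w) := by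
      rw [tendsto_iff_norm_sub_tendsto_zero]
      have h0 : Filter.Tendsto (fun m : ℕ => lam ^ m * ‖x - w‖) Filter.atTop (nhds 0) := by
        have := (tendsto_pow_atTop_nhds_zero_of_lt_one hlam0 hlam1).mul_const ‖x - w‖
        simpa using this
      exact squeeze_zero (fun m => norm_nonneg _) hnorm h0
    intro i
    have hti : Filter.Tendsto (fun m => (F τ)^[m] x i) Filter.atTop (nhds (w i)) :=
      ((continuous_apply i).tendsto w).comp htend
    exact le_of_tendsto hti (Filter.Eventually.of_forall fun m => hiter_le m i)
  -- values are decreasing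
  have hFle : ∀ k, F (σ (k+1)) (V k) ≤ V k := by
    intro k
    rw [← himp k]
    exact (hle (V k) (σ k)).trans_eq (hfix k)
  have hdec : ∀ k, V (k+1) ≤ V k := fun k => key (σ (k+1)) (V k) (V (k+1)) (hfix (k+1)) (hFle k)
  have hanti : Antitone V := antitone_nat_of_succ_le hdec
  have part1 : ∀ k k', k < k' → σ k' = σ k → f (V k) = V k := by
    intro k k' hkk' heq
    have hVeq : V k' = V k := by
      apply huniq (σ k) (V k') (V k) _ (hfix k)
      rw [← heq]; exact hfix k'
    have hsq : V (k+1) = V k := by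
      apply le_antisymm (hdec k)
      calc V k = V k' := hVeq.symm
        _ ≤ V (k+1) := hanti hkk'
    calc f (V k) = F (σ (k+1)) (V k) := himp k
      _ = F (σ (k+1)) (V (k+1)) := by rw [hsq]
      _ = V (k+1) := hfix (k+1)
      _ = V k := hsq
  refine ⟨part1, ?_⟩
  by_contra hcon
  push_neg at hcon
  obtain ⟨a, b, hab, heq⟩ := Fintype.exists_ne_map_eq_of_card_lt
    (fun i : Fin (Fintype.card A + 1) => σ i) (by simp)
  rcases lt_or_gt_of_ne hab with h | h
  · have hf := part1 a b h (heq.symm)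
    have hlt : (a : ℕ) < Fintype.card A := lt_of_lt_of_le h (Nat.lt_succ_iff.mp b.isLt)
    exact hcon a hlt (hcons a (hf.trans (hfix a).symm))
  · have hf := part1 b a h heq
    have hlt : (b : ℕ) < Fintype.card A := lt_of_lt_of_le h (Nat.lt_succ_iff.mp a.isLt)
    exact hcon b hlt (hcons b (hf.trans (hfix b).symm))
end

section
/- In the policy iteration algorithm generated by sequences (σ_k, v^k), for all t ≥ k + p with p = 1 + ⌊log(1−λ)/log(λ)⌋, one has ‖R^(σ_t)‖∞ ≤ μ ‖R^(σ_k)‖∞ where μ = λ^p/(1−λ) < 1. -/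
open Real

/-- A monotone sup-norm contraction maps pre-fixed points below post-fixed points. -/
private lemma key_order {n : ℕ} (lam : ℝ) (hlam0 : 0 < lam) (hlam1 : lam < 1)
    (g : (Fin n → ℝ) → (Fin n → ℝ)) (hm : Monotone g)
    (hc : ∀ a b, ‖g a - g b‖ ≤ lam * ‖a - b‖)
    (u z : Fin n → ℝ) (hu : u ≤ g u) (hz : g z ≤ z) : u ≤ z := by
  set c := ‖(u ⊔ z) - z‖ with hcdef
  have hc0 : 0 ≤ c := norm_nonneg _
  have hcomp : ∀ i, ((u ⊔ z) - z) i ≤ c := by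
    intro i
    calc ((u ⊔ z) - z) i ≤ |((u ⊔ z) - z) i| := le_abs_self _
      _ ≤ c := by rw [← Real.norm_eq_abs]; exact norm_le_pi_norm _ i
  have huz : u ≤ z + (fun _ => c) := by
    intro i
    have h := hcomp i
    simp only [Pi.sup_apply, Pi.sub_apply] at h
    simp only [Pi.add_apply]
    have h2 : u i ≤ u i ⊔ z i := le_sup_left
    linarith
  have hnorm1 : ‖(z + (fun _ => c)) - z‖ ≤ c := by
    have heq : (z + (fun _ => c)) - z = (fun _ => c) := by ext i; simp
    rw [heq]
    refine (pi_norm_le_iff_of_nonneg hc0).mpr ?_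
    intro i; simp [Real.norm_eq_abs, abs_of_nonneg hc0]
  have hstep : ∀ i, g u i ≤ z i + lam * c := by
    intro i
    have h1 : g u i ≤ g (z + fun _ => c) i := hm huz i
    have h2 : g (z + fun _ => c) i - g z i ≤ lam * c := by
      calc g (z + fun _ => c) i - g z i
          ≤ |(g (z + fun _ => c) - g z) i| := by
            simp only [Pi.sub_apply]; exact le_abs_self _
        _ ≤ ‖g (z + fun _ => c) - g z‖ := by
            rw [← Real.norm_eq_abs]; exact norm_le_pi_norm _ i
        _ ≤ lam * ‖(z + fun _ => c) - z‖ := hc _ _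
        _ ≤ lam * c := by nlinarith
    have h3 : g z i ≤ z i := hz i
    linarith
  have hcle : c ≤ lam * c := by
    rw [hcdef]
    refine (pi_norm_le_iff_of_nonneg (by positivity)).mpr ?_
    intro i
    have h1 : u i ≤ z i + lam * c := le_trans (hu i) (hstep i)
    simp only [Pi.sup_apply, Pi.sub_apply, Real.norm_eq_abs]
    rw [abs_le]
    have h2 : z i ≤ u i ⊔ z i := le_sup_right
    have h3 : u i ⊔ z i ≤ z i + lam * c := sup_le h1 (by nlinarith)
    constructor <;> nlinarith
  have hcz : c = 0 := le_antisymm (by nlinarith) hc0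
  intro i
  have h := hcomp i
  rw [hcz] at h
  simp only [Pi.sup_apply, Pi.sub_apply] at h
  have : u i ≤ u i ⊔ z i := le_sup_left
  linarith

/-- After `p = 1 + ⌊log(1-λ)/log(λ)⌋` iterations of policy
iteration, the sup-norm of the residual decreases by the factor
`μ = λ^p/(1-λ) < 1`. -/
theorem residual_geometric_decrease {n : ℕ} {A : Type*} [Fintype A] [Nonempty A]
    (lam : ℝ) (hlam0 : 0 < lam) (hlam1 : lam < 1)
    (F : A → (Fin n → ℝ) → (Fin n → ℝ))
    (hmono : ∀ σ, Monotone (F σ))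
    (hcontr : ∀ σ v w, ‖F σ v - F σ w‖ ≤ lam * ‖v - w‖)
    (f : (Fin n → ℝ) → (Fin n → ℝ))
    (hle : ∀ v σ, f v ≤ F σ v)
    (hatt : ∀ v, ∃ σ, f v = F σ v)
    (σ : ℕ → A) (V : ℕ → Fin n → ℝ)
    (hfix : ∀ k, F (σ k) (V k) = V k)
    (himp : ∀ k, f (V k) = F (σ (k+1)) (V k))
    (v : Fin n → ℝ) (hv : f v = v)
    (p : ℕ) (hp : p = 1 + Nat.floor (Real.log (1 - lam) / Real.log lam)) :
    lam ^ p / (1 - lam) < 1 ∧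
    ∀ k t, k + p ≤ t →
      ‖F (σ t) v - v‖ ≤ (lam ^ p / (1 - lam)) * ‖F (σ k) v - v‖ := by
  have h1lam : 0 < 1 - lam := by linarith
  -- v ≤ V k
  have hvV : ∀ k, v ≤ V k := by
    intro k
    refine key_order lam hlam0 hlam1 (F (σ k)) (hmono _) (hcontr _) v (V k) ?_ ?_
    · calc v = f v := hv.symm
        _ ≤ F (σ k) v := hle v (σ k)
    · exact le_of_eq (hfix k)
  -- V (k+1) ≤ V k
  have hVdec : ∀ k, V (k+1) ≤ V k := by
    intro k
    refine key_order lam hlam0 hlam1 (F (σ (k+1))) (hmono _) (hcontr _) (V (k+1)) (V k)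
      (le_of_eq (hfix (k+1)).symm) ?_
    calc F (σ (k+1)) (V k) = f (V k) := (himp k).symm
      _ ≤ F (σ k) (V k) := hle _ _
      _ = V k := hfix k
  -- step contraction of ‖V k - v‖
  obtain ⟨σv, hσv⟩ := hatt v
  have hstepnorm : ∀ k, ‖V (k+1) - v‖ ≤ lam * ‖V k - v‖ := by
    intro k
    refine (pi_norm_le_iff_of_nonneg (by positivity)).mpr ?_
    intro i
    have hlow : 0 ≤ (V (k+1) - v) i := by
      have := hvV (k+1) i; simp only [Pi.sub_apply]; linarith
    have hup : (V (k+1) - v) i ≤ lam * ‖V k - v‖ := by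
      have h1 : V (k+1) i ≤ F σv (V k) i := by
        calc V (k+1) i = F (σ (k+1)) (V (k+1)) i := (congrFun (hfix (k+1)) i).symm
          _ ≤ F (σ (k+1)) (V k) i := hmono _ (hVdec k) i
          _ = f (V k) i := (congrFun (himp k) i).symm
          _ ≤ F σv (V k) i := hle _ _ i
      have h2 : v i = F σv v i := by
        have := congrFun hσv i
        have := congrFun hv i
        simp_all
      have h3 : F σv (V k) i - F σv v i ≤ lam * ‖V k - v‖ := by
        calc F σv (V k) i - F σv v i ≤ |(F σv (V k) - F σv v) i| := by
              simp only [Pi.sub_apply]; exact le_abs_self _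
          _ ≤ ‖F σv (V k) - F σv v‖ := by
              rw [← Real.norm_eq_abs]; exact norm_le_pi_norm _ i
          _ ≤ lam * ‖V k - v‖ := hcontr _ _ _
      simp only [Pi.sub_apply]
      linarith
    rw [Real.norm_eq_abs, abs_le]
    constructor
    · have : 0 ≤ lam * ‖V k - v‖ := by positivity
      linarith
    · exact hup
  -- geometric decay
  have hgeom : ∀ k m, ‖V (k+m) - v‖ ≤ lam ^ m * ‖V k - v‖ := by
    intro k m
    induction m with
    | zero => simp
    | succ m ih =>
      calc ‖V (k+(m+1)) - v‖ = ‖V ((k+m)+1) - v‖ := by ring_nf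
        _ ≤ lam * ‖V (k+m) - v‖ := hstepnorm _
        _ ≤ lam * (lam ^ m * ‖V k - v‖) := by nlinarith
        _ = lam ^ (m+1) * ‖V k - v‖ := by ring
  -- residual lower bound: ‖R k‖ ≤ ‖V k - v‖
  have hRlow : ∀ k, ‖F (σ k) v - v‖ ≤ ‖V k - v‖ := by
    intro k
    refine (pi_norm_le_iff_of_nonneg (norm_nonneg _)).mpr ?_
    intro i
    have h0 : 0 ≤ (F (σ k) v - v) i := by
      have h := hle v (σ k) i
      have h2 := congrFun hv i
      simp only [Pi.sub_apply]
      simp_all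
    have h1 : F (σ k) v i ≤ V k i := by
      calc F (σ k) v i ≤ F (σ k) (V k) i := hmono _ (hvV k) i
        _ = V k i := congrFun (hfix k) i
    have h2 : (V k - v) i ≤ ‖V k - v‖ := by
      calc (V k - v) i ≤ |(V k - v) i| := le_abs_self _
        _ ≤ ‖V k - v‖ := by rw [← Real.norm_eq_abs]; exact norm_le_pi_norm _ i
    rw [Real.norm_eq_abs, abs_le]
    simp only [Pi.sub_apply] at *
    constructor
    · have := norm_nonneg (V k - v); linarith
    · linarith
  -- residual upper bound: (1-λ)‖V k - v‖ ≤ ‖R k‖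
  have hRup : ∀ k, (1 - lam) * ‖V k - v‖ ≤ ‖F (σ k) v - v‖ := by
    intro k
    have h1 : ‖V k - v‖ ≤ ‖V k - F (σ k) v‖ + ‖F (σ k) v - v‖ := by
      have := norm_add_le (V k - F (σ k) v) (F (σ k) v - v)
      rwa [sub_add_sub_cancel] at this
    have h2 : ‖V k - F (σ k) v‖ ≤ lam * ‖V k - v‖ := by
      calc ‖V k - F (σ k) v‖ = ‖F (σ k) (V k) - F (σ k) v‖ := by rw [hfix k]
        _ ≤ lam * ‖V k - v‖ := hcontr _ _ _
    linarith
  -- part 1 : λ^p < 1 - λ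
  have hlogl : Real.log lam < 0 := Real.log_neg hlam0 hlam1
  have hlog1 : Real.log (1 - lam) < 0 := Real.log_neg h1lam (by linarith)
  have hxpos : 0 < Real.log (1 - lam) / Real.log lam := div_pos_of_neg_of_neg hlog1 hlogl
  have hpx : Real.log (1 - lam) / Real.log lam < (p : ℝ) := by
    rw [hp]
    push_cast
    have := Nat.lt_floor_add_one (Real.log (1 - lam) / Real.log lam)
    linarith
  have hpow : lam ^ p < 1 - lam := by
    have hlt : (p : ℝ) * Real.log lam < Real.log (1 - lam) := by
      have := mul_lt_mul_of_neg_right hpx hlogl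
      rw [div_mul_cancel₀ _ (ne_of_lt hlogl)] at this
      linarith
    have := (Real.log_lt_log_iff (pow_pos hlam0 p) h1lam).mp (by rwa [Real.log_pow])
    exact this
  have hmu : lam ^ p / (1 - lam) < 1 := (div_lt_one h1lam).mpr hpow
  refine ⟨hmu, ?_⟩
  intro k t hkt
  obtain ⟨m, rfl⟩ : ∃ m, t = k + m := ⟨t - k, by omega⟩
  have hpm : p ≤ m := by omega
  have hVknn : 0 ≤ ‖V k - v‖ := norm_nonneg _
  have hpow_le : lam ^ m ≤ lam ^ p := pow_le_pow_of_le_one hlam0.le hlam1.le hpm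
  have hVkR : ‖V k - v‖ ≤ ‖F (σ k) v - v‖ / (1 - lam) := by
    rw [le_div_iff₀ h1lam]
    have := hRup k; linarith
  calc ‖F (σ (k+m)) v - v‖ ≤ ‖V (k+m) - v‖ := hRlow _
    _ ≤ lam ^ m * ‖V k - v‖ := hgeom k m
    _ ≤ lam ^ p * ‖V k - v‖ := by nlinarith
    _ ≤ lam ^ p * (‖F (σ k) v - v‖ / (1 - lam)) := by
        have : (0:ℝ) ≤ lam ^ p := by positivity
        nlinarith
    _ = (lam ^ p / (1 - lam)) * ‖F (σ k) v - v‖ := by ring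
end

section
/- The policy iteration algorithm for a game with n states, m₁ total state-action pairs of the first player, and all maps f^(σ) order-preserving λ-contractions (λ < 1 fixed), terminates after at most (m₁ − n)·(1 + ⌊log(1−λ)/log(λ)⌋) iterations. -/
open Function Filter Topology

/-- If `g` is a monotone contraction, `x` a fixed point and `u ≤ g u`, then `u ≤ x`. -/
lemma PIaux.le_fixed {n : ℕ} {g : (Fin n → ℝ) → (Fin n → ℝ)} {K : NNReal}
    (hg : ContractingWith K g) (hm : Monotone g) {x u : Fin n → ℝ}
    (hx : g x = x) (hu : u ≤ g u) : u ≤ x := by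
  have hxfp : x = ContractingWith.fixedPoint g hg := hg.fixedPoint_unique hx
  have htend := hg.tendsto_iterate_fixedPoint u
  have hmono : ∀ m : ℕ, u ≤ g^[m] u := by
    intro m
    induction m with
    | zero => simp
    | succ m ih =>
      calc u ≤ g u := hu
      _ ≤ g (g^[m] u) := hm ih
      _ = g^[m+1] u := (Function.iterate_succ_apply' g m u).symm
  rw [hxfp]
  exact le_of_tendsto_of_tendsto tendsto_const_nhds htend (Eventually.of_forall hmono)

lemma PIaux.fixed_le {n : ℕ} {g : (Fin n → ℝ) → (Fin n → ℝ)} {K : NNReal}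
    (hg : ContractingWith K g) (hm : Monotone g) {x u : Fin n → ℝ}
    (hx : g x = x) (hu : g u ≤ u) : x ≤ u := by
  have hxfp : x = ContractingWith.fixedPoint g hg := hg.fixedPoint_unique hx
  have htend := hg.tendsto_iterate_fixedPoint u
  have hmono : ∀ m : ℕ, g^[m] u ≤ u := by
    intro m
    induction m with
    | zero => simp
    | succ m ih =>
      calc g^[m+1] u = g (g^[m] u) := Function.iterate_succ_apply' g m u
      _ ≤ g u := hm ih
      _ ≤ u := hu
  rw [hxfp]
  exact le_of_tendsto_of_tendsto htend tendsto_const_nhds (Eventually.of_forall hmono)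

/-- `λ^(1+⌊log(1-λ)/log λ⌋) < 1 - λ` for `0 < λ < 1`. -/
lemma PIaux.pow_lt {lam : ℝ} (h0 : 0 < lam) (h1 : lam < 1) :
    lam ^ (1 + Nat.floor (Real.log (1 - lam) / Real.log lam)) < 1 - lam := by
  set r : ℝ := Real.log (1 - lam) / Real.log lam with hr
  have hlogl : Real.log lam < 0 := Real.log_neg h0 h1
  have hlog1 : Real.log (1 - lam) < 0 := Real.log_neg (by linarith) (by linarith)
  have hrpos : 0 ≤ r := le_of_lt (div_pos_of_neg_of_neg hlog1 hlogl)
  have hrN : r < (1 + Nat.floor r : ℕ) := by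
    push_cast
    have := Nat.lt_floor_add_one r
    linarith
  have hpow : lam ^ ((1 + Nat.floor r : ℕ) : ℝ) < lam ^ r :=
    Real.rpow_lt_rpow_of_exponent_gt h0 h1 hrN
  have hrval : lam ^ r = 1 - lam := by
    rw [Real.rpow_def_of_pos h0, hr, mul_comm, div_mul_cancel₀ _ (ne_of_lt hlogl), Real.exp_log (by linarith)]
  rw [← Real.rpow_natCast lam (1 + Nat.floor r), ← hrval]
  exact hpow

open Function Filter Topology

/-- Theorem `hansen-improved`: policy iteration with per-state
action sets `A i`, maps `f^(σ) v i = Fm i v (σ i)` that are order-preserving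
sup-norm `λ`-contractions, `f v i = min_{a ∈ A i} Fm i v a`, and conservative
policy improvement, triggers its stopping condition `σ_{k+1} = σ_k` after at
most `(m₁ - n)(1 + ⌊log(1-λ)/log λ⌋)` iterations, where `m₁ = Σ_i |A i|`. -/
theorem policy_iteration_strongly_polynomial {n : ℕ} (A : Fin n → Type*)
    [∀ i, Fintype (A i)] [∀ i, Nonempty (A i)]
    (lam : ℝ) (hlam0 : 0 < lam) (hlam1 : lam < 1)
    (Fm : ∀ i : Fin n, (Fin n → ℝ) → A i → ℝ)
    (Fσ : (∀ i, A i) → (Fin n → ℝ) → (Fin n → ℝ))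
    (hFσ : ∀ σ v i, Fσ σ v i = Fm i v (σ i))
    (hmono : ∀ σ, Monotone (Fσ σ))
    (hcontr : ∀ σ v w, ‖Fσ σ v - Fσ σ w‖ ≤ lam * ‖v - w‖)
    (f : (Fin n → ℝ) → (Fin n → ℝ))
    (hle : ∀ v (i : Fin n) (a : A i), f v i ≤ Fm i v a)
    (hatt : ∀ v i, ∃ a : A i, f v i = Fm i v a)
    (σ : ℕ → ∀ i, A i) (V : ℕ → Fin n → ℝ)
    (hfix : ∀ k, Fσ (σ k) (V k) = V k)
    (himp : ∀ k, f (V k) = Fσ (σ (k+1)) (V k))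
    (hcons : ∀ k i, f (V k) i = Fm i (V k) (σ k i) → σ (k+1) i = σ k i) :
    ∃ k ≤ ((∑ i, Fintype.card (A i)) - n) *
        (1 + Nat.floor (Real.log (1 - lam) / Real.log lam)),
      σ (k+1) = σ k := by
  classical
  rcases Nat.eq_zero_or_pos n with hn | hn
  · subst hn
    exact ⟨0, Nat.zero_le _, funext fun i => i.elim0⟩
  haveI : Nonempty (Fin n) := ⟨⟨0, hn⟩⟩
  set N : ℕ := 1 + Nat.floor (Real.log (1 - lam) / Real.log lam) with hN
  set m₁ : ℕ := ∑ i, Fintype.card (A i) with hm₁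
  set M : ℕ := m₁ - n with hM
  set K : NNReal := ⟨lam, hlam0.le⟩ with hK
  have hKcoe : (K : ℝ) = lam := rfl
  have hK1 : K < 1 := by
    rw [← NNReal.coe_lt_coe, hKcoe]; exact hlam1
  -- each Fσ σ' is a contraction
  have hFσcontr : ∀ σ', ContractingWith K (Fσ σ') := by
    intro σ'
    refine ⟨hK1, LipschitzWith.of_dist_le_mul fun v w => ?_⟩
    rw [dist_eq_norm, dist_eq_norm, hKcoe]
    exact hcontr σ' v w
  -- an arbitrary policy with prescribed action at one state
  have hselect : ∀ (i : Fin n) (a : A i), ∃ σ' : ∀ j, A j, σ' i = a := by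
    intro i a
    exact ⟨Function.update (fun j => Classical.arbitrary (A j)) i a, Function.update_self i a _⟩
  -- componentwise lipschitz for Fm
  have hcompLip : ∀ (i : Fin n) (a : A i) (v w), |Fm i v a - Fm i w a| ≤ lam * ‖v - w‖ := by
    intro i a v w
    obtain ⟨σ', hσ'⟩ := hselect i a
    have h1 : Fm i v a - Fm i w a = (Fσ σ' v - Fσ σ' w) i := by
      simp [hFσ, hσ']
    rw [h1, ← Real.norm_eq_abs]
    exact (norm_le_pi_norm _ i).trans (hcontr σ' v w)
  -- componentwise monotonicity for Fm
  have hcompMono : ∀ (i : Fin n) (a : A i) {v w}, v ≤ w → Fm i v a ≤ Fm i w a := by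
    intro i a v w hvw
    obtain ⟨σ', hσ'⟩ := hselect i a
    have := hmono σ' hvw i
    rwa [hFσ, hFσ, hσ'] at this
  -- f is a λ-contraction
  have hfLip : ∀ v w, ‖f v - f w‖ ≤ lam * ‖v - w‖ := by
    intro v w
    rw [pi_norm_le_iff_of_nonneg (mul_nonneg hlam0.le (norm_nonneg _))]
    intro i
    rw [Pi.sub_apply, Real.norm_eq_abs, abs_sub_le_iff]
    constructor
    · obtain ⟨a, ha⟩ := hatt w i
      calc f v i - f w i ≤ Fm i v a - Fm i w a := by
            rw [ha]; exact sub_le_sub_right (hle v i a) _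
        _ ≤ |Fm i v a - Fm i w a| := le_abs_self _
        _ ≤ lam * ‖v - w‖ := hcompLip i a v w
    · obtain ⟨a, ha⟩ := hatt v i
      calc f w i - f v i ≤ Fm i w a - Fm i v a := by
            rw [ha]; exact sub_le_sub_right (hle w i a) _
        _ ≤ |Fm i w a - Fm i v a| := le_abs_self _
        _ ≤ lam * ‖v - w‖ := by
            have := hcompLip i a w v
            rwa [norm_sub_rev w v] at this
  have hfContr : ContractingWith K f := by
    refine ⟨hK1, LipschitzWith.of_dist_le_mul fun v w => ?_⟩
    rw [dist_eq_norm, dist_eq_norm, hKcoe]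
    exact hfLip v w
  set vs : Fin n → ℝ := ContractingWith.fixedPoint f hfContr with hvs
  have hvsfix : f vs = vs := hfContr.fixedPoint_isFixedPt
  -- vs ≤ V k
  have hVk_ge : ∀ k, vs ≤ V k := by
    intro k
    refine PIaux.le_fixed (hFσcontr (σ k)) (hmono (σ k)) (hfix k) ?_
    intro i
    rw [hFσ]
    calc vs i = f vs i := by rw [hvsfix]
      _ ≤ Fm i vs (σ k i) := hle vs i (σ k i)
  -- V (k+1) ≤ V k
  have hVdec : ∀ k, V (k+1) ≤ V k := by
    intro k
    refine PIaux.fixed_le (hFσcontr (σ (k+1))) (hmono (σ (k+1))) (hfix (k+1)) ?_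
    intro i
    rw [← himp k]
    calc f (V k) i ≤ Fm i (V k) (σ k i) := hle _ _ _
      _ = V k i := by rw [← hFσ, hfix]
  set D : ℕ → ℝ := fun k => ‖V k - vs‖ with hD
  have hDnn : ∀ k, 0 ≤ D k := fun k => norm_nonneg _
  -- geometric decrease of D
  have hDstep : ∀ k, D (k+1) ≤ lam * D k := by
    intro k
    rw [hD]
    rw [pi_norm_le_iff_of_nonneg (mul_nonneg hlam0.le (norm_nonneg _))]
    intro i
    have h0 : 0 ≤ V (k+1) i - vs i := sub_nonneg.2 (hVk_ge (k+1) i)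
    rw [Pi.sub_apply, Real.norm_eq_abs, abs_of_nonneg h0]
    have h1 : V (k+1) i ≤ f (V k) i := by
      calc V (k+1) i = Fσ (σ (k+1)) (V (k+1)) i := by rw [hfix]
        _ ≤ Fσ (σ (k+1)) (V k) i := hmono (σ (k+1)) (hVdec k) i
        _ = f (V k) i := by rw [← himp]
    have h2 : f (V k) i - f vs i ≤ lam * D k := by
      calc f (V k) i - f vs i ≤ |f (V k) i - f vs i| := le_abs_self _
        _ = ‖(f (V k) - f vs) i‖ := by rw [Pi.sub_apply, Real.norm_eq_abs]
        _ ≤ ‖f (V k) - f vs‖ := norm_le_pi_norm _ i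
        _ ≤ lam * ‖V k - vs‖ := hfLip _ _
    have h3 : vs i = f vs i := by rw [hvsfix]
    rw [h3]
    linarith
  have hDgeom : ∀ k m, D (k + m) ≤ lam ^ m * D k := by
    intro k m
    induction m with
    | zero => simp
    | succ m ih =>
      calc D (k + (m+1)) = D ((k + m) + 1) := by ring_nf
        _ ≤ lam * D (k + m) := hDstep _
        _ ≤ lam * (lam ^ m * D k) := by
            exact mul_le_mul_of_nonneg_left ih hlam0.le
        _ = lam ^ (m+1) * D k := by ring
  -- λ^N < 1 - λ
  have hpowN : lam ^ N < 1 - lam := PIaux.pow_lt hlam0 hlam1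
  -- maximizing state
  have hmax : ∀ k, ∃ i, V k i - vs i = D k := by
    intro k
    obtain ⟨i, -, hi⟩ := Finset.exists_max_image Finset.univ (fun i => V k i - vs i)
      Finset.univ_nonempty
    refine ⟨i, le_antisymm ?_ ?_⟩
    · calc V k i - vs i ≤ |V k i - vs i| := le_abs_self _
        _ = ‖(V k - vs) i‖ := by rw [Pi.sub_apply, Real.norm_eq_abs]
        _ ≤ D k := norm_le_pi_norm _ i
    · rw [hD]
      have hnn : 0 ≤ V k i - vs i := sub_nonneg.2 (hVk_ge k i)
      rw [pi_norm_le_iff_of_nonneg hnn]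
      intro j
      rw [Pi.sub_apply, Real.norm_eq_abs, abs_of_nonneg (sub_nonneg.2 (hVk_ge k j))]
      exact hi j (Finset.mem_univ j)
  -- key inactivity lemma
  have key : ∀ k i, 0 < D k → V k i - vs i = D k → ∀ t, k + N ≤ t → σ t i ≠ σ k i := by
    intro k i hDk hik t ht hcon
    have h1 : V t i = Fm i (V t) (σ k i) := by
      rw [← hcon, ← hFσ, hfix]
    have h2 : Fm i vs (σ k i) ≤ Fm i (V t) (σ k i) := hcompMono i (σ k i) (hVk_ge t)
    have h3 : V k i - lam * D k ≤ Fm i vs (σ k i) := by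
      have := hcompLip i (σ k i) (V k) vs
      have h4 : Fm i (V k) (σ k i) - Fm i vs (σ k i) ≤ lam * D k :=
        (le_abs_self _).trans this
      have h5 : Fm i (V k) (σ k i) = V k i := by rw [← hFσ, hfix]
      linarith
    have hlow : (1 - lam) * D k ≤ V t i - vs i := by
      have := h3.trans (h2.trans_eq h1.symm)
      have hvk : V k i = vs i + D k := by linarith [hik]
      linarith
    have hup : V t i - vs i ≤ lam ^ N * D k := by
      have ht' : t = k + (t - k) := by omega
      have hg : D t ≤ lam ^ (t - k) * D k := by
        have := hDgeom k (t - k)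
        rwa [← ht'] at this
      have hNle : lam ^ (t - k) ≤ lam ^ N :=
        pow_le_pow_of_le_one hlam0.le hlam1.le (by omega)
      calc V t i - vs i ≤ |V t i - vs i| := le_abs_self _
        _ = ‖(V t - vs) i‖ := by rw [Pi.sub_apply, Real.norm_eq_abs]
        _ ≤ D t := norm_le_pi_norm _ i
        _ ≤ lam ^ (t - k) * D k := hg
        _ ≤ lam ^ N * D k := mul_le_mul_of_nonneg_right hNle (hDnn k)
    have : lam ^ N * D k < (1 - lam) * D k := mul_lt_mul_of_pos_right hpowN hDk
    linarith
  -- there is j ≤ M with D (j*N) = 0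
  have hzero : ∃ j ≤ M, D (j * N) = 0 := by
    by_contra hcon
    push_neg at hcon
    have hpos : ∀ j ≤ M, 0 < D (j * N) := fun j hj =>
      lt_of_le_of_ne (hDnn _) (Ne.symm (hcon j hj))
    choose ι hι using hmax
    set P : Fin (M + 1) → (Σ i : Fin n, A i) :=
      fun j => ⟨ι ((j : ℕ) * N), σ ((j : ℕ) * N) (ι ((j : ℕ) * N))⟩ with hP
    set T : ℕ := (M + 1) * N with hT
    set Q : Fin n → (Σ i : Fin n, A i) := fun i => ⟨i, σ T i⟩ with hQ
    have hNpos : 0 < N := by rw [hN]; omega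
    -- P's pair is inactive from (j+1)*N on
    have hinact : ∀ (j : Fin (M + 1)) (t : ℕ), (j : ℕ) * N + N ≤ t →
        σ t (ι ((j : ℕ) * N)) ≠ σ ((j : ℕ) * N) (ι ((j : ℕ) * N)) := by
      intro j t ht
      exact key ((j : ℕ) * N) _ (hpos j (by omega)) (hι _) t ht
    have hne' : ∀ j j' : Fin (M + 1), (j : ℕ) < (j' : ℕ) → P j ≠ P j' := by
      intro j j' hlt hjj'
      have h1 : ι ((j : ℕ) * N) = ι ((j' : ℕ) * N) := congrArg Sigma.fst hjj'
      have h2 : σ ((j' : ℕ) * N) (ι ((j : ℕ) * N)) = σ ((j : ℕ) * N) (ι ((j : ℕ) * N)) := by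
        have := (Sigma.mk.inj_iff.1 hjj').2
        rw [← h1] at this
        exact (eq_of_heq this).symm
      exact hinact j ((j' : ℕ) * N) (by nlinarith [hNpos]) h2
    have hPinj : Function.Injective P := by
      intro j j' hjj'
      rcases Nat.lt_trichotomy (j : ℕ) (j' : ℕ) with h | h | h
      · exact absurd hjj' (hne' j j' h)
      · exact Fin.ext h
      · exact absurd hjj'.symm (hne' j' j h)
    have hQinj : Function.Injective Q := by
      intro i i' h
      exact congrArg Sigma.fst h
    have hdisj : ∀ j i, P j ≠ Q i := by
      intro j i hji
      have h1 : ι ((j : ℕ) * N) = i := congrArg Sigma.fst hji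
      have h2 : σ T (ι ((j : ℕ) * N)) = σ ((j : ℕ) * N) (ι ((j : ℕ) * N)) := by
        have := (Sigma.mk.inj_iff.1 hji).2
        rw [← h1] at this
        exact (eq_of_heq this).symm
      have hjM : (j : ℕ) ≤ M := by omega
      have hTle : (j : ℕ) * N + N ≤ T := by
        rw [hT]
        nlinarith [hNpos]
      exact hinact j T hTle h2
    -- combine into an injection from Fin (M+1) ⊕ Fin n
    have hinj : Function.Injective (Sum.elim P Q) := by
      intro x y hxy
      cases x with
      | inl j => cases y with
        | inl j' => exact congrArg Sum.inl (hPinj hxy)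
        | inr i => exact absurd hxy (hdisj j i)
      | inr i => cases y with
        | inl j => exact absurd hxy.symm (hdisj j i)
        | inr i' => exact congrArg Sum.inr (hQinj hxy)
    have hcard := Fintype.card_le_of_injective _ hinj
    rw [Fintype.card_sum, Fintype.card_fin, Fintype.card_fin, Fintype.card_sigma] at hcard
    have hnm : n ≤ m₁ := by
      rw [hm₁]
      calc n = ∑ _i : Fin n, 1 := by simp
        _ ≤ ∑ i, Fintype.card (A i) := Finset.sum_le_sum fun i _ => Fintype.card_pos
    omega
  obtain ⟨j, hjM, hj0⟩ := hzero
  refine ⟨j * N, by exact Nat.mul_le_mul_right N hjM, ?_⟩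
  have hVeq : V (j * N) = vs := by
    have := norm_eq_zero.1 hj0
    exact sub_eq_zero.1 this
  funext i
  apply hcons
  rw [← hFσ, hfix, hVeq]
  exact congrFun hvsfix i
end

section
/- For a continuous, positively homogeneous, order-preserving self-map h of the nonnegative orthant ℝ₊ⁿ, the cone eigenvalue spectral radius equals the Collatz–Wielandt number: sup{λ ≥ 0 : ∃ v ∈ ℝ₊ⁿ \ {0}, h(v) = λv} = inf{λ > 0 : ∃ v with all coordinates strictly positive, h(v) ≤ λv}. -/
open Finset Filter

namespace NPF

variable {n : ℕ}

lemma univ_ne (hn : 0 < n) : (Finset.univ : Finset (Fin n)).Nonempty := by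
  simpa using Finset.univ_nonempty_iff.2 (Fin.pos_iff_nonempty.1 hn)

/-- max coordinate -/
noncomputable def mx (hn : 0 < n) (z : Fin n → ℝ) : ℝ := Finset.univ.sup' (univ_ne hn) z

/-- min coordinate -/
noncomputable def mn (hn : 0 < n) (z : Fin n → ℝ) : ℝ := Finset.univ.inf' (univ_ne hn) z

/-- oscillation seminorm -/
noncomputable def osc (hn : 0 < n) (z : Fin n → ℝ) : ℝ := mx hn z - mn hn z

lemma mn_le (hn : 0 < n) (z : Fin n → ℝ) (i : Fin n) : mn hn z ≤ z i :=
  Finset.inf'_le _ (Finset.mem_univ i)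

lemma le_mx (hn : 0 < n) (z : Fin n → ℝ) (i : Fin n) : z i ≤ mx hn z :=
  Finset.le_sup' _ (Finset.mem_univ i)

lemma mx_le (hn : 0 < n) (z : Fin n → ℝ) (a : ℝ) (hz : ∀ i, z i ≤ a) : mx hn z ≤ a :=
  Finset.sup'_le _ _ fun i _ => hz i

lemma le_mn (hn : 0 < n) (z : Fin n → ℝ) (a : ℝ) (hz : ∀ i, a ≤ z i) : a ≤ mn hn z :=
  Finset.le_inf' _ _ fun i _ => hz i

lemma osc_nonneg (hn : 0 < n) (z : Fin n → ℝ) : 0 ≤ osc hn z := by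
  obtain ⟨i, -⟩ := univ_ne hn
  have h1 := mn_le hn z i
  have h2 := le_mx hn z i
  simp only [osc]; linarith

lemma mx_smul (hn : 0 < n) (t : ℝ) (ht : 0 ≤ t) (z : Fin n → ℝ) :
    mx hn (t • z) = t * mx hn z := by
  have := Finset.comp_sup'_eq_sup'_comp (univ_ne hn) (f := z) (fun x : ℝ => t * x)
    (fun x y => mul_max_of_nonneg x y ht)
  simp only [mx, this]; rfl

lemma mn_smul (hn : 0 < n) (t : ℝ) (ht : 0 ≤ t) (z : Fin n → ℝ) :
    mn hn (t • z) = t * mn hn z := by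
  have := Finset.apply_inf'_eq_inf'_comp (univ_ne hn) (f := z) (fun x : ℝ => t * x)
    (fun x y => mul_min_of_nonneg x y ht)
  simp only [mn, this]; rfl

lemma osc_smul (hn : 0 < n) (t : ℝ) (ht : 0 ≤ t) (z : Fin n → ℝ) :
    osc hn (t • z) = t * osc hn z := by
  simp [osc, mx_smul hn t ht, mn_smul hn t ht]; ring

lemma osc_add_le (hn : 0 < n) (y z : Fin n → ℝ) :
    osc hn (y + z) ≤ osc hn y + osc hn z := by
  have h1 : mx hn (y + z) ≤ mx hn y + mx hn z :=
    mx_le hn _ _ fun i => add_le_add (le_mx hn y i) (le_mx hn z i)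
  have h2 : mn hn y + mn hn z ≤ mn hn (y + z) :=
    le_mn hn _ _ fun i => add_le_add (mn_le hn y i) (mn_le hn z i)
  simp only [osc]; linarith

end NPF

namespace NPF2
open NPF

variable {n : ℕ}

lemma nonexpansive (hn : 0 < n) (g : (Fin n → ℝ) → (Fin n → ℝ))
    (hg1 : ∀ x y : Fin n → ℝ, x ≤ y → g x ≤ g y)
    (hg2 : ∀ (c : ℝ) (x : Fin n → ℝ), g (x + fun _ => c) = g x + fun _ => c)
    (x y : Fin n → ℝ) : osc hn (g x - g y) ≤ osc hn (x - y) := by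
  have kx : ∀ i, g x i - g y i ≤ mx hn (x - y) := by
    intro i
    have hx : x ≤ y + fun _ => mx hn (x - y) := by
      intro j
      have := le_mx hn (x - y) j
      simp only [Pi.sub_apply] at this
      simp only [Pi.add_apply]
      linarith
    have := hg1 x (y + fun _ => mx hn (x - y)) hx
    have h2 := hg2 (mx hn (x - y)) y
    rw [h2] at this
    have := this i
    simp only [Pi.add_apply] at this
    linarith
  have kn : ∀ i, mn hn (x - y) ≤ g x i - g y i := by
    intro i
    have hy : y ≤ x + fun _ => -mn hn (x - y) := by
      intro j
      have := mn_le hn (x - y) j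
      simp only [Pi.sub_apply] at this
      simp only [Pi.add_apply]
      linarith
    have := hg1 y (x + fun _ => -mn hn (x - y)) hy
    rw [hg2 (-mn hn (x - y)) x] at this
    have := this i
    simp only [Pi.add_apply] at this
    linarith
  have h1 : mx hn (g x - g y) ≤ mx hn (x - y) :=
    mx_le hn _ _ fun i => by simpa using kx i
  have h2 : mn hn (x - y) ≤ mn hn (g x - g y) :=
    le_mn hn _ _ fun i => by simpa using kn i
  simp only [osc]; linarith

/-- approximate fixed point lemma -/
lemma approx_fixed (hn : 0 < n) (g : (Fin n → ℝ) → (Fin n → ℝ))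
    (hg1 : ∀ x y : Fin n → ℝ, x ≤ y → g x ≤ g y)
    (hg2 : ∀ (c : ℝ) (x : Fin n → ℝ), g (x + fun _ => c) = g x + fun _ => c)
    (D : ℝ) (hD : ∀ x, osc hn (g x) ≤ D) (δ : ℝ) (hδ : 0 < δ) :
    ∃ x : Fin n → ℝ, osc hn (g x - x) ≤ δ := by
  have hD0 : 0 ≤ D := le_trans (osc_nonneg hn (g 0)) (hD 0)
  -- choose θ
  set θ : ℝ := 1 - min (δ / (2 * (D + 1))) (1/2) with hθdef
  have hmin0 : 0 < min (δ / (2 * (D + 1))) (1/2) := by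
    apply lt_min _ (by norm_num)
    positivity
  have hminh : min (δ / (2 * (D + 1))) (1/2) ≤ 1/2 := min_le_right _ _
  have hθ0 : (1:ℝ)/2 ≤ θ := by simp only [hθdef]; linarith
  have hθ1 : θ < 1 := by simp only [hθdef]; linarith
  have hθpos : 0 < θ := lt_of_lt_of_le (by norm_num) hθ0
  have hres : (1 - θ) * D ≤ δ / 2 := by
    have h1 : 1 - θ ≤ δ / (2 * (D + 1)) := by simp only [hθdef]; simp [min_le_left]
    have h2 : (1 - θ) * D ≤ (δ / (2 * (D + 1))) * D := by
      apply mul_le_mul_of_nonneg_right h1 hD0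
    have h3 : (δ / (2 * (D + 1))) * D ≤ δ / 2 := by
      rw [div_mul_eq_mul_div, div_le_div_iff₀ (by positivity) (by norm_num)]
      nlinarith
    linarith
  -- iteration
  set F : (Fin n → ℝ) → (Fin n → ℝ) := fun y => θ • g y with hF
  set x : ℕ → (Fin n → ℝ) := fun m => F^[m] 0 with hx
  have hxsucc : ∀ m, x (m + 1) = θ • g (x m) := by
    intro m; show F^[m+1] 0 = θ • g (F^[m] 0); rw [Function.iterate_succ_apply']
  -- geometric decay
  have hdecay : ∀ m, osc hn (x (m+1) - x m) ≤ θ ^ m * osc hn (x 1 - x 0) := by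
    intro m
    induction m with
    | zero => simp
    | succ m ih =>
      have heq : x (m+2) - x (m+1) = θ • (g (x (m+1)) - g (x m)) := by
        rw [hxsucc (m+1), hxsucc m, smul_sub]
      rw [heq, osc_smul hn θ hθpos.le]
      have := nonexpansive hn g hg1 hg2 (x (m+1)) (x m)
      have h4 : θ * osc hn (g (x (m+1)) - g (x m)) ≤ θ * (θ ^ m * osc hn (x 1 - x 0)) := by
        apply mul_le_mul_of_nonneg_left (le_trans this ih) hθpos.le
      calc θ * osc hn (g (x (m+1)) - g (x m)) ≤ θ * (θ ^ m * osc hn (x 1 - x 0)) := h4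
        _ = θ ^ (m+1) * osc hn (x 1 - x 0) := by ring
  -- choose m
  have hgeo : Tendsto (fun m : ℕ => θ ^ m * osc hn (x 1 - x 0)) atTop (nhds 0) := by
    have := tendsto_pow_atTop_nhds_zero_of_lt_one hθpos.le hθ1
    simpa using this.mul_const (osc hn (x 1 - x 0))
  obtain ⟨m, hm⟩ := (hgeo.eventually (eventually_lt_nhds (show (0:ℝ) < δ/2 by linarith))).exists
  refine ⟨x m, ?_⟩
  -- residual estimate
  have hkey : g (x m) - x m = (x (m+1) - x m) + (θ⁻¹ - 1) • x (m+1) := by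
    funext i
    have hx1 := congrFun (hxsucc m) i
    simp only [Pi.sub_apply, Pi.add_apply, Pi.smul_apply, smul_eq_mul] at hx1 ⊢
    rw [hx1]
    field_simp
    ring
  have hb1 : osc hn (x (m+1) - x m) ≤ δ / 2 := le_trans (hdecay m) hm.le
  have hb2 : osc hn ((θ⁻¹ - 1) • x (m+1)) ≤ δ / 2 := by
    have hpos : 0 ≤ θ⁻¹ - 1 := by
      have : θ⁻¹ ≥ 1 := (one_le_inv₀ hθpos).2 hθ1.le
      linarith
    rw [osc_smul hn _ hpos]
    have h5 : osc hn (x (m+1)) ≤ θ * D := by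
      rw [hxsucc m, osc_smul hn θ hθpos.le]
      exact mul_le_mul_of_nonneg_left (hD (x m)) hθpos.le
    have h6 : (θ⁻¹ - 1) * osc hn (x (m+1)) ≤ (θ⁻¹ - 1) * (θ * D) :=
      mul_le_mul_of_nonneg_left h5 hpos
    have h7 : (θ⁻¹ - 1) * (θ * D) = (1 - θ) * D := by
      field_simp
    linarith
  calc osc hn (g (x m) - x m) ≤ osc hn (x (m+1) - x m) + osc hn ((θ⁻¹ - 1) • x (m+1)) := by
        rw [hkey]; exact osc_add_le hn _ _
    _ ≤ δ := by linarith

end NPF2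

namespace NPF3
open NPF NPF2

lemma cw_step {n : ℕ} (hn : 0 < n) (h : (Fin n → ℝ) → (Fin n → ℝ))
    (hmap : ∀ v : Fin n → ℝ, 0 ≤ v → 0 ≤ h v)
    (hcont : ContinuousOn h {v : Fin n → ℝ | 0 ≤ v})
    (hhom : ∀ t : ℝ, 0 < t → ∀ v : Fin n → ℝ, 0 ≤ v → h (t • v) = t • h v)
    (hmono : ∀ v w : Fin n → ℝ, 0 ≤ v → v ≤ w → h v ≤ h w)
    (ε δ : ℝ) (hε : 0 < ε) (hδ : 0 < δ) :
    ∃ (u : Fin n → ℝ) (s : ℝ), (∀ i, 0 < u i) ∧ (∑ i, u i = 1) ∧ 0 < s ∧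
      (∀ i, s * u i ≤ h u i + ε) ∧ (∀ i, h u i + ε ≤ Real.exp δ * (s * u i)) := by
  -- the perturbed map
  set H : (Fin n → ℝ) → (Fin n → ℝ) := fun v i => h v i + ε * ∑ j, v j with hHdef
  -- bound on the simplex
  obtain ⟨C₁, hC₁⟩ := (isCompact_stdSimplex ℝ (Fin n)).exists_bound_of_continuousOn
    (hcont.mono fun v hv i => hv.1 i)
  have hnR : (0:ℝ) < n := Nat.cast_pos.2 hn
  have hsimplex_pt : (fun _ : Fin n => (n:ℝ)⁻¹) ∈ stdSimplex ℝ (Fin n) := by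
    constructor
    · intro i; exact (inv_pos.2 hnR).le
    · simp [Finset.sum_const, Finset.card_univ]
      field_simp
  have hC₁0 : 0 ≤ C₁ := le_trans (norm_nonneg _) (hC₁ _ hsimplex_pt)
  set M : ℝ := C₁ + ε with hMdef
  have hM0 : 0 < M := by positivity
  -- homogeneity of H
  have Hhom : ∀ t : ℝ, 0 < t → ∀ v : Fin n → ℝ, 0 ≤ v → ∀ i, H (t • v) i = t * H v i := by
    intro t ht v hv i
    simp only [hHdef]
    rw [hhom t ht v hv]
    simp only [Pi.smul_apply, smul_eq_mul, Finset.mul_sum]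
    ring_nf
    rw [Finset.mul_sum]
    ring_nf
  -- bounds on H for positive vectors
  have Hbound : ∀ v : Fin n → ℝ, (∀ i, 0 < v i) → ∀ i,
      ε * ∑ j, v j ≤ H v i ∧ H v i ≤ M * ∑ j, v j := by
    intro v hv i
    have hv0 : 0 ≤ v := fun j => (hv j).le
    have hS : 0 < ∑ j, v j := Finset.sum_pos (fun j _ => hv j) (univ_ne hn)
    constructor
    · have := hmap v hv0 i
      simp only [hHdef]
      simp only [Pi.zero_apply] at this
      linarith
    · set u : Fin n → ℝ := (∑ j, v j)⁻¹ • v with hudef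
      have hu_mem : u ∈ stdSimplex ℝ (Fin n) := by
        constructor
        · intro j
          simp only [hudef, Pi.smul_apply, smul_eq_mul]
          exact (mul_pos (inv_pos.2 hS) (hv j)).le
        · simp only [hudef, Pi.smul_apply, smul_eq_mul, ← Finset.mul_sum]
          field_simp
      have hvu : v = (∑ j, v j) • u := by
        funext j
        simp only [hudef, Pi.smul_apply, smul_eq_mul]
        field_simp
      have hh : h v i = (∑ j, v j) * h u i := by
        conv_lhs => rw [hvu]
        rw [hhom _ hS u (fun j => hu_mem.1 j)]
        simp
      have hb : h u i ≤ C₁ := by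
        have h1 : |h u i| ≤ ‖h u‖ := by
          simpa using norm_le_pi_norm (h u) i
        have := hC₁ u hu_mem
        exact le_trans (le_abs_self _) (le_trans h1 this)
      simp only [hHdef]
      have : h v i ≤ (∑ j, v j) * C₁ := by
        rw [hh]; exact mul_le_mul_of_nonneg_left hb hS.le
      simp only [hMdef]
      nlinarith
  -- the log-exp conjugate
  set g : (Fin n → ℝ) → (Fin n → ℝ) :=
    fun x i => Real.log (H (fun j => Real.exp (x j)) i) with hgdef
  have hexp_pos : ∀ x : Fin n → ℝ, ∀ i, 0 < Real.exp (x i) := fun x i => Real.exp_pos _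
  have hexp_sum : ∀ x : Fin n → ℝ, 0 < ∑ j, Real.exp (x j) :=
    fun x => Finset.sum_pos (fun j _ => Real.exp_pos _) (univ_ne hn)
  have gpos : ∀ x : Fin n → ℝ, ∀ i, 0 < H (fun j => Real.exp (x j)) i := by
    intro x i
    have := (Hbound _ (hexp_pos x) i).1
    have := hexp_sum x
    nlinarith
  have hg1 : ∀ x y : Fin n → ℝ, x ≤ y → g x ≤ g y := by
    intro x y hxy i
    simp only [hgdef]
    apply Real.log_le_log (gpos x i)
    have hle : (fun j => Real.exp (x j)) ≤ fun j => Real.exp (y j) :=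
      fun j => Real.exp_le_exp.2 (hxy j)
    have hm := hmono _ _ (fun j => (Real.exp_pos _).le) hle i
    have hs : ∑ j, Real.exp (x j) ≤ ∑ j, Real.exp (y j) :=
      Finset.sum_le_sum fun j _ => hle j
    simp only [hHdef]
    nlinarith
  have hg2 : ∀ (c : ℝ) (x : Fin n → ℝ), g (x + fun _ => c) = g x + fun _ => c := by
    intro c x
    funext i
    simp only [hgdef, Pi.add_apply]
    have hfe : (fun j => Real.exp (x j + c)) = Real.exp c • fun j => Real.exp (x j) := by
      funext j
      simp [Real.exp_add, mul_comm]
    rw [hfe, Hhom _ (Real.exp_pos c) _ (fun j => (Real.exp_pos _).le) i,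
      Real.log_mul (Real.exp_ne_zero c) (gpos x i).ne', Real.log_exp]
    ring
  set D : ℝ := Real.log M - Real.log ε with hDdef
  have hD : ∀ x, osc hn (g x) ≤ D := by
    intro x
    have hup : ∀ i, g x i ≤ Real.log M + Real.log (∑ j, Real.exp (x j)) := by
      intro i
      simp only [hgdef]
      rw [← Real.log_mul hM0.ne' (hexp_sum x).ne']
      exact Real.log_le_log (gpos x i) (Hbound _ (hexp_pos x) i).2
    have hlo : ∀ i, Real.log ε + Real.log (∑ j, Real.exp (x j)) ≤ g x i := by
      intro i
      simp only [hgdef]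
      rw [← Real.log_mul hε.ne' (hexp_sum x).ne']
      exact Real.log_le_log (mul_pos hε (hexp_sum x)) (Hbound _ (hexp_pos x) i).1
    have h1 : mx hn (g x) ≤ Real.log M + Real.log (∑ j, Real.exp (x j)) := mx_le hn _ _ hup
    have h2 : Real.log ε + Real.log (∑ j, Real.exp (x j)) ≤ mn hn (g x) := le_mn hn _ _ hlo
    simp only [osc, hDdef]
    linarith
  -- approximate fixed point
  obtain ⟨x, hx⟩ := approx_fixed hn g hg1 hg2 D hD δ hδ
  set μ : ℝ := mn hn (g x - x) with hμdef
  have hmub : ∀ i, μ ≤ g x i - x i ∧ g x i - x i ≤ μ + δ := by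
    intro i
    refine ⟨by simpa using mn_le hn (g x - x) i, ?_⟩
    have h1 : g x i - x i ≤ mx hn (g x - x) := by simpa using le_mx hn (g x - x) i
    have : mx hn (g x - x) - mn hn (g x - x) ≤ δ := hx
    simp only [hμdef]
    linarith
  set v : Fin n → ℝ := fun j => Real.exp (x j) with hvdef
  have hveq : ∀ i, H v i = Real.exp (g x i) := by
    intro i
    simp only [hgdef, hvdef]
    rw [Real.exp_log (gpos x i)]
  have hbounds : ∀ i, Real.exp μ * v i ≤ H v i ∧ H v i ≤ Real.exp (μ + δ) * v i := by
    intro i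
    have h1 := (hmub i).1
    have h2 := (hmub i).2
    constructor
    · rw [hveq i, ← Real.exp_add]
      exact Real.exp_le_exp.2 (by linarith)
    · rw [hveq i, ← Real.exp_add]
      exact Real.exp_le_exp.2 (by linarith)
  set S : ℝ := ∑ j, v j with hSdef
  have hS : 0 < S := hexp_sum x
  set u : Fin n → ℝ := S⁻¹ • v with hudef
  have hu_pos : ∀ i, 0 < u i := by
    intro i
    simp only [hudef, Pi.smul_apply, smul_eq_mul, hvdef]
    exact mul_pos (inv_pos.2 hS) (Real.exp_pos _)
  have hu_sum : ∑ i, u i = 1 := by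
    simp only [hudef, Pi.smul_apply, smul_eq_mul, ← Finset.mul_sum, ← hSdef]
    field_simp
  have hHu : ∀ i, H u i = S⁻¹ * H v i := by
    intro i
    simp only [hudef]
    exact Hhom S⁻¹ (inv_pos.2 hS) v (fun j => (Real.exp_pos _).le) i
  have hHu_eq : ∀ i, H u i = h u i + ε := by
    intro i
    simp only [hHdef, hu_sum]
    ring
  refine ⟨u, Real.exp μ, hu_pos, hu_sum, Real.exp_pos μ, ?_, ?_⟩
  · intro i
    have := (hbounds i).1
    have h3 : Real.exp μ * u i ≤ H u i := by
      rw [hHu i]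
      simp only [hudef, Pi.smul_apply, smul_eq_mul]
      calc Real.exp μ * (S⁻¹ * v i) = S⁻¹ * (Real.exp μ * v i) := by ring
        _ ≤ S⁻¹ * H v i := by
            apply mul_le_mul_of_nonneg_left this (inv_pos.2 hS).le
    rw [hHu_eq i] at h3
    exact h3
  · intro i
    have := (hbounds i).2
    have h3 : H u i ≤ Real.exp (μ + δ) * u i := by
      rw [hHu i]
      simp only [hudef, Pi.smul_apply, smul_eq_mul]
      calc S⁻¹ * H v i ≤ S⁻¹ * (Real.exp (μ + δ) * v i) := by
            apply mul_le_mul_of_nonneg_left this (inv_pos.2 hS).le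
        _ = Real.exp (μ + δ) * (S⁻¹ * v i) := by ring
    rw [hHu_eq i] at h3
    calc h u i + ε ≤ Real.exp (μ + δ) * u i := h3
      _ = Real.exp δ * (Real.exp μ * u i) := by rw [Real.exp_add]; ring

end NPF3

namespace NPF4
open NPF NPF2 NPF3 Filter

lemma compare {n : ℕ} (h : (Fin n → ℝ) → (Fin n → ℝ))
    (hhom : ∀ t : ℝ, 0 < t → ∀ v : Fin n → ℝ, 0 ≤ v → h (t • v) = t • h v)
    (hmono : ∀ v w : Fin n → ℝ, 0 ≤ v → v ≤ w → h v ≤ h w)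
    (lam : ℝ) (v : Fin n → ℝ) (hv0 : 0 ≤ v) (hvne : v ≠ 0) (hev : h v = lam • v)
    (mu : ℝ) (u : Fin n → ℝ) (hu : ∀ i, 0 < u i) (hcw : h u ≤ mu • u) : lam ≤ mu := by
  obtain ⟨i₁, hi₁⟩ := Function.ne_iff.1 hvne
  have hne : (Finset.univ : Finset (Fin n)).Nonempty := ⟨i₁, Finset.mem_univ _⟩
  set t := Finset.univ.sup' hne (fun i => v i / u i) with htdef
  have hv₁pos : 0 < v i₁ := lt_of_le_of_ne (hv0 i₁) (by simpa using Ne.symm hi₁)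
  have htpos : 0 < t :=
    lt_of_lt_of_le (div_pos hv₁pos (hu i₁))
      (Finset.le_sup' (fun i => v i / u i) (Finset.mem_univ i₁))
  have hvle : v ≤ t • u := by
    intro i
    have h1 : v i / u i ≤ t := Finset.le_sup' (fun i => v i / u i) (Finset.mem_univ i)
    have := (div_le_iff₀ (hu i)).1 h1
    simpa [Pi.smul_apply, smul_eq_mul] using this
  obtain ⟨i₂, -, hi₂⟩ := Finset.exists_mem_eq_sup' hne (fun i => v i / u i)
  have hvi₂ : v i₂ = t * u i₂ := by
    have h2 : t = v i₂ / u i₂ := by rw [htdef, hi₂]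
    rw [h2, div_mul_cancel₀ _ (hu i₂).ne']
  have hchain : lam • v ≤ (t * mu) • u := by
    rw [← hev]
    calc h v ≤ h (t • u) := hmono v _ hv0 hvle
      _ = t • h u := hhom t htpos u (fun i => (hu i).le)
      _ ≤ t • (mu • u) := smul_le_smul_of_nonneg_left hcw htpos.le
      _ = (t * mu) • u := smul_smul t mu u
  have hkey := hchain i₂
  simp only [Pi.smul_apply, smul_eq_mul] at hkey
  rw [hvi₂] at hkey
  nlinarith [mul_pos htpos (hu i₂)]

end NPF4

/-- nonlinear Perron–Frobenius, Nussbaum: for a continuous,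
positively homogeneous, order-preserving self-map `h` of the nonnegative
orthant of `ℝⁿ`, the cone eigenvalue spectral radius equals the
Collatz–Wielandt number. -/
theorem eigenvalue_spectral_radius_eq_collatz_wielandt {n : ℕ}
    (h : (Fin n → ℝ) → (Fin n → ℝ))
    (hmap : ∀ v : Fin n → ℝ, 0 ≤ v → 0 ≤ h v)
    (hcont : ContinuousOn h {v : Fin n → ℝ | 0 ≤ v})
    (hhom : ∀ t : ℝ, 0 < t → ∀ v : Fin n → ℝ, 0 ≤ v → h (t • v) = t • h v)
    (hmono : ∀ v w : Fin n → ℝ, 0 ≤ v → v ≤ w → h v ≤ h w) :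
    sSup {lam : ℝ | 0 ≤ lam ∧ ∃ v : Fin n → ℝ, 0 ≤ v ∧ v ≠ 0 ∧ h v = lam • v} =
    sInf {lam : ℝ | 0 < lam ∧ ∃ v : Fin n → ℝ, (∀ i, 0 < v i) ∧ h v ≤ lam • v} := by
  open Filter NPF NPF2 NPF3 NPF4 in
  set E := {lam : ℝ | 0 ≤ lam ∧ ∃ v : Fin n → ℝ, 0 ≤ v ∧ v ≠ 0 ∧ h v = lam • v} with hEdef
  set C := {lam : ℝ | 0 < lam ∧ ∃ v : Fin n → ℝ, (∀ i, 0 < v i) ∧ h v ≤ lam • v} with hCdef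
  rcases Nat.eq_zero_or_pos n with hn | hn
  · -- degenerate case n = 0
    subst hn
    have hE : E = ∅ := by
      ext lam
      simp only [hEdef, Set.mem_setOf_eq, Set.mem_empty_iff_false, iff_false, not_and]
      rintro - ⟨v, -, hvne, -⟩
      exact hvne (funext fun i => i.elim0)
    have hC : C = Set.Ioi 0 := by
      ext lam
      simp only [hCdef, Set.mem_setOf_eq, Set.mem_Ioi]
      constructor
      · rintro ⟨hl, -⟩; exact hl
      · intro hl
        exact ⟨hl, 0, fun i => i.elim0, fun i => i.elim0⟩
    rw [hE, hC, Real.sSup_empty, csInf_Ioi]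
  · -- main case
    have hnR : (0:ℝ) < n := Nat.cast_pos.2 hn
    -- C is nonempty
    have hCne : C.Nonempty := by
      refine ⟨mx hn (h fun _ => 1) + 1, ?_, (fun _ => 1), fun i => one_pos, ?_⟩
      · have h0 : (0:Fin n → ℝ) ≤ h fun _ => 1 := hmap _ (fun i => zero_le_one)
        have := le_mx hn (h fun _ => 1) ⟨0, hn⟩
        have h1 := h0 ⟨0, hn⟩
        simp only [Pi.zero_apply] at h1
        linarith
      · intro i
        have := le_mx hn (h fun _ => 1) i
        simp only [Pi.smul_apply, smul_eq_mul, mul_one]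
        linarith
    obtain ⟨c₀, hc₀⟩ := hCne
    -- C is bounded below by 0
    have hCbdd : BddBelow C := ⟨0, fun b hb => hb.1.le⟩
    -- sequence of approximate eigenvectors
    have hstep := fun k : ℕ => cw_step hn h hmap hcont hhom hmono
      (1/(k+1)) (1/(k+1)) (by positivity) (by positivity)
    choose u s hu hsum hs hlow hupp using hstep
    -- simplex membership
    have humem : ∀ k, u k ∈ stdSimplex ℝ (Fin n) := fun k => ⟨fun i => (hu k i).le, hsum k⟩
    -- uniform bound on s
    obtain ⟨C₁, hC₁⟩ := (isCompact_stdSimplex ℝ (Fin n)).exists_bound_of_continuousOn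
      (hcont.mono fun v hv i => hv.1 i)
    set B : ℝ := n * (C₁ + 1) with hBdef
    have hsB : ∀ k, s k ∈ Set.Icc (0:ℝ) B := by
      intro k
      refine ⟨(hs k).le, ?_⟩
      -- some coordinate is at least 1/n
      have hex : ∃ i, 1/(n:ℝ) ≤ u k i := by
        by_contra hcon
        push_neg at hcon
        have hlt : ∑ i, u k i < ∑ _i : Fin n, 1/(n:ℝ) :=
          Finset.sum_lt_sum_of_nonempty (univ_ne hn) (fun i _ => hcon i)
        rw [hsum k] at hlt
        simp only [Finset.sum_const, Finset.card_univ, Fintype.card_fin, nsmul_eq_mul] at hlt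
        rw [mul_one_div, div_self hnR.ne'] at hlt
        exact lt_irrefl 1 hlt
      obtain ⟨i, hi⟩ := hex
      have h1 : s k * u k i ≤ C₁ + 1 := by
        have h2 := hlow k i
        have h3 : h (u k) i ≤ C₁ := by
          have := hC₁ (u k) (humem k)
          have h4 : |h (u k) i| ≤ ‖h (u k)‖ := by simpa using norm_le_pi_norm (h (u k)) i
          exact le_trans (le_abs_self _) (le_trans h4 this)
        have h5 : 1/((k:ℝ)+1) ≤ 1 := by
          rw [div_le_one (by positivity)]
          simp
        linarith
      have h6 : s k * (1/(n:ℝ)) ≤ s k * u k i :=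
        mul_le_mul_of_nonneg_left hi (hs k).le
      rw [hBdef]
      have h7 : s k * (1/(n:ℝ)) ≤ C₁ + 1 := le_trans h6 h1
      rw [mul_one_div] at h7
      calc s k = n * (s k / n) := by field_simp
        _ ≤ n * (C₁ + 1) := by
            apply mul_le_mul_of_nonneg_left h7 hnR.le
    -- extract convergent subsequence
    have hK : IsCompact (stdSimplex ℝ (Fin n) ×ˢ Set.Icc (0:ℝ) B) :=
      (isCompact_stdSimplex _ _).prod isCompact_Icc
    obtain ⟨⟨w, lam⟩, hmem, φ, hφ, hconv⟩ :=
      hK.tendsto_subseq (x := fun k => (u k, s k)) (fun k => ⟨humem k, hsB k⟩)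
    have hu_conv : Tendsto (fun k => u (φ k)) atTop (nhds w) :=
      (continuous_fst.tendsto _).comp hconv
    have hs_conv : Tendsto (fun k => s (φ k)) atTop (nhds lam) :=
      (continuous_snd.tendsto _).comp hconv
    have hε0 : Tendsto (fun k => 1/((φ k : ℝ)+1)) atTop (nhds 0) :=
      tendsto_one_div_add_atTop_nhds_zero_nat.comp hφ.tendsto_atTop
    have hw0 : (0:Fin n → ℝ) ≤ w := fun i => hmem.1.1 i
    have hwsum : ∑ i, w i = 1 := hmem.1.2
    have hlam0 : 0 ≤ lam := hmem.2.1
    -- the limit is an eigenvector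
    have heig : h w = lam • w := by
      funext i
      have hui_conv : Tendsto (fun k => u (φ k) i) atTop (nhds (w i)) :=
        ((continuous_apply i).tendsto _).comp hu_conv
      have hlo_conv : Tendsto (fun k => s (φ k) * u (φ k) i - 1/((φ k : ℝ)+1))
          atTop (nhds (lam * w i)) := by
        have := (hs_conv.mul hui_conv).sub hε0
        simpa using this
      have hup_conv : Tendsto (fun k => Real.exp (1/((φ k : ℝ)+1)) * (s (φ k) * u (φ k) i))
          atTop (nhds (lam * w i)) := by
        have hexp : Tendsto (fun k => Real.exp (1/((φ k : ℝ)+1))) atTop (nhds 1) := by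
          have := (Real.continuous_exp.tendsto 0).comp hε0
          simpa [Function.comp_def] using this
        have := hexp.mul (hs_conv.mul hui_conv)
        simpa using this
      have hsq : Tendsto (fun k => h (u (φ k)) i) atTop (nhds (lam * w i)) := by
        apply tendsto_of_tendsto_of_tendsto_of_le_of_le hlo_conv hup_conv
        · intro k
          have := hlow (φ k) i
          linarith
        · intro k
          have := hupp (φ k) i
          have hεpos : 0 < 1/((φ k : ℝ)+1) := by positivity
          linarith
      have hcts : Tendsto (fun k => h (u (φ k)) i) atTop (nhds (h w i)) := by
        have hthin : Tendsto (fun k => u (φ k)) atTop (nhdsWithin w {v : Fin n → ℝ | 0 ≤ v}) :=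
          tendsto_nhdsWithin_iff.2 ⟨hu_conv, Eventually.of_forall fun k =>
            (show u (φ k) ∈ {v : Fin n → ℝ | 0 ≤ v} from fun i => (hu (φ k) i).le)⟩
        have := ((hcont w hw0).tendsto.comp hthin)
        exact ((continuous_apply i).tendsto _).comp this
      have := tendsto_nhds_unique hcts hsq
      simpa using this
    have hwne : w ≠ 0 := by
      intro hw
      rw [hw] at hwsum
      simp at hwsum
    have hlamE : lam ∈ E := ⟨hlam0, w, hw0, hwne, heig⟩
    -- sInf C ≤ lam
    have hmemC : ∀ k, Real.exp (1/((φ k : ℝ)+1)) * s (φ k) ∈ C := by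
      intro k
      refine ⟨mul_pos (Real.exp_pos _) (hs (φ k)), u (φ k), hu (φ k), ?_⟩
      intro i
      have := hupp (φ k) i
      have hεpos : 0 < 1/((φ k : ℝ)+1) := by positivity
      simp only [Pi.smul_apply, smul_eq_mul]
      calc h (u (φ k)) i ≤ h (u (φ k)) i + 1/((φ k : ℝ)+1) := by linarith
        _ ≤ Real.exp (1/((φ k : ℝ)+1)) * (s (φ k) * u (φ k) i) := this
        _ = Real.exp (1/((φ k : ℝ)+1)) * s (φ k) * u (φ k) i := by ring
    have hInfle : sInf C ≤ lam := by
      have hT : Tendsto (fun k => Real.exp (1/((φ k : ℝ)+1)) * s (φ k)) atTop (nhds lam) := by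
        have hexp : Tendsto (fun k => Real.exp (1/((φ k : ℝ)+1))) atTop (nhds 1) := by
          have := (Real.continuous_exp.tendsto 0).comp hε0
          simpa [Function.comp_def] using this
        have := hexp.mul hs_conv
        simpa using this
      exact ge_of_tendsto' hT fun k => csInf_le hCbdd (hmemC k)
    -- comparison: every element of E is at most every element of C
    have hEC : ∀ a ∈ E, ∀ b ∈ C, a ≤ b := by
      rintro a ⟨-, v, hv0, hvne, hev⟩ b ⟨-, u', hu', hcw⟩
      exact compare h hhom hmono a v hv0 hvne hev b u' hu' hcw
    apply le_antisymm
    · exact le_csInf ⟨c₀, hc₀⟩ fun b hb => csSup_le ⟨lam, hlamE⟩ fun a ha => hEC a ha b hb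
    · exact le_trans hInfle (le_csSup ⟨c₀, fun a ha => hEC a ha c₀ hc₀⟩ hlamE)
end

section
/- Let h and h_π, π in a finite set Π, be continuous, positively homogeneous, order-preserving self-maps of ℝ₊ⁿ with h(v) = max_{π∈Π} h_π(v) componentwise for all v ∈ ℝ₊ⁿ, the maximum being attained by a single π for each v. Then the Collatz–Wielandt spectral radius of h equals the maximum over π ∈ Π of the Collatz–Wielandt spectral radii of the h_π. -/
open Finset Set Filter Topology

namespace CWaux

variable {n : ℕ}

/-- The set whose infimum defines the Collatz–Wielandt spectral radius. -/
def cwSet (g : (Fin n → ℝ) → (Fin n → ℝ)) : Set ℝ :=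
  {lam : ℝ | 0 < lam ∧ ∃ v : Fin n → ℝ, (∀ i, 0 < v i) ∧ g v ≤ lam • v}

lemma cwSet_bddBelow (g : (Fin n → ℝ) → (Fin n → ℝ)) : BddBelow (cwSet g) :=
  ⟨0, fun _ hx => hx.1.le⟩

lemma cwSet_nonempty (g : (Fin n → ℝ) → (Fin n → ℝ)) (hg : (0 : Fin n → ℝ) ≤ g 1) :
    (cwSet g).Nonempty := by
  have hsum : 0 ≤ ∑ i, g 1 i := Finset.sum_nonneg fun i _ => hg i
  refine ⟨1 + ∑ i, g 1 i, by linarith, 1, fun i => one_pos, fun i => ?_⟩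
  have h1 : g 1 i ≤ ∑ j, g 1 j :=
    Finset.single_le_sum (f := fun j => g 1 j) (fun j _ => hg j) (Finset.mem_univ i)
  simpa using by linarith

/-- Comparison: an eigen-like lower inequality with a nonzero nonnegative vector is
bounded by any strict super-eigen pair. -/
lemma cw_comparison (g : (Fin n → ℝ) → (Fin n → ℝ))
    (hmono : ∀ v w : Fin n → ℝ, 0 ≤ v → v ≤ w → g v ≤ g w)
    (hhom : ∀ t : ℝ, 0 < t → ∀ v : Fin n → ℝ, 0 ≤ v → g (t • v) = t • g v)
    {u : Fin n → ℝ} (hu : 0 ≤ u) {i₀ : Fin n} (hu0 : 0 < u i₀)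
    {μ : ℝ} (heig : μ • u ≤ g u)
    {lam : ℝ} {w : Fin n → ℝ} (hw : ∀ i, 0 < w i) (hgw : g w ≤ lam • w) :
    μ ≤ lam := by
  have hne : (Finset.univ : Finset (Fin n)).Nonempty := ⟨i₀, Finset.mem_univ _⟩
  set t := Finset.univ.sup' hne (fun i => u i / w i) with ht
  have htpos : 0 < t :=
    lt_of_lt_of_le (div_pos hu0 (hw i₀))
      (Finset.le_sup' (fun i => u i / w i) (Finset.mem_univ i₀))
  have hutw : u ≤ t • w := by
    intro i
    have := Finset.le_sup' (fun i => u i / w i) (Finset.mem_univ i)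
    rw [Pi.smul_apply, smul_eq_mul]
    exact (div_le_iff₀ (hw i)).mp this
  obtain ⟨i₁, -, hi₁⟩ := Finset.exists_mem_eq_sup' hne (fun i => u i / w i)
  have hui₁ : u i₁ = t * w i₁ := (div_eq_iff (ne_of_gt (hw i₁))).mp hi₁.symm
  have hupos : 0 < u i₁ := by rw [hui₁]; exact mul_pos htpos (hw i₁)
  have h1 : μ * u i₁ ≤ g u i₁ := by simpa using heig i₁
  have h2 : g u i₁ ≤ g (t • w) i₁ := hmono u (t • w) hu hutw i₁
  have h3 : g (t • w) i₁ = t * g w i₁ := by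
    rw [hhom t htpos w (fun i => (hw i).le)]; simp
  have h4 : g w i₁ ≤ lam * w i₁ := by simpa using hgw i₁
  have chain : μ * u i₁ ≤ lam * u i₁ := by
    have h5 : t * g w i₁ ≤ t * (lam * w i₁) := mul_le_mul_of_nonneg_left h4 htpos.le
    calc μ * u i₁ ≤ g u i₁ := h1
      _ ≤ g (t • w) i₁ := h2
      _ = t * g w i₁ := h3
      _ ≤ t * (lam * w i₁) := h5
      _ = lam * u i₁ := by rw [hui₁]; ring
  exact le_of_mul_le_mul_right chain hupos

/-- Extend a map continuous on the nonnegative orthant to a globally continuous map. -/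
lemma exists_cont_ext (h : (Fin n → ℝ) → (Fin n → ℝ))
    (hcont : ContinuousOn h {v : Fin n → ℝ | 0 ≤ v}) :
    ∃ h' : (Fin n → ℝ) → (Fin n → ℝ), Continuous h' ∧ ∀ v : Fin n → ℝ, 0 ≤ v → h' v = h v := by
  set q : (Fin n → ℝ) → (Fin n → ℝ) := fun v i => max (v i) 0 with hq
  have hq0 : ∀ v, (0 : Fin n → ℝ) ≤ q v := fun v i => le_max_right _ _
  have hqc : Continuous q := continuous_pi fun i => (continuous_apply i).max continuous_const
  refine ⟨h ∘ q, hcont.comp_continuous hqc (fun v => hq0 v), fun v hv => ?_⟩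
  have : q v = v := funext fun i => max_eq_left (hv i)
  simp [Function.comp, this]

/-- Existence of a strictly positive eigenvector for the `ε`-perturbed map
`v ↦ h v + ε (∑ v) • 1`, on the standard simplex. -/
lemma exists_pert_eigen (hn : 0 < n) (h : (Fin n → ℝ) → (Fin n → ℝ))
    (hmap : ∀ v : Fin n → ℝ, 0 ≤ v → 0 ≤ h v)
    (hcont : ContinuousOn h {v : Fin n → ℝ | 0 ≤ v})
    (hhom : ∀ t : ℝ, 0 < t → ∀ v : Fin n → ℝ, 0 ≤ v → h (t • v) = t • h v)
    (hmono : ∀ v w : Fin n → ℝ, 0 ≤ v → v ≤ w → h v ≤ h w)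
    {C : ℝ} (hC0 : 0 ≤ C)
    (hC : ∀ u ∈ stdSimplex ℝ (Fin n), ∀ i, h u i ≤ C)
    {ε : ℝ} (hε : 0 < ε) (hε1 : ε ≤ 1) :
    ∃ (μ : ℝ) (u : Fin n → ℝ), u ∈ stdSimplex ℝ (Fin n) ∧ (∀ i, 0 < u i) ∧
      ε ≤ μ ∧ μ ≤ n * (C + 1) ∧ ∀ i, h u i + ε = μ * u i := by
  obtain ⟨h', hh'c, hh'⟩ := exists_cont_ext h hcont
  have hn' : (0 : ℝ) < n := by exact_mod_cast hn
  set B : ℝ := n * (C + 1) with hB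
  have hB1 : 1 ≤ B := by
    have : (1 : ℝ) ≤ n := by exact_mod_cast hn
    nlinarith
  -- any sub-eigen pair on the simplex has μ ≤ B
  have hbound : ∀ (ν : ℝ) (u' : Fin n → ℝ), u' ∈ stdSimplex ℝ (Fin n) →
      (∀ i, ν * u' i ≤ h' u' i + ε) → ν ≤ B := by
    intro ν u' hu' hcon
    rcases le_or_gt ν 0 with hν | hν
    · linarith
    obtain ⟨i, hi⟩ : ∃ i, (n : ℝ)⁻¹ ≤ u' i := by
      by_contra hcontra
      push_neg at hcontra
      have hlt := Finset.sum_lt_sum_of_nonempty (⟨⟨0, hn⟩, Finset.mem_univ _⟩ :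
        (Finset.univ : Finset (Fin n)).Nonempty) (fun i _ => hcontra i)
      rw [hu'.2, Finset.sum_const, Finset.card_univ, Fintype.card_fin, nsmul_eq_mul,
        mul_inv_cancel₀ hn'.ne'] at hlt
      exact lt_irrefl 1 hlt
    have hh'u : h' u' = h u' := hh' u' (fun j => hu'.1 j)
    have h1 : ν * u' i ≤ C + 1 := by
      have h1a := hcon i
      rw [hh'u] at h1a
      have h1b := hC u' hu' i
      linarith
    have h2 : ν * (n : ℝ)⁻¹ ≤ C + 1 :=
      le_trans (mul_le_mul_of_nonneg_left hi hν.le) h1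
    have h3 := mul_le_mul_of_nonneg_left h2 hn'.le
    rw [show (n : ℝ) * (ν * (n : ℝ)⁻¹) = ν * ((n : ℝ) * (n : ℝ)⁻¹) by ring,
      mul_inv_cancel₀ hn'.ne', mul_one] at h3
    exact h3
  -- the compact set of sub-eigen pairs
  set E : Set (ℝ × (Fin n → ℝ)) :=
    {p | p.1 ∈ Set.Icc ε B ∧ p.2 ∈ stdSimplex ℝ (Fin n) ∧ ∀ i, p.1 * p.2 i ≤ h' p.2 i + ε}
    with hE
  have hEclosed : IsClosed E := by
    have h1 : IsClosed {p : ℝ × (Fin n → ℝ) | p.1 ∈ Set.Icc ε B} :=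
      isClosed_Icc.preimage continuous_fst
    have h2 : IsClosed {p : ℝ × (Fin n → ℝ) | p.2 ∈ stdSimplex ℝ (Fin n)} :=
      (isClosed_stdSimplex _ _).preimage continuous_snd
    have h3 : IsClosed {p : ℝ × (Fin n → ℝ) | ∀ i, p.1 * p.2 i ≤ h' p.2 i + ε} := by
      rw [Set.setOf_forall]
      exact isClosed_iInter fun i => isClosed_le
        (continuous_fst.mul ((continuous_apply i).comp continuous_snd))
        (((continuous_apply i).comp (hh'c.comp continuous_snd)).add continuous_const)
    exact h1.inter (h2.inter h3)
  have hEcompact : IsCompact E := by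
    have hsub : E ⊆ Set.Icc ε B ×ˢ stdSimplex ℝ (Fin n) := fun p hp => ⟨hp.1, hp.2.1⟩
    exact ((isCompact_Icc (a := ε) (b := B)).prod
      (isCompact_stdSimplex ℝ (Fin n))).of_isClosed_subset hEclosed hsub
  have hu₀S : (fun _ : Fin n => (n : ℝ)⁻¹) ∈ stdSimplex ℝ (Fin n) := by
    refine ⟨fun i => by positivity, ?_⟩
    rw [Finset.sum_const, Finset.card_univ, Fintype.card_fin, nsmul_eq_mul,
      mul_inv_cancel₀ hn'.ne']
  have hE0 : ((ε, fun _ : Fin n => (n : ℝ)⁻¹) : ℝ × (Fin n → ℝ)) ∈ E := by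
    refine ⟨⟨le_refl ε, le_trans hε1 hB1⟩, hu₀S, fun i => ?_⟩
    have hinv1 : (n : ℝ)⁻¹ ≤ 1 := by
      rw [inv_le_one_iff₀]; right; exact_mod_cast hn
    have hpos : 0 ≤ h' (fun _ : Fin n => (n : ℝ)⁻¹) i := by
      rw [hh' _ (fun j => by positivity)]
      exact hmap _ (fun j => by positivity) i
    nlinarith
  obtain ⟨p, hpE, hpmax⟩ := hEcompact.exists_isMaxOn ⟨_, hE0⟩
    (continuous_fst.continuousOn : ContinuousOn (fun p : ℝ × (Fin n → ℝ) => p.1) E)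
  obtain ⟨hμIcc, huS, hcon⟩ := hpE
  set μ := p.1 with hμd
  set u := p.2 with hud
  have hu0 : (0 : Fin n → ℝ) ≤ u := fun i => huS.1 i
  have hμpos : 0 < μ := lt_of_lt_of_le hε hμIcc.1
  have hcon' : ∀ i, μ * u i ≤ h u i + ε := by
    intro i; have := hcon i; rwa [hh' u hu0] at this
  -- the maximizer is an exact eigenpair
  have keyeq : ∀ i, h u i + ε = μ * u i := by
    by_contra hcontra
    push_neg at hcontra
    obtain ⟨j, hj⟩ := hcontra
    have hj' : μ * u j < h u j + ε := lt_of_le_of_ne (hcon' j) (Ne.symm hj)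
    clear hj
    set w : Fin n → ℝ := fun i => h u i + ε with hwdef
    have hw0 : ∀ i, 0 < w i := fun i => by
      have h1 := hmap u hu0 i
      rw [Pi.zero_apply] at h1
      have h2 : w i = h u i + ε := rfl
      linarith
    have hwge : ∀ i, μ * u i ≤ w i := hcon'
    set δ : ℝ := w j - μ * u j with hδdef
    have hδ : 0 < δ := by
      have h2 : δ = (h u j + ε) - μ * u j := rfl
      linarith [hj']
    set s : ℝ := ∑ i, w i with hsdef
    have hs : 0 < s :=
      Finset.sum_pos (fun i _ => hw0 i) ⟨⟨0, hn⟩, Finset.mem_univ _⟩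
    have hsge : μ + δ ≤ s := by
      have hle : ∀ i ∈ Finset.univ, μ * u i + (if i = j then δ else 0) ≤ w i := by
        intro i _
        by_cases hij : i = j
        · subst hij
          rw [if_pos rfl]
          have h2 : δ = w i - μ * u i := rfl
          linarith
        · simp [hij, hwge i]
      have hsum := Finset.sum_le_sum hle
      rw [Finset.sum_add_distrib, Finset.sum_ite_eq' Finset.univ j (fun _ => δ),
        if_pos (Finset.mem_univ j), ← Finset.mul_sum, huS.2, mul_one] at hsum
      simpa [hsdef] using hsum
    have hC1 : (0 : ℝ) < C + 1 := by linarith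
    set η : ℝ := ε * δ / (C + 1) with hηdef
    have hη : 0 < η := by positivity
    have hwle : ∀ i, w i ≤ C + 1 := fun i => by
      have h1 := hC u huS i
      have h2 : w i = h u i + ε := rfl
      linarith
    have hmuw : μ • u ≤ w := by
      intro i; simpa using hwge i
    have hhw : ∀ i, μ * h u i ≤ h w i := by
      intro i
      have h1 : h (μ • u) ≤ h w := hmono (μ • u) w (smul_nonneg hμpos.le hu0) hmuw
      have h2 : h (μ • u) = μ • h u := hhom μ hμpos u hu0
      have := h1 i
      rw [h2] at this
      simpa using this
    have key : ∀ i, (μ + η) * w i ≤ h w i + ε * s := by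
      intro i
      have h1 : μ * h u i ≤ h w i := hhw i
      have h2 : ε * (μ + δ) ≤ ε * s := mul_le_mul_of_nonneg_left hsge hε.le
      have h3 : η * w i ≤ ε * δ := by
        have := mul_le_mul_of_nonneg_left (hwle i) hη.le
        calc η * w i ≤ η * (C + 1) := this
          _ = ε * δ := by rw [hηdef]; field_simp
      have : (μ + η) * w i = μ * w i + η * w i := by ring
      rw [this]
      have hμw : μ * w i = μ * h u i + μ * ε := by
        have h2 : w i = h u i + ε := rfl
        rw [h2]; ring
      nlinarith [h1, h2, h3, hμw]
    -- normalize and contradict maximality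
    set w' : Fin n → ℝ := s⁻¹ • w with hw'def
    have hw'S : w' ∈ stdSimplex ℝ (Fin n) := by
      constructor
      · intro i
        simp only [hw'def, Pi.smul_apply, smul_eq_mul]
        exact mul_nonneg (inv_nonneg.mpr hs.le) (hw0 i).le
      · simp only [hw'def, Pi.smul_apply, smul_eq_mul, ← Finset.mul_sum, ← hsdef]
        exact inv_mul_cancel₀ hs.ne'
    have hw'con : ∀ i, (μ + η) * w' i ≤ h' w' i + ε := by
      intro i
      have hw'0 : (0 : Fin n → ℝ) ≤ w' := fun i => by
        simp only [hw'def, Pi.zero_apply, Pi.smul_apply, smul_eq_mul]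
        exact mul_nonneg (inv_nonneg.mpr hs.le) (hw0 i).le
      rw [hh' w' hw'0]
      have hhw' : h w' = s⁻¹ • h w := by
        rw [hw'def, hhom s⁻¹ (by positivity) w (fun i => (hw0 i).le)]
      rw [hhw']
      have := mul_le_mul_of_nonneg_left (key i) (inv_nonneg.mpr hs.le)
      calc (μ + η) * w' i = s⁻¹ * ((μ + η) * w i) := by
            simp only [hw'def, Pi.smul_apply, smul_eq_mul]; ring
        _ ≤ s⁻¹ * (h w i + ε * s) := this
        _ = s⁻¹ * h w i + ε * (s⁻¹ * s) := by ring
        _ = (s⁻¹ • h w) i + ε := by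
            rw [inv_mul_cancel₀ hs.ne', mul_one]; simp
    have hmemE : ((μ + η, w') : ℝ × (Fin n → ℝ)) ∈ E := by
      refine ⟨⟨?_, hbound (μ + η) w' hw'S hw'con⟩, hw'S, hw'con⟩
      show ε ≤ μ + η
      linarith [hμIcc.1]
    have := hpmax hmemE
    simp only at this
    have : μ + η ≤ μ := this
    linarith
  -- strict positivity of the eigenvector
  have hupos : ∀ i, 0 < u i := by
    intro i
    have h1 : 0 < μ * u i := by
      rw [← keyeq i]
      have h2 := hmap u hu0 i
      rw [Pi.zero_apply] at h2
      linarith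
    rcases mul_pos_iff.mp h1 with ⟨_, hpos⟩ | ⟨hneg, _⟩
    · exact hpos
    · linarith
  exact ⟨μ, u, huS, hupos, hμIcc.1, hμIcc.2, keyeq⟩


end CWaux

open CWaux Finset Set Filter Topology

/-- The Collatz–Wielandt spectral radius of a self-map of the nonnegative
orthant of `ℝⁿ`. -/
noncomputable def collatzWielandt {n : ℕ} (g : (Fin n → ℝ) → (Fin n → ℝ)) : ℝ :=
  sInf {lam : ℝ | 0 < lam ∧ ∃ v : Fin n → ℝ, (∀ i, 0 < v i) ∧ g v ≤ lam • v}

lemma collatzWielandt_eq {n : ℕ} (g : (Fin n → ℝ) → (Fin n → ℝ)) :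
    collatzWielandt g = sInf (cwSet g) := rfl

/-- if `h` is the pointwise maximum (attained at each point) of a
finite family `H π` of continuous, positively homogeneous, order-preserving
self-maps of the nonnegative orthant, then the spectral radius of `h` is the
maximum of the spectral radii of the `H π`. -/
theorem collatzWielandt_of_max {n : ℕ} {P : Type*} [Fintype P] [Nonempty P]
    (h : (Fin n → ℝ) → (Fin n → ℝ)) (H : P → (Fin n → ℝ) → (Fin n → ℝ))
    (hmap : ∀ v : Fin n → ℝ, 0 ≤ v → 0 ≤ h v)
    (hcont : ContinuousOn h {v : Fin n → ℝ | 0 ≤ v})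
    (hhom : ∀ t : ℝ, 0 < t → ∀ v : Fin n → ℝ, 0 ≤ v → h (t • v) = t • h v)
    (hmono : ∀ v w : Fin n → ℝ, 0 ≤ v → v ≤ w → h v ≤ h w)
    (hmapP : ∀ π, ∀ v : Fin n → ℝ, 0 ≤ v → 0 ≤ H π v)
    (hcontP : ∀ π, ContinuousOn (H π) {v : Fin n → ℝ | 0 ≤ v})
    (hhomP : ∀ π, ∀ t : ℝ, 0 < t → ∀ v : Fin n → ℝ, 0 ≤ v → H π (t • v) = t • H π v)
    (hmonoP : ∀ π, ∀ v w : Fin n → ℝ, 0 ≤ v → v ≤ w → H π v ≤ H π w)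
    (hge : ∀ (π : P) (v : Fin n → ℝ), 0 ≤ v → H π v ≤ h v)
    (hatt : ∀ v : Fin n → ℝ, 0 ≤ v → ∃ π : P, h v = H π v) :
    collatzWielandt h =
      Finset.univ.sup' Finset.univ_nonempty (fun π => collatzWielandt (H π)) := by
  classical
  have hS_h_ne : (cwSet h).Nonempty := cwSet_nonempty h (hmap 1 (fun i => zero_le_one))
  -- the easy direction
  have easy : Finset.univ.sup' Finset.univ_nonempty (fun π => collatzWielandt (H π)) ≤
      collatzWielandt h := by
    apply Finset.sup'_le
    intro π _
    rw [collatzWielandt_eq, collatzWielandt_eq]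
    apply csInf_le_csInf (cwSet_bddBelow (H π)) hS_h_ne
    rintro lam ⟨hpos, v, hv, hle⟩
    exact ⟨hpos, v, hv, le_trans (hge π v (fun i => (hv i).le)) hle⟩
  rcases Nat.eq_zero_or_pos n with hn0 | hn
  · -- degenerate case `n = 0`
    subst hn0
    have hset : ∀ g : (Fin 0 → ℝ) → (Fin 0 → ℝ), cwSet g = Set.Ioi 0 := by
      intro g
      ext lam
      constructor
      · rintro ⟨h1, -⟩; exact h1
      · intro h1
        exact ⟨h1, (fun i => i.elim0), fun i => i.elim0, fun i => i.elim0⟩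
    have hzero : ∀ g : (Fin 0 → ℝ) → (Fin 0 → ℝ), collatzWielandt g = 0 := by
      intro g; rw [collatzWielandt_eq, hset, csInf_Ioi]
    rw [hzero h,
      show (fun π => collatzWielandt (H π)) = fun _ => (0 : ℝ) from
        funext fun π => hzero (H π),
      Finset.sup'_const]
  · -- main case `0 < n`
    -- a bound for `h` on the simplex
    obtain ⟨C0, hC0b⟩ := (isCompact_stdSimplex ℝ (Fin n)).exists_bound_of_continuousOn
      (hcont.mono (fun u hu i => hu.1 i))
    set C : ℝ := max C0 0 with hCdef
    have hC : ∀ u ∈ stdSimplex ℝ (Fin n), ∀ i, h u i ≤ C := by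
      intro u hu i
      calc h u i ≤ ‖h u i‖ := le_abs_self _
        _ ≤ ‖h u‖ := norm_le_pi_norm (h u) i
        _ ≤ C0 := hC0b u hu
        _ ≤ C := le_max_left _ _
    -- perturbed eigenvectors
    have hex : ∀ k : ℕ, ∃ (μ : ℝ) (u : Fin n → ℝ), u ∈ stdSimplex ℝ (Fin n) ∧
        (∀ i, 0 < u i) ∧ ((k : ℝ) + 1)⁻¹ ≤ μ ∧ μ ≤ n * (C + 1) ∧
        ∀ i, h u i + ((k : ℝ) + 1)⁻¹ = μ * u i := by
      intro k
      have hεpos : (0 : ℝ) < ((k : ℝ) + 1)⁻¹ := by positivity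
      have hεle : ((k : ℝ) + 1)⁻¹ ≤ 1 := by
        rw [inv_le_one_iff₀]; right; linarith [Nat.cast_nonneg (α := ℝ) k]
      exact exists_pert_eigen hn h hmap hcont hhom hmono (le_max_right _ _) hC hεpos hεle
    choose μs us husS hupos hμlb hμub heqs using hex
    -- a convergent subsequence
    have hK : IsCompact (Set.Icc (0 : ℝ) (n * (C + 1)) ×ˢ stdSimplex ℝ (Fin n)) :=
      isCompact_Icc.prod (isCompact_stdSimplex ℝ (Fin n))
    have hmem : ∀ k : ℕ, ((μs k, us k) : ℝ × (Fin n → ℝ)) ∈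
        Set.Icc (0 : ℝ) (n * (C + 1)) ×ˢ stdSimplex ℝ (Fin n) := by
      intro k
      refine ⟨⟨le_trans (by positivity) (hμlb k), hμub k⟩, husS k⟩
    obtain ⟨q, hqK, φ, hφ, hlim⟩ := hK.tendsto_subseq hmem
    set μ : ℝ := q.1 with hμdef
    set u : Fin n → ℝ := q.2 with hudef
    have huS : u ∈ stdSimplex ℝ (Fin n) := hqK.2
    have hu0 : (0 : Fin n → ℝ) ≤ u := fun i => huS.1 i
    have hμlim : Tendsto (fun k => μs (φ k)) atTop (𝓝 μ) :=
      (continuous_fst.tendsto q).comp hlim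
    have huslim : Tendsto (fun k => us (φ k)) atTop (𝓝 u) :=
      (continuous_snd.tendsto q).comp hlim
    have hεlim : Tendsto (fun k => ((φ k : ℝ) + 1)⁻¹) atTop (𝓝 0) := by
      have h1 : Tendsto (fun m : ℕ => ((m : ℝ) + 1)⁻¹) atTop (𝓝 0) := by
        simpa [one_div] using tendsto_one_div_add_atTop_nhds_zero_nat (𝕜 := ℝ)
      exact h1.comp hφ.tendsto_atTop
    -- the limit is an eigenvector of `h`
    obtain ⟨h', hh'c, hh'⟩ := exists_cont_ext h hcont
    have heq2 : ∀ i, μ * u i = h u i := by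
      intro i
      have t1 : Tendsto (fun k => μs (φ k) * us (φ k) i) atTop (𝓝 (μ * u i)) :=
        hμlim.mul (((continuous_apply i).tendsto u).comp huslim)
      have t2 : Tendsto (fun k => h' (us (φ k)) i + ((φ k : ℝ) + 1)⁻¹) atTop
          (𝓝 (h' u i + 0)) :=
        (((continuous_apply i).comp hh'c).tendsto u).comp huslim |>.add hεlim
      rw [add_zero, hh' u hu0] at t2
      have hfeq : (fun k => h' (us (φ k)) i + ((φ k : ℝ) + 1)⁻¹)
          = fun k => μs (φ k) * us (φ k) i := by
        funext k
        rw [hh' (us (φ k)) (fun j => (husS (φ k)).1 j)]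
        exact heqs (φ k) i
      rw [hfeq] at t2
      exact tendsto_nhds_unique t1 t2
    -- `collatzWielandt h ≤ μ`
    have hcwle : collatzWielandt h ≤ μ := by
      refine ge_of_tendsto hμlim (Filter.Eventually.of_forall fun k => ?_)
      rw [collatzWielandt_eq]
      apply csInf_le (cwSet_bddBelow h)
      have hεpos : (0 : ℝ) < ((φ k : ℝ) + 1)⁻¹ := by positivity
      refine ⟨lt_of_lt_of_le hεpos (hμlb (φ k)), us (φ k), hupos (φ k), fun i => ?_⟩
      rw [Pi.smul_apply, smul_eq_mul, ← heqs (φ k) i]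
      linarith
    -- the limit eigenvector is nonzero
    obtain ⟨i₀, hi₀⟩ : ∃ i, 0 < u i := by
      by_contra hcon
      push_neg at hcon
      have h2 := huS.2
      rw [Finset.sum_congr rfl (fun i _ => le_antisymm (hcon i) (huS.1 i))] at h2
      simp at h2
    -- transfer to an attaining policy
    obtain ⟨σ, hσ⟩ := hatt u hu0
    have heig : μ • u ≤ H σ u := by
      intro i
      rw [Pi.smul_apply, smul_eq_mul, heq2 i, hσ]
    have hfin : μ ≤ collatzWielandt (H σ) := by
      rw [collatzWielandt_eq]
      refine le_csInf (cwSet_nonempty (H σ) (hmapP σ 1 (fun i => zero_le_one))) ?_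
      rintro b ⟨hbpos, w, hw, hgw⟩
      exact cw_comparison (H σ) (hmonoP σ) (hhomP σ) hu0 hi₀ heig hw hgw
    exact le_antisymm
      (le_trans hcwle (le_trans hfin (Finset.le_sup' (fun π => collatzWielandt (H π)) (Finset.mem_univ σ)))) easy
end

section
/- Let M be a finite rectangular set of n×n row-stochastic (Markov) matrices (i.e., M is the Cartesian product of its sets of rows), each having a unique final (recurrent) class containing a fixed state c. Let M_(c) denote M with its c-th column set to zero, and define f̄(v) = max_{M∈M} M_(c)v componentwise. Then the equation φ = 1 + f̄(φ) has a unique solution φ ∈ ℝⁿ, and φ_i equals the maximal expected first return/hitting time to c over the matrices in M, i.e. φ_i = max_{M∈M} T_{ic}(M). -/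
/-- `M` with its `c`-th column set to zero. -/
def colZero {n : ℕ} (M : Matrix (Fin n) (Fin n) ℝ) (c : Fin n) :
    Matrix (Fin n) (Fin n) ℝ :=
  Matrix.of fun i j => if j = c then 0 else M i j

/-- The expected first return/hitting time (at times `≥ 1`) to state `c`
starting from `i`, for the Markov chain with transition matrix `M`:
`T_{ic}(M) = Σ_{k≥0} P(τ_c > k | X_0 = i) = Σ_{k≥0} ((M_(c))^k 1)_i`. -/
noncomputable def expReturnTime {n : ℕ} (M : Matrix (Fin n) (Fin n) ℝ)
    (c i : Fin n) : ℝ :=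
  ∑' k : ℕ, ((colZero M c) ^ k).mulVec (fun _ => 1) i


open Filter Topology

namespace RenewalAux

variable {n : ℕ}

lemma pow_entry_nonneg {Q : Matrix (Fin n) (Fin n) ℝ} (hQ : ∀ i j, 0 ≤ Q i j)
    (k : ℕ) : ∀ i j, 0 ≤ (Q ^ k) i j := by
  induction k with
  | zero =>
    intro i j
    simp [Matrix.one_apply]
    split <;> norm_num
  | succ k ih =>
    intro i j
    rw [pow_succ, Matrix.mul_apply]
    exact Finset.sum_nonneg fun l _ => mul_nonneg (ih i l) (hQ l j)

lemma mulVec_apply (Q : Matrix (Fin n) (Fin n) ℝ) (v : Fin n → ℝ) (i : Fin n) :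
    Q.mulVec v i = ∑ j, Q i j * v j := rfl

lemma mulVec_mono {Q : Matrix (Fin n) (Fin n) ℝ} (hQ : ∀ i j, 0 ≤ Q i j)
    {v w : Fin n → ℝ} (h : ∀ j, v j ≤ w j) (i : Fin n) :
    Q.mulVec v i ≤ Q.mulVec w i := by
  rw [mulVec_apply, mulVec_apply]
  exact Finset.sum_le_sum fun j _ => mul_le_mul_of_nonneg_left (h j) (hQ i j)

/-- `(Q^K u)_i → 0` when `Q^K 1 → 0` entrywise (from summability). -/
lemma powVec_tendsto_zero {Q : Matrix (Fin n) (Fin n) ℝ} (hQ : ∀ i j, 0 ≤ Q i j)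
    (hsum : ∀ i, Summable fun k : ℕ => (Q ^ k).mulVec (fun _ => 1) i)
    (u : Fin n → ℝ) (i : Fin n) :
    Tendsto (fun K : ℕ => (Q ^ K).mulVec u i) atTop (𝓝 0) := by
  set C : ℝ := ∑ j, |u j| with hC
  have hCb : ∀ j, |u j| ≤ C := by
    intro j
    exact Finset.single_le_sum (f := fun j => |u j|) (fun j _ => abs_nonneg _) (Finset.mem_univ j)
  have hbound : ∀ K : ℕ, ‖(Q ^ K).mulVec u i‖ ≤ C * (Q ^ K).mulVec (fun _ => 1) i := by
    intro K
    rw [mulVec_apply, mulVec_apply]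
    calc |∑ j, (Q ^ K) i j * u j| ≤ ∑ j, |(Q ^ K) i j * u j| := Finset.abs_sum_le_sum_abs _ _
      _ ≤ ∑ j, C * ((Q ^ K) i j * 1) := by
          apply Finset.sum_le_sum
          intro j _
          rw [abs_mul, abs_of_nonneg (pow_entry_nonneg hQ K i j), mul_one, mul_comm]
          exact mul_le_mul_of_nonneg_right (hCb j) (pow_entry_nonneg hQ K i j)
      _ = C * ∑ j, (Q ^ K) i j * 1 := by rw [Finset.mul_sum]
  have h0 : Tendsto (fun K : ℕ => C * (Q ^ K).mulVec (fun _ => 1) i) atTop (𝓝 (C * 0)) :=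
    Tendsto.const_mul C ((hsum i).tendsto_atTop_zero)
  rw [mul_zero] at h0
  exact squeeze_zero_norm hbound h0

/-- If `u ≤ 1 + Q u` pointwise then `u ≤ T` where `T_i = Σ' (Q^k 1)_i`. -/
lemma le_T {Q : Matrix (Fin n) (Fin n) ℝ} (hQ : ∀ i j, 0 ≤ Q i j)
    (hsum : ∀ i, Summable fun k : ℕ => (Q ^ k).mulVec (fun _ => 1) i)
    {u : Fin n → ℝ} (h : ∀ i, u i ≤ 1 + Q.mulVec u i) (i : Fin n) :
    u i ≤ ∑' k : ℕ, (Q ^ k).mulVec (fun _ => 1) i := by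
  have key : ∀ K : ℕ, ∀ i, u i ≤
      (∑ m ∈ Finset.range K, (Q ^ m).mulVec (fun _ => 1) i) + (Q ^ K).mulVec u i := by
    intro K
    induction K with
    | zero => intro i; simp [Matrix.one_mulVec]
    | succ K ih =>
      intro i
      have step : (Q ^ K).mulVec u i ≤
          (Q ^ K).mulVec (fun _ => 1) i + (Q ^ (K + 1)).mulVec u i := by
        have h1 : (Q ^ K).mulVec u i ≤ (Q ^ K).mulVec (fun j => 1 + Q.mulVec u j) i :=
          mulVec_mono (pow_entry_nonneg hQ K) h i
        have h2 : (Q ^ K).mulVec (fun j => 1 + Q.mulVec u j) i =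
            (Q ^ K).mulVec (fun _ => 1) i + (Q ^ (K + 1)).mulVec u i := by
          have : (fun j => (1 : ℝ) + Q.mulVec u j) = (fun _ => (1:ℝ)) + Q.mulVec u := rfl
          rw [this, Matrix.mulVec_add, Pi.add_apply, pow_succ, ← Matrix.mulVec_mulVec]
        rw [h2] at h1; exact h1
      calc u i ≤ (∑ m ∈ Finset.range K, (Q ^ m).mulVec (fun _ => 1) i) + (Q ^ K).mulVec u i :=
            ih i
        _ ≤ (∑ m ∈ Finset.range K, (Q ^ m).mulVec (fun _ => 1) i) +
            ((Q ^ K).mulVec (fun _ => 1) i + (Q ^ (K + 1)).mulVec u i) := by linarith [step]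
        _ = (∑ m ∈ Finset.range (K + 1), (Q ^ m).mulVec (fun _ => 1) i) +
            (Q ^ (K + 1)).mulVec u i := by rw [Finset.sum_range_succ]; ring
  have hlim : Tendsto (fun K : ℕ =>
      (∑ m ∈ Finset.range K, (Q ^ m).mulVec (fun _ => 1) i) + (Q ^ K).mulVec u i) atTop
      (𝓝 ((∑' k : ℕ, (Q ^ k).mulVec (fun _ => 1) i) + 0)) :=
    Tendsto.add (hsum i).hasSum.tendsto_sum_nat (powVec_tendsto_zero hQ hsum u i)
  rw [add_zero] at hlim
  exact ge_of_tendsto' hlim (fun K => key K i)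

/-- If `u ≥ 1 + Q u` pointwise then `u ≥ T`. -/
lemma T_le {Q : Matrix (Fin n) (Fin n) ℝ} (hQ : ∀ i j, 0 ≤ Q i j)
    (hsum : ∀ i, Summable fun k : ℕ => (Q ^ k).mulVec (fun _ => 1) i)
    {u : Fin n → ℝ} (h : ∀ i, 1 + Q.mulVec u i ≤ u i) (i : Fin n) :
    (∑' k : ℕ, (Q ^ k).mulVec (fun _ => 1) i) ≤ u i := by
  have key : ∀ K : ℕ, ∀ i,
      (∑ m ∈ Finset.range K, (Q ^ m).mulVec (fun _ => 1) i) + (Q ^ K).mulVec u i ≤ u i := by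
    intro K
    induction K with
    | zero => intro i; simp [Matrix.one_mulVec]
    | succ K ih =>
      intro i
      have step : (Q ^ K).mulVec (fun _ => 1) i + (Q ^ (K + 1)).mulVec u i ≤
          (Q ^ K).mulVec u i := by
        have h1 : (Q ^ K).mulVec (fun j => 1 + Q.mulVec u j) i ≤ (Q ^ K).mulVec u i :=
          mulVec_mono (pow_entry_nonneg hQ K) h i
        have h2 : (Q ^ K).mulVec (fun j => 1 + Q.mulVec u j) i =
            (Q ^ K).mulVec (fun _ => 1) i + (Q ^ (K + 1)).mulVec u i := by
          have : (fun j => (1 : ℝ) + Q.mulVec u j) = (fun _ => (1:ℝ)) + Q.mulVec u := rfl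
          rw [this, Matrix.mulVec_add, Pi.add_apply, pow_succ, ← Matrix.mulVec_mulVec]
        rw [h2] at h1; exact h1
      calc (∑ m ∈ Finset.range (K + 1), (Q ^ m).mulVec (fun _ => 1) i) +
            (Q ^ (K + 1)).mulVec u i
          = (∑ m ∈ Finset.range K, (Q ^ m).mulVec (fun _ => 1) i) +
            ((Q ^ K).mulVec (fun _ => 1) i + (Q ^ (K + 1)).mulVec u i) := by
            rw [Finset.sum_range_succ]; ring
        _ ≤ (∑ m ∈ Finset.range K, (Q ^ m).mulVec (fun _ => 1) i) + (Q ^ K).mulVec u i := by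
            linarith [step]
        _ ≤ u i := ih i
  have hlim : Tendsto (fun K : ℕ =>
      (∑ m ∈ Finset.range K, (Q ^ m).mulVec (fun _ => 1) i) + (Q ^ K).mulVec u i) atTop
      (𝓝 ((∑' k : ℕ, (Q ^ k).mulVec (fun _ => 1) i) + 0)) :=
    Tendsto.add (hsum i).hasSum.tendsto_sum_nat (powVec_tendsto_zero hQ hsum u i)
  rw [add_zero] at hlim
  exact le_of_tendsto' hlim (fun K => key K i)

/-- The renewal identity `T = 1 + Q T`. -/
lemma T_renewal {Q : Matrix (Fin n) (Fin n) ℝ}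
    (hsum : ∀ i, Summable fun k : ℕ => (Q ^ k).mulVec (fun _ => 1) i) (i : Fin n) :
    (∑' k : ℕ, (Q ^ k).mulVec (fun _ => 1) i) =
      1 + Q.mulVec (fun j => ∑' k : ℕ, (Q ^ k).mulVec (fun _ => 1) j) i := by
  rw [Summable.tsum_eq_zero_add (hsum i)]
  congr 1
  · simp [Matrix.one_mulVec]
  have hshift : ∀ k : ℕ, (Q ^ (k + 1)).mulVec (fun _ => (1:ℝ)) i
      = ∑ j, Q i j * (Q ^ k).mulVec (fun _ => 1) j := by
    intro k
    rw [pow_succ', ← Matrix.mulVec_mulVec, mulVec_apply]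
  calc (∑' k : ℕ, (Q ^ (k + 1)).mulVec (fun _ => (1:ℝ)) i)
      = ∑' k : ℕ, ∑ j, Q i j * (Q ^ k).mulVec (fun _ => 1) j := by
        exact tsum_congr hshift
    _ = ∑ j, ∑' k : ℕ, Q i j * (Q ^ k).mulVec (fun _ => 1) j := by
        exact Summable.tsum_finsetSum (fun j _ => (hsum j).mul_left _)
    _ = ∑ j, Q i j * ∑' k : ℕ, (Q ^ k).mulVec (fun _ => 1) j := by
        exact Finset.sum_congr rfl fun j _ => tsum_mul_left
    _ = Q.mulVec (fun j => ∑' k : ℕ, (Q ^ k).mulVec (fun _ => 1) j) i := rfl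

/-- Finite directed sets have upper bounds inside. -/
lemma exists_top {α : Type*} [DecidableEq α] (r : α → α → Prop)
    (htrans : ∀ a b c, r a b → r b c → r a c)
    (S : Finset α) (hS : S.Nonempty)
    (hdir : ∀ a ∈ S, ∀ b ∈ S, ∃ p ∈ S, r a p ∧ r b p) :
    ∃ m ∈ S, ∀ a ∈ S, r a m := by
  suffices h : ∀ s : Finset α, (∀ x ∈ s, x ∈ S) → ∃ m ∈ S, ∀ a ∈ s, r a m by
    exact h S (fun x hx => hx)
  intro s
  induction s using Finset.induction_on with
  | empty => intro _; obtain ⟨m, hm⟩ := hS; exact ⟨m, hm, fun a ha => absurd ha (by simp)⟩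
  | @insert a s _ ih =>
    intro hsub
    obtain ⟨m, hmS, hm⟩ := ih (fun x hx => hsub x (Finset.mem_insert_of_mem hx))
    obtain ⟨p, hpS, hap, hmp⟩ := hdir a (hsub a (Finset.mem_insert_self a s)) m hmS
    refine ⟨p, hpS, fun b hb => ?_⟩
    rcases Finset.mem_insert.mp hb with rfl | hb
    · exact hap
    · exact htrans _ _ _ (hm b hb) hmp

end RenewalAux

/-- for a finite rectangular set `S` of Markov matrices, each
having finite expected return times to a fixed state `c` (equivalently, a
unique final class containing `c`), the equation `φ = 1 + f̄(φ)`, where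
`f̄(v)_i = max_{M ∈ S} (M_(c) v)_i`, has a unique solution `φ`, and this
solution satisfies `φ_i = max_{M ∈ S} T_{ic}(M)`. -/
theorem renewal_time_equation_unique_solution {n : ℕ} (c : Fin n)
    (S : Finset (Matrix (Fin n) (Fin n) ℝ)) (hS : S.Nonempty)
    (hpos : ∀ M ∈ S, ∀ i j, 0 ≤ M i j)
    (hstoch : ∀ M ∈ S, ∀ i, ∑ j, M i j = 1)
    (hrect : ∀ g : Fin n → Matrix (Fin n) (Fin n) ℝ, (∀ i, g i ∈ S) →
        (Matrix.of fun i j => g i i j) ∈ S)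
    (hfin : ∀ M ∈ S, ∀ i,
        Summable fun k : ℕ => ((colZero M c) ^ k).mulVec (fun _ => 1) i) :
    (∃! φ : Fin n → ℝ,
        ∀ i, φ i = 1 + S.sup' hS fun M => (colZero M c).mulVec φ i) ∧
    ∀ φ : Fin n → ℝ,
      (∀ i, φ i = 1 + S.sup' hS fun M => (colZero M c).mulVec φ i) →
      ∀ i, φ i = S.sup' hS fun M => expReturnTime M c i := by
  classical
  have hQpos : ∀ M ∈ S, ∀ i j, 0 ≤ colZero M c i j := by
    intro M hM i j
    simp only [colZero, Matrix.of_apply]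
    split
    · exact le_refl 0
    · exact hpos M hM i j
  set T : Matrix (Fin n) (Fin n) ℝ → Fin n → ℝ := fun M i => expReturnTime M c i with hTdef
  have hfix : ∀ M ∈ S, ∀ i, T M i = 1 + (colZero M c).mulVec (T M) i :=
    fun M hM i => RenewalAux.T_renewal (hfin M hM) i
  -- row-wise argmax via rectangularity
  have argmax : ∀ v : Fin n → ℝ, ∃ N ∈ S, ∀ i,
      (colZero N c).mulVec v i = S.sup' hS fun M => (colZero M c).mulVec v i := by
    intro v
    have hch : ∀ i : Fin n, ∃ M ∈ S,
        (S.sup' hS fun M => (colZero M c).mulVec v i) = (colZero M c).mulVec v i :=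
      fun i => Finset.exists_mem_eq_sup' hS _
    choose g hgS hg using hch
    refine ⟨Matrix.of fun i j => g i i j, hrect g hgS, fun i => ?_⟩
    rw [hg i]
    simp [colZero, Matrix.mulVec, dotProduct]
  -- directedness of achievable value vectors
  have hdir : ∀ A ∈ S, ∀ B ∈ S, ∃ P ∈ S,
      (∀ i, T A i ≤ T P i) ∧ (∀ i, T B i ≤ T P i) := by
    intro A hA B hB
    set g : Fin n → Matrix (Fin n) (Fin n) ℝ :=
      fun i => if T B i ≤ T A i then A else B with hg
    have hgS : ∀ i, g i ∈ S := by
      intro i; rw [hg]; dsimp only; split <;> assumption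
    set P := Matrix.of fun i j => g i i j with hP
    have hPS : P ∈ S := hrect g hgS
    set u : Fin n → ℝ := fun i => max (T A i) (T B i) with hu
    have hrow : ∀ i, (colZero P c).mulVec u i = (colZero (g i) c).mulVec u i := by
      intro i
      simp [hP, colZero, Matrix.mulVec, dotProduct]
    have hle : ∀ i, u i ≤ 1 + (colZero P c).mulVec u i := by
      intro i
      rw [hrow i, hg]
      dsimp only
      split
      · rename_i h
        have hui : u i = T A i := max_eq_left h
        have hmono := RenewalAux.mulVec_mono (hQpos A hA)
          (fun j => le_max_left (T A j) (T B j)) i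
        rw [hui, hfix A hA i]
        exact add_le_add_right hmono 1
      · rename_i h
        have hui : u i = T B i := max_eq_right (le_of_not_ge h)
        have hmono := RenewalAux.mulVec_mono (hQpos B hB)
          (fun j => le_max_right (T A j) (T B j)) i
        rw [hui, hfix B hB i]
        exact add_le_add_right hmono 1
    have huleP : ∀ i, u i ≤ T P i :=
      fun i => RenewalAux.le_T (hQpos P hPS) (hfin P hPS) hle i
    exact ⟨P, hPS, fun i => le_trans (le_max_left _ _) (huleP i),
      fun i => le_trans (le_max_right _ _) (huleP i)⟩
  obtain ⟨Mstar, hMstarS, hMstar⟩ := RenewalAux.exists_top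
    (fun A B => ∀ i, T A i ≤ T B i)
    (fun A B C hab hbc i => le_trans (hab i) (hbc i)) S hS hdir
  set ψ : Fin n → ℝ := T Mstar with hψ
  have hpsi_sup : ∀ i, ψ i = S.sup' hS fun M => expReturnTime M c i := by
    intro i
    refine le_antisymm (Finset.le_sup' (fun M => expReturnTime M c i) hMstarS) ?_
    exact Finset.sup'_le hS _ (fun M hM => hMstar M hM i)
  -- ψ is a fixed point
  have hfixpsi : ∀ i, ψ i = 1 + S.sup' hS fun M => (colZero M c).mulVec ψ i := by
    obtain ⟨N, hNS, hN⟩ := argmax ψ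
    have h1 : ∀ i, ψ i ≤ 1 + (colZero N c).mulVec ψ i := by
      intro i
      have hle : (colZero Mstar c).mulVec ψ i ≤
          S.sup' hS fun M => (colZero M c).mulVec ψ i :=
        Finset.le_sup' (fun M => (colZero M c).mulVec ψ i) hMstarS
      rw [hN i]
      calc ψ i = 1 + (colZero Mstar c).mulVec ψ i := hfix Mstar hMstarS i
        _ ≤ 1 + S.sup' hS fun M => (colZero M c).mulVec ψ i := add_le_add_right hle 1
    have h2 : ∀ i, ψ i ≤ T N i :=
      fun i => RenewalAux.le_T (hQpos N hNS) (hfin N hNS) h1 i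
    have h3 : ψ = T N := funext fun i => le_antisymm (h2 i) (hMstar N hNS i)
    intro i
    rw [← hN i]
    calc ψ i = 1 + (colZero N c).mulVec (T N) i := by rw [h3]; exact hfix N hNS i
      _ = 1 + (colZero N c).mulVec ψ i := by rw [← h3]
  -- any fixed point equals ψ
  have part2 : ∀ φ : Fin n → ℝ,
      (∀ i, φ i = 1 + S.sup' hS fun M => (colZero M c).mulVec φ i) →
      ∀ i, φ i = ψ i := by
    intro φ hφ
    have hge : ∀ M ∈ S, ∀ i, T M i ≤ φ i := by
      intro M hM
      apply RenewalAux.T_le (hQpos M hM) (hfin M hM)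
      intro i
      have hle : (colZero M c).mulVec φ i ≤
          S.sup' hS fun M => (colZero M c).mulVec φ i :=
        Finset.le_sup' (fun M => (colZero M c).mulVec φ i) hM
      rw [hφ i]
      exact add_le_add_right hle 1
    obtain ⟨N, hNS, hN⟩ := argmax φ
    have hle : ∀ i, φ i ≤ T N i := by
      refine fun i => RenewalAux.le_T (hQpos N hNS) (hfin N hNS) (fun j => ?_) i
      rw [hφ j, hN j]
    intro i
    exact le_antisymm (le_trans (hle i) (hMstar N hNS i)) (hge Mstar hMstarS i)
  refine ⟨⟨ψ, hfixpsi, fun φ hφ => funext fun i => part2 φ hφ i⟩, fun φ hφ i => ?_⟩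
  rw [part2 φ hφ i, hpsi_sup i]
end

section
/- Let M be an n×n Markov matrix, c a state, and φ ∈ ℝⁿ a vector with strictly positive coordinates satisfying φ ≥ 1 + M_(c)φ componentwise, with K ≥ ‖φ‖∞ and K ≥ 1. Define M_(c,φ) by replacing the c-th column of M with the vector (1/φ_c)(φ − 1 − M_(c)φ). Then M_(c,φ) has nonnegative entries, satisfies M_(c,φ)φ = φ − 1 ≤ ((K−1)/K)·φ, and for all η ∈ ℝ and v ∈ ℝⁿ with v_c = 0, Mv + η(φ − 1) = M_(c,φ)(v + ηφ). -/
/-- Lemma `lemma-equiv`: with `φ > 0`, `φ ≥ 1 + M_(c)φ`,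
`K ≥ ‖φ‖∞`, `K ≥ 1`, the matrix `M_(c,φ)` obtained by replacing the `c`-th
column of `M` by `(1/φ_c)(φ - 1 - M_(c)φ)` is nonnegative, satisfies
`M_(c,φ)φ = φ - 1 ≤ ((K-1)/K)φ`, and for `v_c = 0`,
`Mv + η(φ - 1) = M_(c,φ)(v + ηφ)`. -/
theorem modified_matrix_properties {n : ℕ} (M : Matrix (Fin n) (Fin n) ℝ)
    (c : Fin n)
    (hpos : ∀ i j, 0 ≤ M i j)
    (hstoch : ∀ i, ∑ j, M i j = 1)
    (φ : Fin n → ℝ) (hφ : ∀ i, 0 < φ i)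
    (hineq : ∀ i, 1 + (colZero M c).mulVec φ i ≤ φ i)
    (K : ℝ) (hK1 : 1 ≤ K) (hK : ∀ i, φ i ≤ K)
    (Mcφ : Matrix (Fin n) (Fin n) ℝ)
    (hdef : Mcφ = Matrix.of fun i j =>
        if j = c then (φ c)⁻¹ * (φ i - 1 - (colZero M c).mulVec φ i) else M i j) :
    (∀ i j, 0 ≤ Mcφ i j) ∧
    (∀ i, Mcφ.mulVec φ i = φ i - 1) ∧
    (∀ i, φ i - 1 ≤ (K - 1) / K * φ i) ∧
    (∀ (η : ℝ) (v : Fin n → ℝ), v c = 0 →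
      ∀ i, M.mulVec v i + η * (φ i - 1) = Mcφ.mulVec (v + η • φ) i) := by
  subst hdef
  have hKpos : (0:ℝ) < K := lt_of_lt_of_le one_pos hK1
  -- key: for any vector w with w c = 0 contribution handling
  have hsum : ∀ (i : Fin n) (w : Fin n → ℝ),
      (Matrix.of fun i j =>
        if j = c then (φ c)⁻¹ * (φ i - 1 - (colZero M c).mulVec φ i) else M i j).mulVec w i
      = (φ c)⁻¹ * (φ i - 1 - (colZero M c).mulVec φ i) * w c
        + ∑ j ∈ Finset.univ.erase c, M i j * w j := by
    intro i w
    rw [Matrix.mulVec, dotProduct]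
    rw [← Finset.add_sum_erase _ _ (Finset.mem_univ c)]
    simp only [Matrix.of_apply, if_pos rfl]
    congr 1
    apply Finset.sum_congr rfl
    intro j hj
    rw [if_neg (Finset.ne_of_mem_erase hj)]
  have hcz : ∀ i, (colZero M c).mulVec φ i = ∑ j ∈ Finset.univ.erase c, M i j * φ j := by
    intro i
    rw [Matrix.mulVec, dotProduct]
    rw [← Finset.add_sum_erase _ _ (Finset.mem_univ c)]
    simp only [colZero, Matrix.of_apply]
    rw [if_true, zero_mul, zero_add]
    apply Finset.sum_congr rfl
    intro j hj
    rw [if_neg (Finset.ne_of_mem_erase hj)]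
  refine ⟨?_, ?_, ?_, ?_⟩
  · intro i j
    simp only [Matrix.of_apply]
    split
    · apply mul_nonneg (inv_nonneg.mpr (hφ c).le)
      have := hineq i; linarith
    · exact hpos i j
  · intro i
    rw [hsum, hcz]
    rw [mul_comm ((φ c)⁻¹), mul_assoc, inv_mul_cancel₀ (hφ c).ne', mul_one]
    ring
  · intro i
    rw [div_mul_eq_mul_div, le_div_iff₀ hKpos]
    have := hK i
    nlinarith [hφ i]
  · intro η v hvc i
    rw [hsum]
    simp only [Pi.add_apply, Pi.smul_apply, smul_eq_mul, hvc, zero_add]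
    have hMv : M.mulVec v i = ∑ j ∈ Finset.univ.erase c, M i j * v j := by
      rw [Matrix.mulVec, dotProduct,
        ← Finset.add_sum_erase _ _ (Finset.mem_univ c), hvc, mul_zero, zero_add]
    rw [hMv, hcz]
    simp only [mul_add, Finset.sum_add_distrib]
    rw [mul_comm ((φ c)⁻¹), mul_comm η (φ c), ← mul_assoc, mul_assoc _ ((φ c)⁻¹) (φ c),
      inv_mul_cancel₀ (hφ c).ne', mul_one]
    have : ∑ j ∈ Finset.univ.erase c, M i j * (η * φ j)
        = η * ∑ j ∈ Finset.univ.erase c, M i j * φ j := by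
      rw [Finset.mul_sum]; apply Finset.sum_congr rfl; intro j _; ring
    rw [this]
    ring
end

section
/- Let M be an n×n Markov matrix, c a state, and φ strictly positive with φ ≥ 1 + M_(c)φ and K ≥ ‖φ‖∞. Then the map w ↦ φ⁻¹·(M_(c,φ)(φ·w)) is given by a matrix M' with nonnegative entries and row sums at most λ = (K−1)/K; hence it is order-preserving and a sup-norm contraction with factor λ. -/
/-- Corollary `coro-equiv`: with `φ > 0`, `φ ≥ 1 + M_(c)φ` and
`K ≥ ‖φ‖∞`, the map `w ↦ φ⁻¹·(M_(c,φ)(φ·w))` is given by the matrix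
`M'_{ij} = φ_i⁻¹ (M_(c,φ))_{ij} φ_j`, which has nonnegative entries and row
sums at most `λ = (K-1)/K`; hence this map is order-preserving and a sup-norm
contraction with factor `λ`. -/
theorem scaled_modified_matrix_contraction {n : ℕ} (M : Matrix (Fin n) (Fin n) ℝ)
    (c : Fin n)
    (hpos : ∀ i j, 0 ≤ M i j)
    (hstoch : ∀ i, ∑ j, M i j = 1)
    (φ : Fin n → ℝ) (hφ : ∀ i, 0 < φ i)
    (hineq : ∀ i, 1 + (colZero M c).mulVec φ i ≤ φ i)
    (K : ℝ) (hK1 : 1 ≤ K) (hK : ∀ i, φ i ≤ K)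
    (Mcφ : Matrix (Fin n) (Fin n) ℝ)
    (hdef : Mcφ = Matrix.of fun i j =>
        if j = c then (φ c)⁻¹ * (φ i - 1 - (colZero M c).mulVec φ i) else M i j)
    (M' : Matrix (Fin n) (Fin n) ℝ)
    (hM' : M' = Matrix.of fun i j => (φ i)⁻¹ * Mcφ i j * φ j) :
    (∀ w : Fin n → ℝ, ∀ i,
        (φ i)⁻¹ * Mcφ.mulVec (fun j => φ j * w j) i = M'.mulVec w i) ∧
    (∀ i j, 0 ≤ M' i j) ∧
    (∀ i, ∑ j, M' i j ≤ (K - 1) / K) ∧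
    Monotone M'.mulVec ∧
    (∀ v w : Fin n → ℝ, ‖M'.mulVec v - M'.mulVec w‖ ≤ (K - 1) / K * ‖v - w‖) := by

  have hK0 : (0:ℝ) < K := lt_of_lt_of_le one_pos hK1
  have hlam : (0:ℝ) ≤ (K - 1) / K := div_nonneg (by linarith) hK0.le
  -- nonnegativity of Mcφ
  have hMc : ∀ i j, 0 ≤ Mcφ i j := by
    intro i j
    rw [hdef]
    simp only [Matrix.of_apply]
    split
    · exact mul_nonneg (inv_nonneg.2 (hφ c).le) (by linarith [hineq i])
    · exact hpos i j
  -- row identity: ∑ j, Mcφ i j * φ j = φ i - 1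
  have hrow : ∀ i, ∑ j, Mcφ i j * φ j = φ i - 1 := by
    intro i
    have hterm : ∀ j, Mcφ i j * φ j =
        (colZero M c) i j * φ j +
          (if j = c then φ i - 1 - (colZero M c).mulVec φ i else 0) := by
      intro j
      rw [hdef]
      simp only [Matrix.of_apply, colZero, Matrix.of_apply]
      by_cases h : j = c
      · subst h
        simp only [if_pos rfl]
        field_simp
        simp only [↓reduceIte, mul_zero, zero_add]
        rw [← mul_div_assoc]; exact mul_div_cancel_left₀ _ (hφ _).ne'
      · simp [h]
    rw [Finset.sum_congr rfl (fun j _ => hterm j), Finset.sum_add_distrib,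
      Finset.sum_ite_eq' Finset.univ c (fun _ => φ i - 1 - (colZero M c).mulVec φ i)]
    simp only [Finset.mem_univ, if_true]
    have : ∑ j, (colZero M c) i j * φ j = (colZero M c).mulVec φ i := by
      simp [Matrix.mulVec, dotProduct]
    rw [this]; ring
  have hM'nn : ∀ i j, 0 ≤ M' i j := by
    intro i j
    rw [hM']
    exact mul_nonneg (mul_nonneg (inv_nonneg.2 (hφ i).le) (hMc i j)) (hφ j).le
  have hrowM' : ∀ i, ∑ j, M' i j ≤ (K - 1) / K := by
    intro i
    have h1 : ∑ j, M' i j = (φ i)⁻¹ * (φ i - 1) := by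
      rw [hM']
      simp only [Matrix.of_apply]
      have h0 : ∀ j : Fin n, (φ i)⁻¹ * Mcφ i j * φ j = (φ i)⁻¹ * (Mcφ i j * φ j) :=
        fun j => by ring
      rw [Finset.sum_congr rfl fun j _ => h0 j, ← Finset.mul_sum, hrow]
    rw [h1]
    have hφi := hφ i
    have h2 : (φ i)⁻¹ * (φ i - 1) = 1 - (φ i)⁻¹ := by field_simp
    have h3 : (K - 1) / K = 1 - K⁻¹ := by field_simp
    rw [h2, h3]
    have : K⁻¹ ≤ (φ i)⁻¹ := inv_anti₀ hφi (hK i)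
    linarith
  refine ⟨?_, hM'nn, hrowM', ?_, ?_⟩
  · intro w i
    rw [hM']
    simp only [Matrix.mulVec, dotProduct, Matrix.of_apply]
    rw [Finset.mul_sum]
    apply Finset.sum_congr rfl
    intro j _; ring
  · intro v w hvw i
    simp only [Matrix.mulVec, dotProduct]
    apply Finset.sum_le_sum
    intro j _
    exact mul_le_mul_of_nonneg_left (hvw j) (hM'nn i j)
  · intro v w
    have key : ∀ u : Fin n → ℝ, ‖M'.mulVec u‖ ≤ (K - 1) / K * ‖u‖ := by
      intro u
      rw [pi_norm_le_iff_of_nonneg (mul_nonneg hlam (norm_nonneg u))]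
      intro i
      rw [Real.norm_eq_abs]
      calc |M'.mulVec u i| ≤ ∑ j, |M' i j * u j| := by
            simp only [Matrix.mulVec, dotProduct]
            exact Finset.abs_sum_le_sum_abs _ _
        _ ≤ ∑ j, M' i j * ‖u‖ := by
            apply Finset.sum_le_sum
            intro j _
            rw [abs_mul, abs_of_nonneg (hM'nn i j)]
            exact mul_le_mul_of_nonneg_left
              (by rw [← Real.norm_eq_abs]; exact norm_le_pi_norm u j) (hM'nn i j)
        _ = (∑ j, M' i j) * ‖u‖ := by rw [Finset.sum_mul]
        _ ≤ (K - 1) / K * ‖u‖ := mul_le_mul_of_nonneg_right (hrowM' i) (norm_nonneg u)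
    have : M'.mulVec v - M'.mulVec w = M'.mulVec (v - w) := by
      rw [Matrix.mulVec_sub]
    rw [this]
    exact key (v - w)
end

section
/- Let f : ℝⁿ → ℝⁿ be order-preserving and additively homogeneous, let φ ∈ ℝⁿ have strictly positive coordinates, let c be a state, and define the transformed map g by g(w) = φ⁻¹·(η(φ − 1) + f(v)) where η = w_c and v = φ·(w − w_c·1). Then (η, v) with v_c = 0 solves the additive eigenproblem η·1 + v = f(v) if and only if w = η·1 + φ⁻¹·v is a fixed point of g. -/
/-- for an order-preserving, additively homogeneous `f` and a
strictly positive vector `φ`, under the transformation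
`g(w) = φ⁻¹·(η(φ - 1) + f(v))` with `η = w_c` and `v = φ·(w - w_c·1)`, the
pair `(η, v)` with `v_c = 0` solves the additive eigenproblem `η·1 + v = f(v)`
iff `w = η·1 + φ⁻¹·v` is a fixed point of `g`. -/
theorem additive_eigenproblem_iff_fixed_point {n : ℕ} (c : Fin n)
    (f : (Fin n → ℝ) → (Fin n → ℝ)) (hmono : Monotone f)
    (hhom : ∀ (t : ℝ) (v : Fin n → ℝ), f (fun i => t + v i) = fun i => t + f v i)
    (φ : Fin n → ℝ) (hφ : ∀ i, 0 < φ i)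
    (g : (Fin n → ℝ) → (Fin n → ℝ))
    (hg : ∀ w, g w = fun i =>
        (φ i)⁻¹ * (w c * (φ i - 1) + f (fun j => φ j * (w j - w c)) i)) :
    ∀ (η : ℝ) (v : Fin n → ℝ), v c = 0 →
      ((fun i => η + v i) = f v ↔
        g (fun i => η + (φ i)⁻¹ * v i) = fun i => η + (φ i)⁻¹ * v i) := by
  intro η v hvc
  rw [hg]
  have hwc : η + (φ c)⁻¹ * v c = η := by rw [hvc]; ring
  rw [hwc]
  have harg : (fun j => φ j * (η + (φ j)⁻¹ * v j - η)) = v := by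
    funext j
    have : η + (φ j)⁻¹ * v j - η = (φ j)⁻¹ * v j := by ring
    rw [this, ← mul_assoc, mul_inv_cancel₀ (hφ j).ne', one_mul]
  rw [harg]
  constructor
  · intro h
    funext i
    rw [← h]
    have := (hφ i).ne'
    field_simp
    ring
  · intro h
    funext i
    have hi := congrFun h i
    have hne := (hφ i).ne'
    field_simp at hi
    nlinarith [hi]
end

section
/- Under the assumption that for every pair of policies the associated nonnegative matrix M^(σδ) has spectral radius at most ω < 1, there exists, for every λ with ω < λ < 1, a strictly positive vector φ ∈ ℝⁿ such that M^(σδ) φ ≤ λ φ componentwise simultaneously for all pairs of policies (σ, δ). -/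
open Matrix Finset

/-- entrywise nonneg of product -/
lemma matmul_entry_nonneg {n : ℕ} {P Q : Matrix (Fin n) (Fin n) ℝ}
    (hP : ∀ i j, 0 ≤ P i j) (hQ : ∀ i j, 0 ≤ Q i j) : ∀ i j, 0 ≤ (P * Q) i j := by
  intro i j
  rw [Matrix.mul_apply]
  exact Finset.sum_nonneg fun k _ => mul_nonneg (hP i k) (hQ k j)

lemma matmul_entry_bound {n : ℕ} {P Q : Matrix (Fin n) (Fin n) ℝ} {p q : ℝ}
    (hp : ∀ i j, |P i j| ≤ p) (hq : ∀ i j, |Q i j| ≤ q) (hq0 : 0 ≤ q) :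
    ∀ i j, |(P * Q) i j| ≤ n * (p * q) := by
  intro i j
  rw [Matrix.mul_apply]
  calc |∑ k, P i k * Q k j| ≤ ∑ k, |P i k * Q k j| := Finset.abs_sum_le_sum_abs _ _
    _ ≤ ∑ _k : Fin n, p * q := by
        apply Finset.sum_le_sum
        intro k _
        rw [abs_mul]
        exact mul_le_mul (hp i k) (hq k j) (abs_nonneg _) ((abs_nonneg (P i k)).trans (hp i k))
    _ = n * (p * q) := by simp [Finset.sum_const, Finset.card_univ, nsmul_eq_mul]

/-- If `R = P + S * R` with `P, S ≥ 0` entrywise and `S` small, then `R ≥ 0` entrywise. -/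
lemma matrix_nonneg_of_fixpoint {n : ℕ} (R P S : Matrix (Fin n) (Fin n) ℝ)
    (hfix : R = P + S * R) (hP : ∀ i j, 0 ≤ P i j) (hS : ∀ i j, 0 ≤ S i j)
    {s d : ℝ} (hs : ∀ i j, S i j ≤ s) (hd : ∀ i j, |R i j| ≤ d) (hd0 : 0 ≤ d)
    (hr : (n : ℝ) * s < 1) : ∀ i j, 0 ≤ R i j := by
  rcases Nat.eq_zero_or_pos n with hn | hn
  · subst hn; intro i; exact i.elim0
  have hs0 : 0 ≤ s := le_trans (hS ⟨0, hn⟩ ⟨0, hn⟩) (hs ⟨0, hn⟩ ⟨0, hn⟩)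
  have hr0 : 0 ≤ (n : ℝ) * s := mul_nonneg (Nat.cast_nonneg n) hs0
  -- iterated identity
  have hiter : ∀ m : ℕ, R = (∑ k ∈ Finset.range m, S ^ k * P) + S ^ m * R := by
    intro m
    induction m with
    | zero => simp
    | succ m ih =>
      have h1 : S ^ m * R = S ^ m * P + S ^ (m + 1) * R := by
        calc S ^ m * R = S ^ m * (P + S * R) := by rw [← hfix]
          _ = S ^ m * P + S ^ (m+1) * R := by rw [mul_add, pow_succ, mul_assoc]
      rw [Finset.sum_range_succ]
      calc R = (∑ k ∈ Finset.range m, S ^ k * P) + S ^ m * R := ih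
        _ = (∑ k ∈ Finset.range m, S ^ k * P) + (S ^ m * P + S ^ (m+1) * R) := by rw [h1]
        _ = ((∑ k ∈ Finset.range m, S ^ k * P) + S ^ m * P) + S ^ (m+1) * R := by rw [add_assoc]
  -- entrywise bound on remainder
  have hrem : ∀ m : ℕ, ∀ i j, |(S ^ m * R) i j| ≤ ((n : ℝ) * s) ^ m * d := by
    intro m
    induction m with
    | zero => intro i j; simpa using hd i j
    | succ m ih =>
      intro i j
      have h2 : S ^ (m+1) * R = S * (S ^ m * R) := by rw [pow_succ', mul_assoc]
      rw [h2]
      have := matmul_entry_bound (P := S) (Q := S ^ m * R) (p := s)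
        (q := ((n : ℝ) * s) ^ m * d)
        (fun i j => by rw [abs_of_nonneg (hS i j)]; exact hs i j) ih
        (mul_nonneg (pow_nonneg hr0 m) hd0) i j
      calc |(S * (S ^ m * R)) i j| ≤ n * (s * (((n:ℝ) * s) ^ m * d)) := this
        _ = ((n:ℝ) * s) ^ (m+1) * d := by ring
  -- nonneg partial sums
  have hpows : ∀ m : ℕ, ∀ i j, 0 ≤ (S ^ m * P) i j := by
    intro m
    have : ∀ i j, 0 ≤ (S ^ m) i j := by
      induction m with
      | zero => intro i j; by_cases h : i = j <;> simp [Matrix.one_apply, h]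
      | succ m ih => rw [pow_succ]; exact matmul_entry_nonneg ih hS
    exact matmul_entry_nonneg this hP
  intro i j
  have key : ∀ m : ℕ, -(((n:ℝ) * s) ^ m * d) ≤ R i j := by
    intro m
    have h3 := hiter m
    have h4 : R i j = (∑ k ∈ Finset.range m, S ^ k * P) i j + (S ^ m * R) i j := by
      rw [← Matrix.add_apply, ← h3]
    have h5 : 0 ≤ (∑ k ∈ Finset.range m, S ^ k * P) i j := by
      rw [Matrix.sum_apply]
      exact Finset.sum_nonneg fun k _ => hpows k i j
    have h6 : -(((n:ℝ) * s) ^ m * d) ≤ (S ^ m * R) i j := neg_le_of_abs_le (hrem m i j)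
    linarith
  -- limit
  have hlim : Filter.Tendsto (fun m : ℕ => -(((n:ℝ) * s) ^ m * d)) Filter.atTop (nhds 0) := by
    have := tendsto_pow_atTop_nhds_zero_of_lt_one hr0 hr
    simpa using (this.mul_const d).neg
  exact le_of_tendsto hlim (Filter.Eventually.of_forall key)

/-- resolvent of a nonnegative matrix at a point above the real spectrum is
entrywise nonnegative -/
lemma resolvent_entries_nonneg {n : ℕ} (M : Matrix (Fin n) (Fin n) ℝ)
    (hM : ∀ i j, 0 ≤ M i j) {lam : ℝ} (hlam : 0 < lam)
    (hinv : ∀ μ : ℝ, lam ≤ μ → IsUnit (μ • (1 : Matrix (Fin n) (Fin n) ℝ) - M)) :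
    ∀ i j, 0 ≤ ((lam • (1 : Matrix (Fin n) (Fin n) ℝ) - M)⁻¹) i j := by
  rcases Nat.eq_zero_or_pos n with hn | hn
  · subst hn; intro i; exact i.elim0
  set Rf : ℝ → Matrix (Fin n) (Fin n) ℝ := fun μ => (μ • 1 - M)⁻¹ with hRf
  have hdet : ∀ μ : ℝ, lam ≤ μ → IsUnit (μ • (1 : Matrix (Fin n) (Fin n) ℝ) - M).det :=
    fun μ hμ => (Matrix.isUnit_iff_isUnit_det _).mp (hinv μ hμ)
  have hfixgen : ∀ μ : ℝ, lam ≤ μ → (μ • (1 : Matrix (Fin n) (Fin n) ℝ) - M) * Rf μ = 1 :=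
    fun μ hμ => Matrix.mul_nonsing_inv _ (hdet μ hμ)
  -- bound on entries of M
  set cM : ℝ := 1 + ∑ i, ∑ j, M i j with hcM
  have hcM1 : (1:ℝ) ≤ cM := by
    have : 0 ≤ ∑ i, ∑ j, M i j :=
      Finset.sum_nonneg fun i _ => Finset.sum_nonneg fun j _ => hM i j
    simp [hcM]; linarith
  have hcM0 : 0 < cM := lt_of_lt_of_le one_pos hcM1
  have hMle : ∀ i j, M i j ≤ cM := by
    intro i j
    have h1 : M i j ≤ ∑ j', M i j' :=
      Finset.single_le_sum (fun j' _ => hM i j') (Finset.mem_univ j)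
    have h2 : ∑ j', M i j' ≤ ∑ i', ∑ j', M i' j' :=
      Finset.single_le_sum (f := fun i' => ∑ j', M i' j')
        (fun i' _ => Finset.sum_nonneg fun j' _ => hM i' j') (Finset.mem_univ i)
    simp [hcM]; linarith
  set N : ℝ := max lam (2 * n * cM) with hN
  have hlamN : lam ≤ N := le_max_left _ _
  have hN2 : 2 * n * cM ≤ N := le_max_right _ _
  have hNpos : 0 < N := lt_of_lt_of_le hlam hlamN
  -- continuity and uniform bound on [lam, N]
  have hcont : ContinuousOn Rf (Set.Icc lam N) := by
    have hA : Continuous fun μ : ℝ => μ • (1 : Matrix (Fin n) (Fin n) ℝ) - M :=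
      (continuous_id.smul continuous_const).sub continuous_const
    have heq : ∀ μ : ℝ, Rf μ = (Ring.inverse (μ • (1:Matrix (Fin n) (Fin n) ℝ) - M).det) •
        (μ • (1:Matrix (Fin n) (Fin n) ℝ) - M).adjugate := fun μ => Matrix.inv_def _
    rw [show Rf = fun μ => (((μ • (1:Matrix (Fin n) (Fin n) ℝ) - M).det)⁻¹) •
        (μ • (1:Matrix (Fin n) (Fin n) ℝ) - M).adjugate from funext fun μ => by
      rw [heq μ, Ring.inverse_eq_inv']]
    refine ContinuousOn.smul (f := fun μ : ℝ => ((μ • (1:Matrix (Fin n) (Fin n) ℝ) - M).det)⁻¹)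
      (g := fun μ : ℝ => (μ • (1:Matrix (Fin n) (Fin n) ℝ) - M).adjugate) ?_ ?_
    · apply ContinuousOn.inv₀
      · exact (hA.matrix_det).continuousOn
      · intro μ hμ
        exact IsUnit.ne_zero (hdet μ hμ.1)
    · exact (hA.matrix_adjugate).continuousOn
  set cfun : ℝ → ℝ := fun μ => ∑ i, ∑ j, |Rf μ i j| with hcfun
  have hcfc : ContinuousOn cfun (Set.Icc lam N) := by
    apply continuousOn_finset_sum
    intro i _
    apply continuousOn_finset_sum
    intro j _
    exact ((continuous_apply j).comp (continuous_apply i)).comp_continuousOn hcont |>.abs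
  obtain ⟨μmax, hμmaxmem, hμmax⟩ := (isCompact_Icc).exists_isMaxOn
    (Set.nonempty_Icc.mpr hlamN) hcfc
  set C : ℝ := max (cfun μmax) 1 with hC
  have hC1 : (1:ℝ) ≤ C := le_max_right _ _
  have hC0 : 0 < C := lt_of_lt_of_le one_pos hC1
  have hRfC : ∀ μ ∈ Set.Icc lam N, ∀ i j, |Rf μ i j| ≤ C := by
    intro μ hμ i j
    have h1 : |Rf μ i j| ≤ cfun μ := by
      have h2 : |Rf μ i j| ≤ ∑ j', |Rf μ i j'| :=
        Finset.single_le_sum (f := fun j' => |Rf μ i j'|) (fun j' _ => abs_nonneg _)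
          (Finset.mem_univ j)
      have h3 : ∑ j', |Rf μ i j'| ≤ cfun μ :=
        Finset.single_le_sum (f := fun i' => ∑ j', |Rf μ i' j'|)
          (fun i' _ => Finset.sum_nonneg fun j' _ => abs_nonneg _) (Finset.mem_univ i)
      linarith
    exact h1.trans ((hμmax hμ).trans (le_max_left _ _))
  -- fixed point identity: for lam ≤ μ, μ • Rf μ = 1 + M * Rf μ  hence Rf μ = μ⁻¹ • 1 + (μ⁻¹ • M) * Rf μ
  have hfix1 : ∀ μ : ℝ, lam ≤ μ → Rf μ = (μ⁻¹ • 1 : Matrix (Fin n) (Fin n) ℝ) + (μ⁻¹ • M) * Rf μ := by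
    intro μ hμ
    have hμ0 : μ ≠ 0 := ne_of_gt (lt_of_lt_of_le hlam hμ)
    have h1 := hfixgen μ hμ
    rw [Matrix.sub_mul, Matrix.smul_mul, Matrix.one_mul] at h1
    -- h1 : μ • Rf μ - M * Rf μ = 1
    have h2 : μ • Rf μ = 1 + M * Rf μ := by
      rw [← h1]; abel
    calc Rf μ = μ⁻¹ • (μ • Rf μ) := by rw [smul_smul, inv_mul_cancel₀ hμ0, one_smul]
      _ = μ⁻¹ • (1 + M * Rf μ) := by rw [h2]
      _ = (μ⁻¹ • 1 : Matrix (Fin n) (Fin n) ℝ) + (μ⁻¹ • M) * Rf μ := by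
          rw [smul_add, Matrix.smul_mul]
  -- base case : Rf N ≥ 0
  have hbase : ∀ i j, 0 ≤ Rf N i j := by
    apply matrix_nonneg_of_fixpoint (Rf N) (N⁻¹ • 1) (N⁻¹ • M) (hfix1 N hlamN)
      (s := N⁻¹ * cM) (d := C)
    · intro i j
      by_cases h : i = j <;>
        simp [Matrix.smul_apply, Matrix.one_apply, h, le_of_lt (inv_pos.mpr hNpos)]
    · intro i j
      exact mul_nonneg (le_of_lt (inv_pos.mpr hNpos)) (hM i j)
    · intro i j
      exact mul_le_mul_of_nonneg_left (hMle i j) (le_of_lt (inv_pos.mpr hNpos))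
    · exact hRfC N (Set.mem_Icc.mpr ⟨hlamN, le_refl N⟩)
    · exact le_of_lt hC0
    · -- n * (N⁻¹ * cM) < 1  since N ≥ 2 n cM
      rw [← mul_assoc]
      have hn0 : (0:ℝ) < n := Nat.cast_pos.mpr hn
      have h1 : (n:ℝ) * cM < N := by nlinarith
      calc (n:ℝ) * N⁻¹ * cM = ((n:ℝ) * cM) / N := by ring
        _ < 1 := (div_lt_one hNpos).mpr h1
  -- step lemma
  set h : ℝ := (2 * n * C)⁻¹ with hh
  have hn0 : (0:ℝ) < n := Nat.cast_pos.mpr hn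
  have hh0 : 0 < h := by positivity
  have step : ∀ μ' μ₀ : ℝ, lam ≤ μ' → μ' ≤ μ₀ → μ₀ ≤ N → μ₀ - μ' ≤ h →
      (∀ i j, 0 ≤ Rf μ₀ i j) → ∀ i j, 0 ≤ Rf μ' i j := by
    intro μ' μ₀ hμ'l hμ'μ₀ hμ₀N hdiff hR0
    have hμ₀l : lam ≤ μ₀ := hμ'l.trans hμ'μ₀
    -- resolvent identity
    have hfix2 : Rf μ' = Rf μ₀ + ((μ₀ - μ') • Rf μ₀) * Rf μ' := by
      set Amat := μ₀ • (1 : Matrix (Fin n) (Fin n) ℝ) - M with hA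
      set Bmat := μ' • (1 : Matrix (Fin n) (Fin n) ℝ) - M with hB
      have hAB : Amat = Bmat + (μ₀ - μ') • 1 := by
        rw [hA, hB, sub_smul]; abel
      have h1 : Amat * Rf μ' = 1 + (μ₀ - μ') • Rf μ' := by
        rw [hAB, Matrix.add_mul, Matrix.smul_mul]
        have := hfixgen μ' hμ'l
        rw [hRf] at this
        rw [show Bmat * (Rf μ') = 1 from this, Matrix.one_mul]
      calc Rf μ' = (Amat⁻¹ * Amat) * Rf μ' := by
            rw [Matrix.nonsing_inv_mul _ (hdet μ₀ hμ₀l), Matrix.one_mul]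
        _ = Amat⁻¹ * (Amat * Rf μ') := by rw [Matrix.mul_assoc]
        _ = Amat⁻¹ * (1 + (μ₀ - μ') • Rf μ') := by rw [h1]
        _ = Rf μ₀ + ((μ₀ - μ') • Rf μ₀) * Rf μ' := by
            rw [Matrix.mul_add, Matrix.mul_one, Matrix.mul_smul, Matrix.smul_mul]
    apply matrix_nonneg_of_fixpoint (Rf μ') (Rf μ₀) ((μ₀ - μ') • Rf μ₀) hfix2 hR0
      (s := h * C) (d := C)
    · intro i j
      exact mul_nonneg (by linarith) (hR0 i j)
    · intro i j
      have h1 : Rf μ₀ i j ≤ C := le_trans (le_abs_self _)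
        (hRfC μ₀ (Set.mem_Icc.mpr ⟨hμ₀l, hμ₀N⟩) i j)
      have h2 : (0:ℝ) ≤ μ₀ - μ' := by linarith
      calc ((μ₀ - μ') • Rf μ₀) i j = (μ₀ - μ') * Rf μ₀ i j := rfl
        _ ≤ h * C := mul_le_mul hdiff h1 (hR0 i j) (le_of_lt hh0)
    · exact hRfC μ' (Set.mem_Icc.mpr ⟨hμ'l, hμ'μ₀.trans hμ₀N⟩)
    · exact le_of_lt hC0
    · -- n * (h * C) = 1/2 < 1
      have : (n:ℝ) * (h * C) = 1/2 := by
        rw [hh]; field_simp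
      rw [this]; norm_num
  -- induction covering [lam, N]
  have main : ∀ k : ℕ, ∀ μ : ℝ, lam ≤ μ → μ ≤ N → N - k * h ≤ μ → ∀ i j, 0 ≤ Rf μ i j := by
    intro k
    induction k with
    | zero =>
      intro μ h1 h2 h3
      have : μ = N := le_antisymm h2 (by simpa using h3)
      rw [this]; exact hbase
    | succ k ih =>
      intro μ h1 h2 h3
      by_cases hc : N - k * h ≤ μ
      · exact ih μ h1 h2 hc
      · push_neg at hc
        set μ₀ : ℝ := min (μ + h) N with hμ₀
        have hA1 : μ ≤ μ₀ := le_min (by linarith) h2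
        have hA2 : μ₀ ≤ N := min_le_right _ _
        have hA3 : μ₀ - μ ≤ h := by
          have := min_le_left (μ + h) N
          rw [hμ₀]; linarith [min_le_left (μ + h) N]
        have hA4 : N - k * h ≤ μ₀ := by
          apply le_min
          · push_cast at h3 ⊢; linarith
          · nlinarith [mul_nonneg (Nat.cast_nonneg k : (0:ℝ) ≤ k) (le_of_lt hh0)]
        have hR0 := ih μ₀ (h1.trans hA1) hA2 hA4
        exact step μ μ₀ h1 hA1 hA2 hA3 hR0
  obtain ⟨k, hk⟩ := exists_nat_ge ((N - lam) / h)
  have : N - k * h ≤ lam := by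
    rw [div_le_iff₀ hh0] at hk
    linarith
  exact main k lam (le_refl lam) hlamN this

/-- Theorem `general-scaling` for games: given a rectangular
family of nonnegative matrices `M^(σδ)` (the `i`-th row depends only on
`(σ i, δ i)`) whose spectral radii are all at most `ω < 1`, for every
`ω < λ < 1` there exists a strictly positive vector `φ` with
`M^(σδ) φ ≤ λ φ` simultaneously for all pairs of policies `(σ, δ)`. -/
theorem simultaneous_scaling_vector {n : ℕ} (A B : Fin n → Type*)
    [∀ i, Fintype (A i)] [∀ i, Nonempty (A i)]
    [∀ i, Fintype (B i)] [∀ i, Nonempty (B i)]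
    (row : ∀ i : Fin n, A i → B i → Fin n → ℝ)
    (hpos : ∀ i a b j, 0 ≤ row i a b j)
    (ω : ℝ) (hω0 : 0 ≤ ω) (hω1 : ω < 1)
    (hρ : ∀ (σ : ∀ i, A i) (δ : ∀ i, B i),
        spectralRadius ℝ (Matrix.of fun i j => row i (σ i) (δ i) j) ≤
          ENNReal.ofReal ω) :
    ∀ lam : ℝ, ω < lam → lam < 1 →
      ∃ φ : Fin n → ℝ, (∀ i, 0 < φ i) ∧
        ∀ (σ : ∀ i, A i) (δ : ∀ i, B i), ∀ i,
          (Matrix.of fun i' j => row i' (σ i') (δ i') j).mulVec φ i ≤ lam * φ i := by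
  intro lam hωlam hlam1
  have hlam0 : 0 < lam := lt_of_le_of_lt hω0 hωlam
  classical
  -- policies
  set Pol := ((∀ i, A i) × (∀ i, B i)) with hPol
  set Mm : Pol → Matrix (Fin n) (Fin n) ℝ :=
    fun π => Matrix.of fun i j => row i (π.1 i) (π.2 i) j with hMm
  have hMnn : ∀ π : Pol, ∀ i j, 0 ≤ Mm π i j := fun π i j => hpos i (π.1 i) (π.2 i) j
  -- invertibility above lam
  have hUnit : ∀ π : Pol, ∀ μ : ℝ, lam ≤ μ →
      IsUnit (μ • (1 : Matrix (Fin n) (Fin n) ℝ) - Mm π) := by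
    intro π μ hμ
    have hμω : ω < μ := lt_of_lt_of_le hωlam hμ
    have hnotmem : μ ∉ spectrum ℝ (Mm π) := by
      intro hmem
      have h1 : (‖μ‖₊ : ENNReal) ≤ spectralRadius ℝ (Mm π) := by
        rw [spectralRadius]
        exact le_iSup₂ (f := fun (k : ℝ) (_ : k ∈ spectrum ℝ (Mm π)) => (‖k‖₊ : ENNReal)) μ hmem
      have h2 : (‖μ‖₊ : ENNReal) ≤ ENNReal.ofReal ω := h1.trans (hρ π.1 π.2)
      rw [ENNReal.ofReal, ENNReal.coe_le_coe] at h2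
      have h3 : ‖μ‖ ≤ ω := by
        have h4 : ((‖μ‖₊ : NNReal) : ℝ) ≤ ((ω.toNNReal : NNReal) : ℝ) := NNReal.coe_le_coe.mpr h2
        rwa [coe_nnnorm, Real.coe_toNNReal ω hω0] at h4
      have h4 : μ ≤ ‖μ‖ := le_abs_self μ
      rw [Real.norm_eq_abs] at h3
      have := le_abs_self μ
      linarith
    have := spectrum.notMem_iff.mp hnotmem
    rwa [Algebra.algebraMap_eq_smul_one] at this
  -- resolvents
  set Rm : Pol → Matrix (Fin n) (Fin n) ℝ :=
    fun π => (lam • (1 : Matrix (Fin n) (Fin n) ℝ) - Mm π)⁻¹ with hRm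
  have hRnn : ∀ π : Pol, ∀ i j, 0 ≤ Rm π i j :=
    fun π => resolvent_entries_nonneg (Mm π) (hMnn π) hlam0 (hUnit π)
  have hdet : ∀ π : Pol, IsUnit (lam • (1 : Matrix (Fin n) (Fin n) ℝ) - Mm π).det :=
    fun π => (Matrix.isUnit_iff_isUnit_det _).mp (hUnit π lam le_rfl)
  -- the vectors φ
  set φf : Pol → (Fin n → ℝ) := fun π => (Rm π).mulVec (fun _ => lam) with hφf
  have hφeq : ∀ π : Pol, ∀ i, (Mm π).mulVec (φf π) i = lam * φf π i - lam := by
    intro π i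
    have h1 : (lam • (1 : Matrix (Fin n) (Fin n) ℝ) - Mm π).mulVec (φf π) = fun _ => lam := by
      rw [hφf]
      dsimp only
      rw [Matrix.mulVec_mulVec, Matrix.mul_nonsing_inv _ (hdet π), Matrix.one_mulVec]
    have h2 := congrFun h1 i
    rw [Matrix.sub_mulVec, Matrix.smul_mulVec, Matrix.one_mulVec] at h2
    simp only [Pi.sub_apply, Pi.smul_apply, smul_eq_mul] at h2
    linarith
  have hφnn : ∀ π : Pol, ∀ i, 0 ≤ φf π i := by
    intro π i
    rw [hφf]
    dsimp only
    rw [Matrix.mulVec]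
    exact Finset.sum_nonneg fun j _ => mul_nonneg (hRnn π i j) (le_of_lt hlam0)
  have hφ1 : ∀ π : Pol, ∀ i, 1 ≤ φf π i := by
    intro π i
    have h1 := hφeq π i
    have h2 : 0 ≤ (Mm π).mulVec (φf π) i := by
      rw [Matrix.mulVec]
      exact Finset.sum_nonneg fun j _ => mul_nonneg (hMnn π i j) (hφnn π j)
    have h3 : lam * 1 ≤ lam * φf π i := by linarith
    exact le_of_mul_le_mul_left h3 hlam0
  -- maximal policy
  obtain ⟨πs, hπs⟩ := Finite.exists_max (fun π : Pol => ∑ i, φf π i)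
  set φs : Fin n → ℝ := φf πs with hφs
  -- improved policy
  have hbest : ∀ i : Fin n, ∃ p : A i × B i, ∀ q : A i × B i,
      (∑ j, row i q.1 q.2 j * φs j) ≤ (∑ j, row i p.1 p.2 j * φs j) :=
    fun i => Finite.exists_max _
  choose pf hpf using hbest
  set π' : Pol := (fun i => (pf i).1, fun i => (pf i).2) with hπ'
  have hmul' : ∀ (π : Pol) i, (Mm π).mulVec φs i = ∑ j, row i (π.1 i) (π.2 i) j * φs j := by
    intro π i; rw [Matrix.mulVec]; rfl
  -- d := φf π' - φs is nonnegative and sums to ≤ 0, hence zero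
  set g : Fin n → ℝ := fun i => lam + (Mm π').mulVec φs i - lam * φs i with hg
  have hg0 : ∀ i, 0 ≤ g i := by
    intro i
    have h1 : (Mm πs).mulVec φs i = lam * φs i - lam := hφeq πs i
    have h2 : (Mm πs).mulVec φs i ≤ (Mm π').mulVec φs i := by
      rw [hmul' πs i, hmul' π' i]
      exact hpf i (πs.1 i, πs.2 i)
    rw [hg]; dsimp only; linarith
  set d : Fin n → ℝ := fun i => φf π' i - φs i with hd
  have hAd : (lam • (1 : Matrix (Fin n) (Fin n) ℝ) - Mm π').mulVec d = g := by
    funext i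
    rw [Matrix.sub_mulVec, Matrix.smul_mulVec, Matrix.one_mulVec]
    have h1 : (Mm π').mulVec d i = (Mm π').mulVec (φf π') i - (Mm π').mulVec φs i := by
      have : d = φf π' - φs := rfl
      rw [this, Matrix.mulVec_sub]; rfl
    have h2 := hφeq π' i
    simp only [Pi.sub_apply, Pi.smul_apply, smul_eq_mul]
    rw [h1, h2, hg]
    dsimp only [hd]
    ring
  have hdRg : d = (Rm π').mulVec g := by
    rw [← hAd, Matrix.mulVec_mulVec, Matrix.nonsing_inv_mul _ (hdet π'), Matrix.one_mulVec]
  have hd0 : ∀ i, 0 ≤ d i := by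
    intro i
    rw [hdRg, Matrix.mulVec]
    exact Finset.sum_nonneg fun j _ => mul_nonneg (hRnn π' i j) (hg0 j)
  have hdsum : ∑ i, d i ≤ 0 := by
    have := hπs π'
    rw [hd]
    rw [Finset.sum_sub_distrib]
    simp only [hφs]
    linarith
  have hdzero : ∀ i, d i = 0 := by
    have hsum0 : ∑ i, d i = 0 := le_antisymm hdsum (Finset.sum_nonneg fun i _ => hd0 i)
    intro i
    have := (Finset.sum_eq_zero_iff_of_nonneg (fun i _ => hd0 i)).mp hsum0
    exact this i (Finset.mem_univ i)
  have hgzero : ∀ i, g i = 0 := by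
    intro i
    have h1 := congrFun hAd i
    have h2 : d = fun _ => (0:ℝ) := funext hdzero
    rw [h2] at h1
    rw [← h1]
    have : (lam • (1 : Matrix (Fin n) (Fin n) ℝ) - Mm π').mulVec (fun _ => (0:ℝ)) = fun _ => 0 := by
      have : (fun _ => (0:ℝ)) = (0 : Fin n → ℝ) := rfl
      rw [this, Matrix.mulVec_zero]
    rw [this]
  -- conclusion
  refine ⟨φs, fun i => lt_of_lt_of_le one_pos (hφ1 πs i), ?_⟩
  intro σ δ i
  have h1 : (Matrix.of fun i' j => row i' (σ i') (δ i') j).mulVec φs i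
      = ∑ j, row i (σ i) (δ i) j * φs j := by
    rw [Matrix.mulVec]; rfl
  have h2 : (Mm π').mulVec φs i = lam * φs i - lam := by
    have := hgzero i
    rw [hg] at this
    dsimp only at this
    linarith
  have h3 : (∑ j, row i (σ i) (δ i) j * φs j) ≤ ∑ j, row i (pf i).1 (pf i).2 j * φs j :=
    hpf i (σ i, δ i)
  have h4 : (Mm π').mulVec φs i = ∑ j, row i (pf i).1 (pf i).2 j * φs j := hmul' π' i
  rw [h1]
  calc (∑ j, row i (σ i) (δ i) j * φs j) ≤ ∑ j, row i (pf i).1 (pf i).2 j * φs j := h3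
    _ = lam * φs i - lam := by rw [← h4, h2]
    _ ≤ lam * φs i := by linarith
end

section
/- For the mean-payoff policy iteration under the renewal-state assumption, the algorithm terminates after at most (m₁ − n)·(1 + ⌊log K / log(K/(K−1))⌋) iterations, where K = max_i T_{ic} is the maximal (over states and policy pairs) expected first return time to the renewal state c. -/
open Filter Topology

section MatAux
variable {n : ℕ} {Nm : Matrix (Fin n) (Fin n) ℝ}

lemma pow_entry_nonneg (h0 : ∀ i j, 0 ≤ Nm i j) (m : ℕ) : ∀ i j, 0 ≤ (Nm ^ m) i j := by
  induction m with
  | zero => intro i j; simp [Matrix.one_apply]; split <;> norm_num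
  | succ m ih =>
      intro i j
      rw [pow_succ, Matrix.mul_apply]
      exact Finset.sum_nonneg fun l _ => mul_nonneg (ih i l) (h0 l j)

lemma mulVec_mono {M : Matrix (Fin n) (Fin n) ℝ} (h0 : ∀ i j, 0 ≤ M i j)
    {x y : Fin n → ℝ} (hxy : ∀ j, x j ≤ y j) (i : Fin n) :
    M.mulVec x i ≤ M.mulVec y i := by
  simp only [Matrix.mulVec, dotProduct]
  exact Finset.sum_le_sum fun j _ => mul_le_mul_of_nonneg_left (hxy j) (h0 i j)

lemma tendsto_pow_mulVec_zero (h0 : ∀ i j, 0 ≤ Nm i j)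
    (hfin : ∀ i, Summable fun k : ℕ => (Nm ^ k).mulVec (fun _ => 1) i)
    (z : Fin n → ℝ) (i : Fin n) :
    Tendsto (fun m : ℕ => (Nm ^ m).mulVec z i) atTop (𝓝 0) := by
  obtain ⟨C, hC⟩ : ∃ C : ℝ, ∀ j, |z j| ≤ C :=
    ⟨Finset.univ.sup' ⟨i, Finset.mem_univ i⟩ (fun j => |z j|),
      fun j => Finset.le_sup' (fun j => |z j|) (Finset.mem_univ j)⟩
  have hg : Tendsto (fun m : ℕ => C * (Nm ^ m).mulVec (fun _ => 1) i) atTop (𝓝 0) := by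
    have := (hfin i).tendsto_atTop_zero
    simpa using this.const_mul C
  refine squeeze_zero_norm (fun m => ?_) hg
  have h1 : |(Nm ^ m).mulVec z i| ≤ C * (Nm ^ m).mulVec (fun _ => 1) i := by
    simp only [Matrix.mulVec, dotProduct]
    calc |∑ j, (Nm ^ m) i j * z j| ≤ ∑ j, |(Nm ^ m) i j * z j| := Finset.abs_sum_le_sum_abs _ _
    _ ≤ ∑ j, (Nm ^ m) i j * C := by
        refine Finset.sum_le_sum fun j _ => ?_
        rw [abs_mul, abs_of_nonneg (pow_entry_nonneg h0 m i j)]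
        exact mul_le_mul_of_nonneg_left (hC j) (pow_entry_nonneg h0 m i j)
    _ = C * ∑ j, (Nm ^ m) i j * 1 := by rw [Finset.mul_sum]; congr 1; ext j; ring
  simpa using h1

lemma nonneg_of_mulVec_le (h0 : ∀ i j, 0 ≤ Nm i j)
    (hfin : ∀ i, Summable fun k : ℕ => (Nm ^ k).mulVec (fun _ => 1) i)
    {z : Fin n → ℝ} (hz : ∀ i, Nm.mulVec z i ≤ z i) (i : Fin n) : 0 ≤ z i := by
  have key : ∀ m : ℕ, ∀ j, (Nm ^ m).mulVec z j ≤ z j := by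
    intro m
    induction m with
    | zero => intro j; simp [Matrix.one_mulVec]
    | succ m ih =>
        intro j
        have e : (Nm ^ (m+1)).mulVec z = (Nm ^ m).mulVec (Nm.mulVec z) := by
          rw [pow_succ, ← Matrix.mulVec_mulVec]
        rw [e]
        exact le_trans (mulVec_mono (pow_entry_nonneg h0 m) hz j) (ih j)
  have := le_of_tendsto (tendsto_pow_mulVec_zero h0 hfin z i)
      (Eventually.of_forall fun m => key m i)
  linarith [this]

lemma tsum_pow_mulVec_rec (h0 : ∀ i j, 0 ≤ Nm i j)
    (hfin : ∀ i, Summable fun k : ℕ => (Nm ^ k).mulVec (fun _ => 1) i) (i : Fin n) :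
    (∑' k : ℕ, (Nm ^ k).mulVec (fun _ => 1) i)
      = 1 + Nm.mulVec (fun j => ∑' k : ℕ, (Nm ^ k).mulVec (fun _ => 1) j) i := by
  have hshift : (∑' k : ℕ, (Nm ^ k).mulVec (fun _ => 1) i)
      = (Nm ^ 0).mulVec (fun _ => 1) i + ∑' k : ℕ, (Nm ^ (k+1)).mulVec (fun _ => 1) i :=
    Summable.tsum_eq_zero_add (hfin i)
  have h0pow : (Nm ^ (0:ℕ)).mulVec (fun _ => 1) i = 1 := by simp [Matrix.one_mulVec]
  have e1 : ∀ k : ℕ, (Nm ^ (k+1)).mulVec (fun _ => 1) i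
      = ∑ j, Nm i j * ((Nm ^ k).mulVec (fun _ => 1) j) := by
    intro k
    rw [pow_succ', ← Matrix.mulVec_mulVec]
    simp [Matrix.mulVec, dotProduct]
  have hsw : (∑' k : ℕ, (Nm ^ (k+1)).mulVec (fun _ => 1) i)
      = Nm.mulVec (fun j => ∑' k : ℕ, (Nm ^ k).mulVec (fun _ => 1) j) i := by
    calc (∑' k : ℕ, (Nm ^ (k+1)).mulVec (fun _ => 1) i)
        = ∑' k : ℕ, ∑ j, Nm i j * ((Nm ^ k).mulVec (fun _ => 1) j) := tsum_congr e1
      _ = ∑ j, ∑' k : ℕ, Nm i j * ((Nm ^ k).mulVec (fun _ => 1) j) :=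
          Summable.tsum_finsetSum (fun j _ => ((hfin j).mul_left (Nm i j)))
      _ = ∑ j, Nm i j * ∑' k : ℕ, (Nm ^ k).mulVec (fun _ => 1) j := by
          refine Finset.sum_congr rfl fun j _ => tsum_mul_left
      _ = Nm.mulVec (fun j => ∑' k : ℕ, (Nm ^ k).mulVec (fun _ => 1) j) i := by
          simp [Matrix.mulVec, dotProduct]
  rw [hshift, h0pow, hsw]

end MatAux

lemma exists_phi {n : ℕ} (A B : Fin n → Type*)
    [∀ i, Fintype (A i)] [∀ i, Nonempty (A i)]
    [∀ i, Fintype (B i)] [∀ i, Nonempty (B i)]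
    (P : ∀ i : Fin n, A i → B i → Fin n → ℝ)
    (hP0 : ∀ i a b j, 0 ≤ P i a b j)
    (c : Fin n) (K : ℝ)
    (hfin : ∀ (σ : ∀ i, A i) (δ : ∀ i, B i) (i : Fin n),
        Summable fun k : ℕ =>
          ((colZero (Matrix.of fun i' j => P i' (σ i') (δ i') j) c) ^ k).mulVec
            (fun _ => 1) i)
    (hbound : ∀ (σ : ∀ i, A i) (δ : ∀ i, B i) (i : Fin n),
        expReturnTime (Matrix.of fun i' j => P i' (σ i') (δ i') j) c i ≤ K) :
    ∃ φ : Fin n → ℝ, (∀ i, 1 ≤ φ i) ∧ (∀ i, φ i ≤ K) ∧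
      ∀ i a b, (∑ j, (if j = c then 0 else P i a b j) * φ j) ≤ φ i - 1 := by
  classical
  set Nmat : (∀ i, A i) → (∀ i, B i) → Matrix (Fin n) (Fin n) ℝ :=
    fun s d => colZero (Matrix.of fun i' j => P i' (s i') (d i') j) c with hNmat
  have hN0 : ∀ s d i j, 0 ≤ Nmat s d i j := by
    intro s d i j
    simp only [hNmat, colZero, Matrix.of_apply]
    split
    · exact le_refl 0
    · exact hP0 _ _ _ _
  set Tv : (∀ i, A i) → (∀ i, B i) → Fin n → ℝ :=
    fun s d i => ∑' k : ℕ, ((Nmat s d) ^ k).mulVec (fun _ => 1) i with hTv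
  have hTrec : ∀ s d i, Tv s d i = 1 + (Nmat s d).mulVec (Tv s d) i := by
    intro s d i
    exact tsum_pow_mulVec_rec (hN0 s d) (hfin s d) i
  have hT1 : ∀ s d i, 1 ≤ Tv s d i := by
    intro s d i
    have h0 : ((Nmat s d) ^ (0:ℕ)).mulVec (fun _ => 1) i = 1 := by simp [Matrix.one_mulVec]
    have := Summable.le_tsum (hfin s d i) 0 (fun k _ => by
      simp only [Matrix.mulVec, dotProduct]
      exact Finset.sum_nonneg fun j _ => mul_nonneg (pow_entry_nonneg (hN0 s d) k i j) one_pos.le)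
    rw [h0] at this
    exact this
  have hTK : ∀ s d i, Tv s d i ≤ K := fun s d i => hbound s d i
  obtain ⟨π, hπ⟩ := Finite.exists_max (fun p : (∀ i, A i) × (∀ i, B i) => ∑ i, Tv p.1 p.2 i)
  set φ : Fin n → ℝ := Tv π.1 π.2 with hφ
  refine ⟨φ, fun i => hT1 _ _ i, fun i => hTK _ _ i, ?_⟩
  intro i a b
  by_contra hcon
  push_neg at hcon
  set s' : ∀ i, A i := Function.update π.1 i a with hs'
  set d' : ∀ i, B i := Function.update π.2 i b with hd'
  set N' := Nmat s' d' with hN'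
  set x : Fin n → ℝ := fun l => 1 + N'.mulVec φ l with hx
  have hrow : ∀ l j, l ≠ i → N' l j = Nmat π.1 π.2 l j := by
    intro l j hl
    simp [hN', hNmat, colZero, hs', hd', Function.update_of_ne hl]
  have hrowi : ∀ j, N' i j = (if j = c then 0 else P i a b j) := by
    intro j
    simp [hN', hNmat, colZero, hs', hd']
  have hxφ : ∀ l, φ l ≤ x l := by
    intro l
    by_cases hl : l = i
    · subst hl
      have : N'.mulVec φ l = ∑ j, (if j = c then 0 else P l a b j) * φ j := by
        simp only [Matrix.mulVec, dotProduct]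
        exact Finset.sum_congr rfl fun j _ => by rw [hrowi j]
      show φ l ≤ 1 + N'.mulVec φ l
      rw [this]
      linarith
    · have : N'.mulVec φ l = (Nmat π.1 π.2).mulVec φ l := by
        simp only [Matrix.mulVec, dotProduct]
        exact Finset.sum_congr rfl fun j _ => by rw [hrow l j hl]
      show φ l ≤ 1 + N'.mulVec φ l
      have h4 := hTrec π.1 π.2 l
      have hphi : φ l = Tv π.1 π.2 l := rfl
      have h5 : (Nmat π.1 π.2).mulVec (Tv π.1 π.2) l = (Nmat π.1 π.2).mulVec φ l := rfl
      linarith [this, h4, h5, hphi]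
  have hxi : φ i < x i := by
    have : N'.mulVec φ i = ∑ j, (if j = c then 0 else P i a b j) * φ j := by
      simp only [Matrix.mulVec, dotProduct]
      exact Finset.sum_congr rfl fun j _ => by rw [hrowi j]
    show φ i < 1 + N'.mulVec φ i
    rw [this]
    linarith
  have hTx : ∀ l, x l ≤ Tv s' d' l := by
    intro l
    have hz : ∀ l, N'.mulVec (fun m => Tv s' d' m - x m) l ≤ Tv s' d' l - x l := by
      intro l
      have e1 : Tv s' d' l - x l = N'.mulVec (fun m => Tv s' d' m - φ m) l := by
        rw [hTrec s' d' l, hx]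
        have e2 : N'.mulVec (fun m => Tv s' d' m - φ m) l
            = N'.mulVec (Tv s' d') l - N'.mulVec φ l := by
          rw [show (fun m => Tv s' d' m - φ m) = Tv s' d' - φ from rfl, Matrix.mulVec_sub]
          rfl
        rw [e2]
        ring
      rw [e1]
      exact mulVec_mono (hN0 s' d') (fun m => by linarith [hxφ m]) l
    have := nonneg_of_mulVec_le (hN0 s' d') (hfin s' d') hz l
    linarith
  have hsum : (∑ l, Tv π.1 π.2 l) < ∑ l, Tv s' d' l := by
    have h1 : ∀ l, Tv π.1 π.2 l ≤ Tv s' d' l := fun l => le_trans (hxφ l) (hTx l)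
    have h2 : Tv π.1 π.2 i < Tv s' d' i := lt_of_lt_of_le hxi (hTx i)
    exact Finset.sum_lt_sum (fun l _ => h1 l) ⟨i, Finset.mem_univ i, h2⟩
  exact absurd (hπ (s', d')) (not_le.mpr hsum)
/-- Corollary `bound-for-games`: the Hoffman–Karp mean-payoff
policy iteration, for a two-player zero-sum stochastic game with transition
probabilities `P i a b ·`, rewards `r i a b`, a renewal state `c` whose
expected first return time is at most `K` under every pair of policies,
`f^(σ) v i = max_b (r i (σ i) b + Σ_j P i (σ i) b j v_j)` (captured by `Fm`)
and `f v i = min_a Fm i v a`, computing additive eigenpairs `(η^k, V^k)` with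
`V^k c = 0` and improving policies conservatively, triggers its stopping
condition `σ_{k+1} = σ_k` after at most
`(m₁ - n)(1 + ⌊log K / log(K/(K-1))⌋)` iterations, with `m₁ = Σ_i |A i|`. -/
theorem mean_payoff_policy_iteration_strongly_polynomial {n : ℕ}
    (A B : Fin n → Type*)
    [∀ i, Fintype (A i)] [∀ i, Nonempty (A i)]
    [∀ i, Fintype (B i)] [∀ i, Nonempty (B i)]
    (P : ∀ i : Fin n, A i → B i → Fin n → ℝ)
    (r : ∀ i : Fin n, A i → B i → ℝ)
    (hP0 : ∀ i a b j, 0 ≤ P i a b j)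
    (hP1 : ∀ i a b, ∑ j, P i a b j = 1)
    (c : Fin n) (K : ℝ) (hK : 1 < K)
    (hfin : ∀ (σ : ∀ i, A i) (δ : ∀ i, B i) (i : Fin n),
        Summable fun k : ℕ =>
          ((colZero (Matrix.of fun i' j => P i' (σ i') (δ i') j) c) ^ k).mulVec
            (fun _ => 1) i)
    (hbound : ∀ (σ : ∀ i, A i) (δ : ∀ i, B i) (i : Fin n),
        expReturnTime (Matrix.of fun i' j => P i' (σ i') (δ i') j) c i ≤ K)
    (Fm : ∀ i : Fin n, (Fin n → ℝ) → A i → ℝ)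
    (hFmax : ∀ i v a b, r i a b + ∑ j, P i a b j * v j ≤ Fm i v a)
    (hFatt : ∀ i v a, ∃ b : B i, Fm i v a = r i a b + ∑ j, P i a b j * v j)
    (f : (Fin n → ℝ) → (Fin n → ℝ))
    (hle : ∀ v (i : Fin n) (a : A i), f v i ≤ Fm i v a)
    (hatt : ∀ v i, ∃ a : A i, f v i = Fm i v a)
    (σ : ℕ → ∀ i, A i) (η : ℕ → ℝ) (V : ℕ → Fin n → ℝ)
    (hnorm : ∀ k, V k c = 0)
    (heig : ∀ k i, η k + V k i = Fm i (V k) (σ k i))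
    (himp : ∀ k i, f (V k) i = Fm i (V k) (σ (k+1) i))
    (hcons : ∀ k i, f (V k) i = Fm i (V k) (σ k i) → σ (k+1) i = σ k i) :
    ∃ k ≤ ((∑ i, Fintype.card (A i)) - n) *
        (1 + Nat.floor (Real.log K / Real.log (K / (K - 1)))),
      σ (k+1) = σ k := by
  classical
  obtain ⟨φ, hφ1, hφK, hφrow⟩ := exists_phi A B P hP0 c K hfin hbound
  have hφpos : ∀ i, 0 < φ i := fun i => lt_of_lt_of_le one_pos (hφ1 i)
  have hK0 : (0:ℝ) < K := lt_trans one_pos hK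
  set lam : ℝ := (K - 1) / K with hlam_def
  have hlam0 : 0 < lam := div_pos (by linarith) hK0
  have hlam1 : lam < 1 := by rw [hlam_def, div_lt_one hK0]; linarith
  have hφlam : ∀ i, φ i - 1 ≤ lam * φ i := by
    intro i
    rw [hlam_def, div_mul_eq_mul_div, le_div_iff₀ hK0]
    nlinarith [hφK i, hφ1 i]
  -- Lipschitz estimates
  have CORE : ∀ (i : Fin n) (a : A i) (v v' : Fin n → ℝ) (t : ℝ),
      v c = 0 → v' c = 0 → 0 ≤ t → (∀ j, v j ≤ v' j + t * φ j) →
      Fm i v a ≤ Fm i v' a + t * (φ i - 1) := by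
    intro i a v v' t hvc hv'c ht hvv
    obtain ⟨b, hb⟩ := hFatt i v a
    have h2 := hFmax i v' a b
    have key : ∑ j, P i a b j * v j ≤ ∑ j, P i a b j * v' j + t * (φ i - 1) := by
      have e : ∀ j, P i a b j * v j - P i a b j * v' j
          ≤ (if j = c then 0 else P i a b j) * (t * φ j) := by
        intro j
        by_cases hj : j = c
        · subst hj; simp [hvc, hv'c]
        · simp only [if_neg hj]
          have h3 := hvv j
          nlinarith [hP0 i a b j]
      have hsum : ∑ j, (P i a b j * v j - P i a b j * v' j)
          ≤ ∑ j, (if j = c then 0 else P i a b j) * (t * φ j) :=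
        Finset.sum_le_sum (fun j _ => e j)
      have h3 : ∑ j, (if j = c then 0 else P i a b j) * (t * φ j)
          = t * ∑ j, (if j = c then 0 else P i a b j) * φ j := by
        rw [Finset.mul_sum]; exact Finset.sum_congr rfl fun j _ => by ring
      have h4 : t * (∑ j, (if j = c then 0 else P i a b j) * φ j) ≤ t * (φ i - 1) :=
        mul_le_mul_of_nonneg_left (hφrow i a b) ht
      rw [Finset.sum_sub_distrib] at hsum
      linarith
    calc Fm i v a = r i a b + ∑ j, P i a b j * v j := hb
      _ ≤ r i a b + ∑ j, P i a b j * v' j + t * (φ i - 1) := by linarith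
      _ ≤ Fm i v' a + t * (φ i - 1) := by linarith
  have COREf : ∀ (i : Fin n) (v v' : Fin n → ℝ) (t : ℝ),
      v c = 0 → v' c = 0 → 0 ≤ t → (∀ j, v j ≤ v' j + t * φ j) →
      f v i ≤ f v' i + t * (φ i - 1) := by
    intro i v v' t hvc hv'c ht hvv
    obtain ⟨a, ha⟩ := hatt v' i
    calc f v i ≤ Fm i v a := hle v i a
      _ ≤ Fm i v' a + t * (φ i - 1) := CORE i a v v' t hvc hv'c ht hvv
      _ = f v' i + t * (φ i - 1) := by rw [← ha]
  -- transformed operators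
  set ηof : (Fin n → ℝ) → ℝ := fun x => x c / φ c with hηof_def
  set vof : (Fin n → ℝ) → Fin n → ℝ := fun x j => x j - ηof x * φ j with hvof_def
  have hvofc : ∀ x, vof x c = 0 := by
    intro x
    have h1 : (x c / φ c) * φ c = x c := div_mul_cancel₀ (x c) (ne_of_gt (hφpos c))
    simp only [hvof_def, hηof_def]
    linarith
  set hsig : (∀ i, A i) → (Fin n → ℝ) → Fin n → ℝ :=
    fun s x i => Fm i (vof x) (s i) + ηof x * (φ i - 1) with hhsig_def
  set hop : (Fin n → ℝ) → Fin n → ℝ :=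
    fun x i => f (vof x) i + ηof x * (φ i - 1) with hhop_def
  -- shift/contraction inequality for such operators
  have HLEM : ∀ (g : ∀ i : Fin n, (Fin n → ℝ) → ℝ),
      (∀ (i : Fin n) (v v' : Fin n → ℝ) (t : ℝ), v c = 0 → v' c = 0 → 0 ≤ t →
          (∀ j, v j ≤ v' j + t * φ j) → g i v ≤ g i v' + t * (φ i - 1)) →
      ∀ (x y : Fin n → ℝ) (t : ℝ), 0 ≤ t → (∀ j, x j ≤ y j + t * φ j) →
      ∀ i, g i (vof x) + ηof x * (φ i - 1) ≤ g i (vof y) + ηof y * (φ i - 1) + t * (φ i - 1) := by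
    intro g hg x y t ht hxy i
    have hs : ηof x - ηof y ≤ t := by
      have h1 := hxy c
      have h2 : (x c - y c) / φ c ≤ t := by
        rw [div_le_iff₀ (hφpos c)]
        linarith
      have h3 : ηof x - ηof y = (x c - y c) / φ c := by
        simp only [hηof_def]; ring
      linarith
    set s := ηof x - ηof y with hs_def
    have hvle : ∀ j, vof x j ≤ vof y j + (t - s) * φ j := by
      intro j
      simp only [hvof_def, hs_def]
      have e : (t - (ηof x - ηof y)) * φ j
          = t * φ j - ηof x * φ j + ηof y * φ j := by ring
      linarith [hxy j, e]
    have hg' := hg i (vof x) (vof y) (t - s) (hvofc x) (hvofc y) (by linarith) hvle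
    have e : (t - s) * (φ i - 1) + ηof x * (φ i - 1)
        = ηof y * (φ i - 1) + t * (φ i - 1) := by rw [hs_def]; ring
    linarith
  -- sub-invariance: any fixed point of O lies below any super-solution
  have SUBINV : ∀ (O : (Fin n → ℝ) → Fin n → ℝ),
      (∀ (x y : Fin n → ℝ) (t : ℝ), 0 ≤ t → (∀ j, x j ≤ y j + t * φ j) →
        ∀ i, O x i ≤ O y i + t * (φ i - 1)) →
      ∀ (ww x : Fin n → ℝ), (∀ i, O ww i = ww i) → (∀ i, O x i ≤ x i) →
      ∀ i, ww i ≤ x i := by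
    intro O hO ww x hww hx
    have hne : (Finset.univ : Finset (Fin n)).Nonempty := ⟨c, Finset.mem_univ c⟩
    set γ := Finset.univ.sup' hne (fun i => (ww i - x i) / φ i) with hγ
    have hγle : ∀ i, ww i - x i ≤ γ * φ i := by
      intro i
      have h1 : (ww i - x i) / φ i ≤ γ :=
        Finset.le_sup' (fun i => (ww i - x i) / φ i) (Finset.mem_univ i)
      rw [div_le_iff₀ (hφpos i)] at h1
      linarith
    obtain ⟨i0, -, hi0⟩ := Finset.exists_mem_eq_sup' hne (fun i => (ww i - x i) / φ i)
    by_cases hγpos : 0 < γ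
    · exfalso
      have h1 : ∀ i, ww i ≤ x i + γ * φ i := fun i => by linarith [hγle i]
      have h2 := hO ww x γ hγpos.le h1 i0
      rw [hww i0] at h2
      have h3 : ww i0 - x i0 = γ * φ i0 := by
        rw [hγ, hi0, div_mul_cancel₀ _ (ne_of_gt (hφpos i0))]
      have e : γ * (φ i0 - 1) = γ * φ i0 - γ := by ring
      linarith [hx i0]
    · push_neg at hγpos
      intro i
      have h5 : γ * φ i ≤ 0 := mul_nonpos_iff.mpr (Or.inr ⟨hγpos, (hφpos i).le⟩)
      linarith [hγle i]
  -- eigen-w's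
  set w : ℕ → Fin n → ℝ := fun k i => η k * φ i + V k i with hw_def
  have hηw : ∀ k, ηof (w k) = η k := by
    intro k
    show w k c / φ c = η k
    have : w k c = η k * φ c := by simp only [hw_def, hnorm k, add_zero]
    rw [this, mul_div_assoc, div_self (ne_of_gt (hφpos c)), mul_one]
  have hvw : ∀ k, vof (w k) = V k := by
    intro k
    funext j
    show w k j - ηof (w k) * φ j = V k j
    rw [hηw k]
    simp only [hw_def]
    ring
  have hfix : ∀ k i, hsig (σ k) (w k) i = w k i := by
    intro k i
    show Fm i (vof (w k)) (σ k i) + ηof (w k) * (φ i - 1) = w k i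
    rw [hvw k, hηw k, ← heig k i]
    simp only [hw_def]
    ring
  have hBIGσ : ∀ s, ∀ (x y : Fin n → ℝ) (t : ℝ), 0 ≤ t → (∀ j, x j ≤ y j + t * φ j) →
      ∀ i, hsig s x i ≤ hsig s y i + t * (φ i - 1) :=
    fun s => HLEM (fun i v => Fm i v (s i)) (fun i => CORE i (s i))
  have hBIGop : ∀ (x y : Fin n → ℝ) (t : ℝ), 0 ≤ t → (∀ j, x j ≤ y j + t * φ j) →
      ∀ i, hop x i ≤ hop y i + t * (φ i - 1) :=
    HLEM (fun i v => f v i) COREf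
  have hople : ∀ k i, hop (w k) i ≤ w k i := by
    intro k i
    show f (vof (w k)) i + ηof (w k) * (φ i - 1) ≤ w k i
    rw [hvw k, hηw k]
    have h1 := hle (V k) i (σ k i)
    have h2 := heig k i
    simp only [hw_def]
    nlinarith [h1, h2]
  have hopimp : ∀ k i, hop (w k) i = hsig (σ (k+1)) (w k) i := by
    intro k i
    show f (vof (w k)) i + ηof (w k) * (φ i - 1)
        = Fm i (vof (w k)) (σ (k+1) i) + ηof (w k) * (φ i - 1)
    rw [hvw k, himp k i]
  have hmono1 : ∀ k i, w (k+1) i ≤ w k i := by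
    intro k
    exact SUBINV (hsig (σ (k+1))) (hBIGσ (σ (k+1))) (w (k+1)) (w k) (hfix (k+1))
      (fun i => by rw [← hopimp k i]; exact hople k i)
  have hmono : ∀ j k, j ≤ k → ∀ i, w k i ≤ w j i := by
    intro j k hjk
    induction hjk with
    | refl => exact fun i => le_refl _
    | step h ih => exact fun i => le_trans (hmono1 _ i) (ih i)
  have wEqTerm : ∀ j, w (j+1) = w j → σ (j+1) = σ j := by
    intro j he
    have hηe : η (j+1) = η j := by
      have h1 := congrFun he c
      simp only [hw_def, hnorm, add_zero] at h1
      exact mul_right_cancel₀ (ne_of_gt (hφpos c)) h1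
    have hVe : V (j+1) = V j := by
      funext i
      have h1 := congrFun he i
      simp only [hw_def, hηe] at h1
      linarith
    funext i
    apply hcons j i
    calc f (V j) i = Fm i (V j) (σ (j+1) i) := himp j i
      _ = Fm i (V (j+1)) (σ (j+1) i) := by rw [hVe]
      _ = η (j+1) + V (j+1) i := (heig (j+1) i).symm
      _ = η j + V j i := by rw [hηe, hVe]
      _ = Fm i (V j) (σ j i) := heig j i
  have wUnique : ∀ j k, σ j = σ k → w j = w k := by
    intro j k hs
    have h1 : ∀ i, w j i ≤ w k i :=
      SUBINV (hsig (σ j)) (hBIGσ (σ j)) (w j) (w k) (hfix j)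
        (fun i => le_of_eq (by rw [hs]; exact hfix k i))
    have h2 : ∀ i, w k i ≤ w j i :=
      SUBINV (hsig (σ k)) (hBIGσ (σ k)) (w k) (w j) (hfix k)
        (fun i => le_of_eq (by rw [← hs]; exact hfix j i))
    funext i
    exact le_antisymm (h1 i) (h2 i)
  have hterm : ∃ k, σ (k+1) = σ k := by
    by_contra hno
    push_neg at hno
    have H : ∀ (j k : ℕ), j < k → σ j = σ k → False := by
      intro j k hlt hs
      have hw := wUnique j k hs
      have hsand : w (j+1) = w j := by
        funext i
        have h1 : w k i ≤ w (j+1) i := hmono (j+1) k hlt i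
        have h2 : w (j+1) i ≤ w j i := hmono1 j i
        have h3 : w j i = w k i := congrFun hw i
        linarith
      exact hno j (wEqTerm j hsand)
    obtain ⟨j, k, hjk, hsjk⟩ := Fintype.exists_ne_map_eq_of_card_lt
      (fun m : Fin (Fintype.card (∀ i, A i) + 1) => σ m) (by simp)
    rcases lt_or_gt_of_ne (fun hh : (j : ℕ) = (k : ℕ) => hjk (Fin.ext hh)) with hlt | hlt
    · exact H j k hlt hsjk
    · exact H k j hlt hsjk.symm
  set kstar := Nat.find hterm with hkstar_def
  have hkspec : σ (kstar + 1) = σ kstar := Nat.find_spec hterm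
  have hfVs : ∀ i, f (V kstar) i = η kstar + V kstar i := by
    intro i
    calc f (V kstar) i = Fm i (V kstar) (σ (kstar+1) i) := himp kstar i
      _ = Fm i (V kstar) (σ kstar i) := by rw [hkspec]
      _ = η kstar + V kstar i := (heig kstar i).symm
  have hopfix : ∀ i, hop (w kstar) i = w kstar i := by
    intro i
    show f (vof (w kstar)) i + ηof (w kstar) * (φ i - 1) = w kstar i
    rw [hvw kstar, hηw kstar, hfVs i]
    simp only [hw_def]
    ring
  have hwge : ∀ k i, w kstar i ≤ w k i := by
    intro k
    exact SUBINV hop hBIGop (w kstar) (w k) hopfix (hople k)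
  have hafter : ∀ k, kstar ≤ k → σ k = σ kstar := by
    intro k hk
    induction k, hk using Nat.le_induction with
    | base => rfl
    | succ m hm ih =>
        have hwm : w m = w kstar := wUnique m kstar ih
        have hsand : w (m+1) = w m := by
          funext i
          have h1 := hmono1 m i
          have h2 := hwge (m+1) i
          have h3 := congrFun hwm i
          linarith
        rw [wEqTerm m hsand, ih]
  -- the gap sequence
  have hne : (Finset.univ : Finset (Fin n)).Nonempty := ⟨c, Finset.mem_univ c⟩
  set β : ℕ → ℝ := fun k => Finset.univ.sup' hne (fun i => (w k i - w kstar i) / φ i) with hβ_def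
  have hβle : ∀ k i, w k i - w kstar i ≤ β k * φ i := by
    intro k i
    have h1 : (w k i - w kstar i) / φ i ≤ β k :=
      Finset.le_sup' (fun i => (w k i - w kstar i) / φ i) (Finset.mem_univ i)
    rw [div_le_iff₀ (hφpos i)] at h1
    linarith
  have hβatt : ∀ k, ∃ i, w k i - w kstar i = β k * φ i := by
    intro k
    obtain ⟨i0, -, hi0⟩ := Finset.exists_mem_eq_sup' hne (fun i => (w k i - w kstar i) / φ i)
    have e : β k = (w k i0 - w kstar i0) / φ i0 := hi0
    exact ⟨i0, by rw [e, div_mul_cancel₀ _ (ne_of_gt (hφpos i0))]⟩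
  choose I hI using hβatt
  have hβ0 : ∀ k, 0 ≤ β k := by
    intro k
    have h1 : (w k c - w kstar c) / φ c ≤ β k :=
      Finset.le_sup' (fun i => (w k i - w kstar i) / φ i) (Finset.mem_univ c)
    have h2 : 0 ≤ (w k c - w kstar c) / φ c :=
      div_nonneg (by linarith [hwge k c]) (hφpos c).le
    linarith
  -- contraction
  have hcontr1 : ∀ k, β (k+1) ≤ lam * β k := by
    intro k
    have h1 : ∀ i, w (k+1) i ≤ hop (w k) i := by
      intro i
      have h2 := hBIGσ (σ (k+1)) (w (k+1)) (w k) 0 le_rfl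
        (fun j => by have := hmono1 k j; linarith) i
      calc w (k+1) i = hsig (σ (k+1)) (w (k+1)) i := (hfix (k+1) i).symm
        _ ≤ hsig (σ (k+1)) (w k) i + 0 * (φ i - 1) := h2
        _ = hop (w k) i := by rw [← hopimp k i]; ring
    have h2 : ∀ i, hop (w k) i ≤ w kstar i + β k * (φ i - 1) := by
      intro i
      have h3 := hBIGop (w k) (w kstar) (β k) (hβ0 k)
        (fun j => by linarith [hβle k j]) i
      rw [hopfix i] at h3
      exact h3
    refine Finset.sup'_le hne _ (fun i _ => ?_)
    rw [div_le_iff₀ (hφpos i)]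
    have h3 : β k * (φ i - 1) ≤ β k * (lam * φ i) :=
      mul_le_mul_of_nonneg_left (hφlam i) (hβ0 k)
    have e : β k * (lam * φ i) = lam * β k * φ i := by ring
    linarith [h1 i, h2 i]
  have hcontr : ∀ k k', k ≤ k' → β k' ≤ lam ^ (k' - k) * β k := by
    intro k k' hkk'
    induction k', hkk' using Nat.le_induction with
    | base => simp
    | succ m hm ih =>
        calc β (m+1) ≤ lam * β m := hcontr1 m
          _ ≤ lam * (lam ^ (m - k) * β k) := mul_le_mul_of_nonneg_left ih hlam0.le
          _ = lam ^ (m + 1 - k) * β k := by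
              rw [Nat.succ_sub hm, pow_succ']
              ring
  -- positivity of the gap before termination
  have hβpos : ∀ k, k < kstar → 0 < β k := by
    intro k hk
    rcases lt_or_ge 0 (β k) with h | hc
    · exact h
    exfalso
    have hwk : w k = w kstar := by
      funext i
      have h1 := hβle k i
      have h2 := hwge k i
      have h3 : β k * φ i ≤ 0 := mul_nonpos_iff.mpr (Or.inr ⟨hc, (hφpos i).le⟩)
      linarith
    have hηe : η k = η kstar := by
      have h1 := congrFun hwk c
      simp only [hw_def, hnorm, add_zero] at h1
      exact mul_right_cancel₀ (ne_of_gt (hφpos c)) h1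
    have hVe : V k = V kstar := by
      funext i
      have h1 := congrFun hwk i
      simp only [hw_def, hηe] at h1
      linarith
    have hstop : σ (k+1) = σ k := by
      funext i
      apply hcons k i
      calc f (V k) i = f (V kstar) i := by rw [hVe]
        _ = η kstar + V kstar i := hfVs i
        _ = η k + V k i := by rw [hηe, hVe]
        _ = Fm i (V k) (σ k i) := heig k i
    exact absurd (Nat.find_min' hterm hstop) (not_le.mpr hk)
  -- lower bound on the disadvantage of the current action at the argmax state
  have hlower : ∀ k, β k ≤ Fm (I k) (V kstar) (σ k (I k)) - (η kstar + V kstar (I k)) := by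
    intro k
    set i := I k with hi_def
    set a := σ k i with ha_def
    set t := η k - η kstar with ht_def
    have htβ : t ≤ β k := by
      have h1 : (w k c - w kstar c) / φ c ≤ β k :=
        Finset.le_sup' (fun i => (w k i - w kstar i) / φ i) (Finset.mem_univ c)
      have huc : w k c - w kstar c = t * φ c := by
        simp only [hw_def, hnorm, add_zero, ht_def]; ring
      rw [huc, mul_div_assoc, div_self (ne_of_gt (hφpos c)), mul_one] at h1
      exact h1
    obtain ⟨b, hb⟩ := hFatt i (V k) a
    have h2 := hFmax i (V kstar) a b
    have hdiff : ∀ j, V k j - V kstar j = (w k j - w kstar j) - t * φ j := by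
      intro j
      simp only [hw_def, ht_def]
      ring
    have hsum : ∑ j, P i a b j * V k j - ∑ j, P i a b j * V kstar j
        ≤ (β k - t) * (φ i - 1) := by
      rw [← Finset.sum_sub_distrib]
      have e : ∀ j, P i a b j * V k j - P i a b j * V kstar j
          ≤ (if j = c then 0 else P i a b j) * ((β k - t) * φ j) := by
        intro j
        by_cases hj : j = c
        · subst hj; simp [hnorm]
        · simp only [if_neg hj]
          have h3 : V k j - V kstar j ≤ (β k - t) * φ j := by
            have h4 := hβle k j
            have e2 : (β k - t) * φ j = β k * φ j - t * φ j := by ring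
            rw [hdiff j]
            linarith
          have h5 := mul_le_mul_of_nonneg_left h3 (hP0 i a b j)
          have e3 : P i a b j * (V k j - V kstar j)
              = P i a b j * V k j - P i a b j * V kstar j := by ring
          linarith
      calc ∑ j, (P i a b j * V k j - P i a b j * V kstar j)
          ≤ ∑ j, (if j = c then 0 else P i a b j) * ((β k - t) * φ j) :=
            Finset.sum_le_sum fun j _ => e j
        _ = (β k - t) * ∑ j, (if j = c then 0 else P i a b j) * φ j := by
            rw [Finset.mul_sum]
            exact Finset.sum_congr rfl fun j _ => by ring
        _ ≤ (β k - t) * (φ i - 1) :=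
            mul_le_mul_of_nonneg_left (hφrow i a b) (by linarith)
    have heq1 : η k + V k i = r i a b + ∑ j, P i a b j * V k j := (heig k i).trans hb
    have hVki : V k i - V kstar i = (β k - t) * φ i := by
      rw [hdiff i, hI k]
      ring
    have hmain : β k ≤ r i a b + ∑ j, P i a b j * V kstar j - (η kstar + V kstar i) := by
      have e4 : (β k - t) * φ i - (β k - t) * (φ i - 1) = β k - t := by ring
      have ht' : t = η k - η kstar := ht_def
      linarith [hsum, hVki, e4, heq1]
    linarith [h2]
  -- upper bound on the disadvantage of the action used at step k'
  have hupper : ∀ k' (i : Fin n),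
      Fm i (V kstar) (σ k' i) - (η kstar + V kstar i) ≤ w k' i - w kstar i := by
    intro k' i
    set a := σ k' i with ha_def
    set t := η k' - η kstar with ht_def
    have ht0 : 0 ≤ t := by
      have h2 : w k' c - w kstar c = t * φ c := by
        simp only [hw_def, hnorm, add_zero, ht_def]; ring
      have h3 := hwge k' c
      nlinarith [hφpos c]
    obtain ⟨b, hb⟩ := hFatt i (V kstar) a
    have h2 := hFmax i (V k') a b
    have heq1 : η k' + V k' i = Fm i (V k') a := heig k' i
    have hdiff : ∀ j, V k' j - V kstar j = (w k' j - w kstar j) - t * φ j := by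
      intro j
      simp only [hw_def, ht_def]
      ring
    have hsum : -(t * (φ i - 1)) ≤ ∑ j, P i a b j * V k' j - ∑ j, P i a b j * V kstar j := by
      rw [← Finset.sum_sub_distrib]
      have e : ∀ j, -((if j = c then 0 else P i a b j) * (t * φ j))
          ≤ P i a b j * V k' j - P i a b j * V kstar j := by
        intro j
        by_cases hj : j = c
        · subst hj; simp [hnorm]
        · simp only [if_neg hj]
          have h3 : -(t * φ j) ≤ V k' j - V kstar j := by
            rw [hdiff j]
            linarith [hwge k' j]
          have h5 := mul_le_mul_of_nonneg_left h3 (hP0 i a b j)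
          have e3 : P i a b j * (V k' j - V kstar j)
              = P i a b j * V k' j - P i a b j * V kstar j := by ring
          have e5 : P i a b j * -(t * φ j) = -(P i a b j * (t * φ j)) := by ring
          linarith
      calc -(t * (φ i - 1))
          ≤ -(t * ∑ j, (if j = c then 0 else P i a b j) * φ j) := by
            have := mul_le_mul_of_nonneg_left (hφrow i a b) ht0
            linarith
        _ = ∑ j, -((if j = c then 0 else P i a b j) * (t * φ j)) := by
            rw [Finset.mul_sum, ← Finset.sum_neg_distrib]
            exact Finset.sum_congr rfl fun j _ => by ring
        _ ≤ ∑ j, (P i a b j * V k' j - P i a b j * V kstar j) :=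
            Finset.sum_le_sum fun j _ => e j
    have hui : V k' i - V kstar i = (w k' i - w kstar i) - t * φ i := hdiff i
    rw [hb]
    have e6 : t * (φ i - 1) = t * φ i - t := by ring
    have ht' : t = η k' - η kstar := ht_def
    linarith [h2, heq1, hsum, hui, e6]
  -- window bound
  have helim : ∀ k k', k < kstar → k ≤ k' → σ k' (I k) = σ k (I k) →
      (k' - k : ℕ) ≤ Nat.floor (Real.log K / Real.log (K / (K - 1))) := by
    intro k k' hk hkk' hsame
    have hbpos := hβpos k hk
    have h1 := hlower k
    have h2 := hupper k' (I k)
    rw [hsame] at h2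
    have h3 : w k' (I k) - w kstar (I k) ≤ β k' * φ (I k) := hβle k' (I k)
    have h4 : β k' ≤ lam ^ (k' - k) * β k := hcontr k k' hkk'
    have h5 : φ (I k) ≤ K := hφK (I k)
    have h6 : β k ≤ (lam ^ (k' - k) * K) * β k := by
      have c1 : β k' * φ (I k) ≤ (lam ^ (k' - k) * β k) * φ (I k) :=
        mul_le_mul_of_nonneg_right h4 (hφpos _).le
      have c2 : (lam ^ (k' - k) * β k) * φ (I k) ≤ (lam ^ (k' - k) * β k) * K :=
        mul_le_mul_of_nonneg_left h5 (mul_nonneg (pow_nonneg hlam0.le _) (hβ0 k))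
      have e : (lam ^ (k' - k) * β k) * K = (lam ^ (k' - k) * K) * β k := by ring
      linarith
    have h7 : (1:ℝ) ≤ lam ^ (k' - k) * K := by
      by_contra hcc
      push_neg at hcc
      have := mul_lt_mul_of_pos_right hcc hbpos
      rw [one_mul] at this
      linarith
    have h8 : 1 / K ≤ lam ^ (k' - k) := by
      rw [div_le_iff₀ hK0]
      linarith
    have h9 : Real.log (1/K) ≤ ((k' - k : ℕ) : ℝ) * Real.log lam := by
      calc Real.log (1/K) ≤ Real.log (lam ^ (k' - k)) :=
            Real.log_le_log (by positivity) h8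
        _ = ((k' - k : ℕ) : ℝ) * Real.log lam := Real.log_pow _ _
    have hKK1 : (1:ℝ) < K / (K - 1) := by
      rw [lt_div_iff₀ (by linarith : (0:ℝ) < K - 1)]
      linarith
    have hlogpos : 0 < Real.log (K / (K - 1)) := Real.log_pos hKK1
    have hlaminv : K / (K - 1) = 1 / lam := by
      rw [hlam_def]
      field_simp
    have h10 : Real.log lam = -Real.log (K / (K - 1)) := by
      rw [hlaminv, one_div, Real.log_inv]
      ring
    have h11 : Real.log (1/K) = -Real.log K := by rw [one_div, Real.log_inv]
    have h12 : ((k' - k : ℕ) : ℝ) * Real.log (K / (K - 1)) ≤ Real.log K := by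
      rw [h10, h11] at h9
      have e : ((k' - k : ℕ) : ℝ) * -Real.log (K / (K - 1))
          = -(((k' - k : ℕ) : ℝ) * Real.log (K / (K - 1))) := by ring
      linarith [h9, e]
    have h13 : ((k' - k : ℕ) : ℝ) ≤ Real.log K / Real.log (K / (K - 1)) :=
      (le_div_iff₀ hlogpos).mpr h12
    exact Nat.le_floor h13
  -- counting argument
  refine ⟨kstar, ?_, hkspec⟩
  set L := 1 + Nat.floor (Real.log K / Real.log (K / (K - 1))) with hL_def
  set SP : Finset ((i : Fin n) × A i) :=
    Finset.univ.filter (fun p : (i : Fin n) × A i => p.2 ≠ σ kstar p.1) with hSP_def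
  set pk : ℕ → (i : Fin n) × A i := fun k => ⟨I k, σ k (I k)⟩ with hpk_def
  have hmem : ∀ k ∈ Finset.range kstar, pk k ∈ SP := by
    intro k hkr
    rw [Finset.mem_range] at hkr
    rw [hSP_def, Finset.mem_filter]
    refine ⟨Finset.mem_univ _, ?_⟩
    show σ k (I k) ≠ σ kstar (I k)
    intro hEqact
    have hk' : σ (kstar + k + L) (I k) = σ k (I k) := by
      rw [hafter (kstar + k + L) (by omega)]
      exact hEqact.symm
    have h1 := helim k (kstar + k + L) hkr (by omega) hk'
    omega
  have hwindow : ∀ j k, j < kstar → k < kstar → pk j = pk k → j ≤ k → k - j < L := by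
    intro j k hj hk hpe hjk
    simp only [hpk_def] at hpe
    have hIe : I j = I k := congrArg Sigma.fst hpe
    have hact : σ k (I j) = σ j (I j) := by
      have h2 : HEq (σ j (I j)) (σ k (I k)) := (Sigma.mk.inj_iff.mp hpe).2
      rw [← hIe] at h2
      exact (eq_of_heq h2).symm
    have := helim j k hj hjk hact
    omega
  have hcard : kstar ≤ SP.card * L := by
    have h1 : (Finset.range kstar).card
        = ∑ p ∈ SP, ((Finset.range kstar).filter (fun k => pk k = p)).card :=
      Finset.card_eq_sum_card_fiberwise hmem
    have h2 : ∀ p ∈ SP, ((Finset.range kstar).filter (fun k => pk k = p)).card ≤ L := by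
      intro p _
      set S := (Finset.range kstar).filter (fun k => pk k = p) with hS_def
      rcases S.eq_empty_or_nonempty with he | hne'
      · rw [he]; simp
      · have hmin := S.min'_mem hne'
        set m := S.min' hne' with hm_def
        have hsub : S ⊆ Finset.Ico m (m + L) := by
          intro k hkS
          rw [Finset.mem_Ico]
          have hmk : m ≤ k := S.min'_le k hkS
          refine ⟨hmk, ?_⟩
          rw [hS_def, Finset.mem_filter, Finset.mem_range] at hkS
          have hmS := hmin
          rw [hS_def, Finset.mem_filter, Finset.mem_range] at hmS
          have := hwindow m k hmS.1 hkS.1 (hmS.2.trans hkS.2.symm) hmk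
          omega
        calc S.card ≤ (Finset.Ico m (m + L)).card := Finset.card_le_card hsub
          _ = L := by rw [Nat.card_Ico]; omega
    rw [Finset.card_range] at h1
    calc kstar = ∑ p ∈ SP, ((Finset.range kstar).filter (fun k => pk k = p)).card := h1
      _ ≤ ∑ _p ∈ SP, L := Finset.sum_le_sum h2
      _ = SP.card * L := by rw [Finset.sum_const, smul_eq_mul]
  have hcardSP : SP.card = (∑ i, Fintype.card (A i)) - n := by
    have hTc : (Finset.univ.filter (fun p : (i : Fin n) × A i => p.2 = σ kstar p.1)).card = n := by
      have himg : Finset.univ.filter (fun p : (i : Fin n) × A i => p.2 = σ kstar p.1)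
          = Finset.univ.image (fun i : Fin n => (⟨i, σ kstar i⟩ : (i : Fin n) × A i)) := by
        ext p
        simp only [Finset.mem_filter, Finset.mem_univ, true_and, Finset.mem_image]
        constructor
        · intro hp
          exact ⟨p.1, by obtain ⟨i, ap⟩ := p; simp at hp ⊢; rw [hp]⟩
        · rintro ⟨i, rfl⟩
          rfl
      rw [himg, Finset.card_image_of_injective _ (fun x y h => congrArg Sigma.fst h),
        Finset.card_univ, Fintype.card_fin]
    have htot : (Finset.univ.filter (fun p : (i : Fin n) × A i => p.2 = σ kstar p.1)).card
        + SP.card = ∑ i, Fintype.card (A i) := by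
      rw [hSP_def]
      have := Finset.card_filter_add_card_filter_not
        (s := (Finset.univ : Finset ((i : Fin n) × A i)))
        (p := fun p : (i : Fin n) × A i => p.2 = σ kstar p.1)
      rw [this, Finset.card_univ, Fintype.card_sigma]
    omega
  rw [hcardSP] at hcard
  exact hcard
end
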